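/- arXiv:1812.08447 — 8 statements merged into one kernel-verified Lean document; each statement's English description precedes it below -/
import Mathlib

section
/- Every finite abstract simplicial complex K of dimension d has a geometric realization in ℝ^{2d+1}: there is an injective map f from the vertex set of K into ℝ^{2d+1} such that for every simplex F ∈ K the points {f(v) : v ∈ F} are affinely independent, and for all simplices F, G ∈ K the intersection conv(f(F)) ∩ conv(f(G)) equals conv(f(F ∩ G)). -/
open Finset

/-- Points on the moment curve in `ℝ^n` are affinely independent as soon as
there are at most `n+1` of them. -/
lemma moment_affineIndependent {V : Type} [Fintype V] [DecidableEq V] (n : ℕ)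
    (t : V → ℝ) (ht : Function.Injective t) (s : Finset V) (hcard : s.card ≤ n + 1) :
    AffineIndependent ℝ (fun v : s => (fun i : Fin n => t v.1 ^ ((i : ℕ) + 1))) := by
  rw [affineIndependent_iff]
  intro s' w hw0 hw1
  set W : s → ℝ := fun x => if x ∈ s' then w x else 0 with hW
  -- key: all power sums of W up to exponent n vanish
  have key : ∀ k : ℕ, k ≤ n → ∑ x : s, W x * t x.1 ^ k = 0 := by
    intro k hk
    rcases Nat.eq_zero_or_pos k with rfl | hkpos
    · simp only [pow_zero, mul_one, W, Finset.sum_ite_mem, Finset.univ_inter]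
      exact hw0
    · obtain ⟨j, rfl⟩ := Nat.exists_eq_succ_of_ne_zero hkpos.ne'
      have hj : j < n := by omega
      have := congrFun hw1 ⟨j, hj⟩
      simp only [Finset.sum_apply, Pi.smul_apply, Pi.zero_apply, smul_eq_mul] at this
      calc ∑ x : s, W x * t x.1 ^ (j + 1)
          = ∑ x ∈ s', w x * t x.1 ^ (j + 1) := by
            simp only [W, ite_mul, zero_mul, Finset.sum_ite_mem, Finset.univ_inter]
        _ = 0 := this
  have := s.equivFin
  set e : Fin s.card ≃ s := s.equivFin.symm with he
  have hzero : (fun i : Fin s.card => W (e i)) = 0 := by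
    apply Matrix.eq_zero_of_forall_pow_sum_mul_pow_eq_zero (f := fun i => t (e i).1)
    · exact fun a b hab => e.injective (Subtype.ext (ht hab))
    · intro i
      have hi : (i : ℕ) ≤ n := by have := i.2; omega
      have := key i hi
      rw [← Equiv.sum_comp e (fun x => W x * t x.1 ^ (i : ℕ))] at this
      exact this
  intro x hx
  have := congrFun hzero (e.symm x)
  simp only [Equiv.apply_symm_apply, Pi.zero_apply] at this
  simpa [W, hx] using this

/-- Every finite abstract simplicial complex of dimension d has a geometric
realization in ℝ^{2d+1}. -/
theorem stmt_1 (V : Type) [Fintype V] [DecidableEq V] (d : ℕ) (K : Finset (Finset V))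
    (hne : K.Nonempty)
    (hdown : ∀ F ∈ K, ∀ G ⊆ F, G ∈ K)
    (hdim : ∀ F ∈ K, F.card ≤ d + 1)
    (hdim' : ∃ F ∈ K, F.card = d + 1) :
    ∃ f : V → (Fin (2 * d + 1) → ℝ),
      Function.Injective f ∧
      (∀ F ∈ K, AffineIndependent ℝ (fun v : F => f v.1)) ∧
      (∀ F ∈ K, ∀ G ∈ K,
        convexHull ℝ (f '' (F : Set V)) ∩ convexHull ℝ (f '' (G : Set V)) =
          convexHull ℝ (f '' ((F ∩ G : Finset V) : Set V))) := by
  set t : V → ℝ := fun v => ((Fintype.equivFin V v : ℕ) : ℝ) with htdef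
  have ht : Function.Injective t := by
    intro a b hab
    exact (Fintype.equivFin V).injective (Fin.ext (Nat.cast_injective hab))
  set f : V → (Fin (2 * d + 1) → ℝ) := fun v => fun i : Fin (2 * d + 1) => t v ^ ((i : ℕ) + 1)
    with hfdef
  have hfinj : Function.Injective f := by
    intro a b hab
    have := congrFun hab ⟨0, by omega⟩
    simp only [f] at this
    norm_num at this
    exact ht this
  have hAI : ∀ s : Finset V, s.card ≤ 2 * d + 2 →
      AffineIndependent ℝ (fun v : s => f v.1) := by
    intro s hs
    exact moment_affineIndependent (2 * d + 1) t ht s (by omega)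
  refine ⟨f, hfinj, fun F hF => hAI F (by have := hdim F hF; omega), ?_⟩
  intro F hF G hG
  have hcardFG : (F ∪ G).card ≤ 2 * d + 2 := by
    have := Finset.card_union_le F G
    have := hdim F hF
    have := hdim G hG
    omega
  have hU := hAI (F ∪ G) hcardFG
  have hrange := hU.range
  have hsetEq : Set.range (fun v : (F ∪ G : Finset V) => f v.1)
      = (((F ∪ G).image f : Finset (Fin (2 * d + 1) → ℝ)) : Set _) := by
    ext x
    constructor
    · rintro ⟨v, rfl⟩
      exact Finset.mem_coe.2 (Finset.mem_image_of_mem f v.2)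
    · intro hx
      obtain ⟨v, hv, rfl⟩ := Finset.mem_image.1 (Finset.mem_coe.1 hx)
      exact ⟨⟨v, hv⟩, rfl⟩
  rw [hsetEq] at hrange
  have hrange' : AffineIndependent ℝ ((↑) : ↑((F ∪ G).image f) → (Fin (2 * d + 1) → ℝ)) := by
    exact hrange
  have key := hrange'.convexHull_inter (t₁ := F.image f) (t₂ := G.image f)
    (Finset.image_subset_image Finset.subset_union_left)
    (Finset.image_subset_image Finset.subset_union_right)
  have hEq : (↑(F.image f ∩ G.image f) : Set (Fin (2 * d + 1) → ℝ))
      = (↑((F ∩ G).image f) : Set (Fin (2 * d + 1) → ℝ)) := by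
    ext x
    simp only [Finset.mem_coe]
    constructor
    · intro hx
      obtain ⟨h1, h2⟩ := Finset.mem_inter.1 hx
      obtain ⟨v, hv, rfl⟩ := Finset.mem_image.1 h1
      obtain ⟨u, hu, he⟩ := Finset.mem_image.1 h2
      exact Finset.mem_image_of_mem f (Finset.mem_inter.2 ⟨hv, hfinj he ▸ hu⟩)
    · intro hx
      obtain ⟨v, hv, rfl⟩ := Finset.mem_image.1 hx
      obtain ⟨h1, h2⟩ := Finset.mem_inter.1 hv
      exact Finset.mem_inter.2 ⟨Finset.mem_image_of_mem f h1, Finset.mem_image_of_mem f h2⟩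
  rw [← Finset.coe_image, ← Finset.coe_image, ← Finset.coe_image, ← key, ← Finset.coe_inter, hEq]
end

section
/- For all integers d, r with 1 ≤ d ≤ r ≤ 2d there is a constant c > 0 such that for every n ≥ r+1 there exists a simplicial complex K of dimension d on n vertices that admits a linear embedding into ℝ^r and satisfies f_d(K) ≥ c · n^{⌈r/2⌉}. -/
open Finset

namespace Stmt4

/-! ### Combinatorial set-up -/

def blk (ε L q v : ℕ) : ℕ := if v < ε then q else min ((v - ε) / L) (q - 1)

lemma blk_le (ε L q v : ℕ) : blk ε L q v ≤ q := by
  unfold blk; split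
  · exact le_rfl
  · exact le_trans (min_le_right _ _) (Nat.sub_le _ _)

lemma blk_lt (ε L q v : ℕ) (hq : 1 ≤ q) (h : ¬ v < ε) : blk ε L q v < q := by
  unfold blk; rw [if_neg h]
  exact lt_of_le_of_lt (min_le_right _ _) (by omega)

def fmap (ε L q : ℕ) {n r : ℕ} (v : Fin n) : Fin r → ℝ := fun k =>
  if v.1 < ε then 0
  else if k.1 = 2 * blk ε L q v.1 then (v.1 : ℝ) + 1
  else if k.1 = 2 * blk ε L q v.1 + 1 then 1 else 0

def isFace (a ε L q : ℕ) {n : ℕ} (F : Finset (Fin n)) : Prop :=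
  ∀ v ∈ F, ∀ w ∈ F, blk ε L q v.1 = blk ε L q w.1 →
    (v = w ∨ (blk ε L q v.1 < a ∧ (v.1 + 1 = w.1 ∨ w.1 + 1 = v.1)))

instance (a ε L q n : ℕ) : DecidablePred (isFace a ε L q (n := n)) := fun F => by
  unfold isFace; infer_instance

def KK (a ε L q n : ℕ) : Finset (Finset (Fin n)) :=
  Finset.univ.filter (isFace a ε L q)

lemma mem_KK {a ε L q n : ℕ} {F : Finset (Fin n)} : F ∈ KK a ε L q n ↔ isFace a ε L q F := by
  simp [KK]

lemma KK_down {a ε L q n : ℕ} {F G : Finset (Fin n)} (hF : F ∈ KK a ε L q n) (h : G ⊆ F) :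
    G ∈ KK a ε L q n := by
  rw [mem_KK] at hF ⊢
  intro v hv w hw; exact hF v (h hv) w (h hw)

lemma KK_single {a ε L q n : ℕ} (v : Fin n) : {v} ∈ KK a ε L q n := by
  rw [mem_KK]
  intro x hx y hy _
  simp only [mem_singleton] at hx hy
  left; rw [hx, hy]

lemma KK_nonempty {a ε L q n : ℕ} : (KK a ε L q n).Nonempty := by
  refine ⟨∅, ?_⟩
  rw [mem_KK]; intro v hv; simp at hv

/-! ### Coordinate readouts -/

def fib (ε L q : ℕ) {n : ℕ} (F : Finset (Fin n)) (j : ℕ) : Finset (Fin n) :=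
  F.filter (fun v => blk ε L q v.1 = j)

lemma readA {ε L q n r : ℕ} (F : Finset (Fin n)) (w : Fin n → ℝ) (j : ℕ) (hj : j < q)
    (k : Fin r) (hk : k.1 = 2 * j + 1) :
    ∑ v ∈ F, w v * fmap ε L q v k = ∑ v ∈ fib ε L q F j, w v := by
  rw [fib, sum_filter]
  apply sum_congr rfl
  intro v _
  by_cases hv : v.1 < ε
  · have hb : blk ε L q v.1 = q := by unfold blk; rw [if_pos hv]
    rw [fmap, if_pos hv, hb, if_neg (by omega)]
    ring
  · rw [fmap, if_neg hv]
    by_cases hbv : blk ε L q v.1 = j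
    · rw [if_pos hbv, if_neg (by omega), if_pos (by omega), mul_one]
    · rw [if_neg hbv, if_neg (by omega), if_neg (by omega), mul_zero]

lemma readB {ε L q n r : ℕ} (F : Finset (Fin n)) (w : Fin n → ℝ) (j : ℕ) (hj : j < q)
    (k : Fin r) (hk : k.1 = 2 * j) :
    ∑ v ∈ F, w v * fmap ε L q v k = ∑ v ∈ fib ε L q F j, w v * ((v.1 : ℝ) + 1) := by
  rw [fib, sum_filter]
  apply sum_congr rfl
  intro v _
  by_cases hv : v.1 < ε
  · have hb : blk ε L q v.1 = q := by unfold blk; rw [if_pos hv]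
    rw [fmap, if_pos hv, hb, if_neg (by omega)]
    ring
  · rw [fmap, if_neg hv]
    by_cases hbv : blk ε L q v.1 = j
    · rw [if_pos hbv, if_pos (by omega)]
    · rw [if_neg hbv, if_neg (by omega), if_neg (by omega), mul_zero]

lemma readC {ε L q : ℕ} {n : ℕ} (F : Finset (Fin n)) (w : Fin n → ℝ) :
    ∑ j ∈ Finset.range (q + 1), ∑ v ∈ fib ε L q F j, w v = ∑ v ∈ F, w v := by
  exact Finset.sum_fiberwise_of_maps_to (fun v _ => mem_range.2 (by
    exact Nat.lt_succ_of_le (blk_le ε L q v.1))) w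

lemma fib_q_empty {ε L q n : ℕ} (hq : 1 ≤ q) (hε : ε = 0) (F : Finset (Fin n)) :
    fib ε L q F q = ∅ := by
  rw [fib, Finset.filter_eq_empty_iff]
  intro v _
  have := blk_lt ε L q v.1 hq (by omega)
  omega

lemma fiber_agree {ε L q n r : ℕ} (hq : 1 ≤ q) (hε : ε ≤ 1) (hr : r + 1 = 2 * q + ε)
    (F G : Finset (Fin n)) (w z : Fin n → ℝ) (t : ℝ)
    (hFt : ∑ v ∈ F, w v = t) (hGt : ∑ v ∈ G, z v = t)
    (hx : ∀ k : Fin r, ∑ v ∈ F, w v * fmap ε L q v k = ∑ v ∈ G, z v * fmap ε L q v k) :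
    ∀ j ≤ q, ∑ v ∈ fib ε L q F j, w v = ∑ v ∈ fib ε L q G j, z v := by
  have hread : ∀ j ≤ q, j ≠ q + ε - 1 →
      ∑ v ∈ fib ε L q F j, w v = ∑ v ∈ fib ε L q G j, z v := by
    intro j hj hjne
    rcases Nat.lt_or_ge j q with hjq | hjq
    · have hcoord : 2 * j + 1 < r := by omega
      have := hx ⟨2 * j + 1, hcoord⟩
      rw [readA F w j hjq _ rfl, readA G z j hjq _ rfl] at this
      exact this
    · have hjq' : j = q := le_antisymm hj hjq
      have hε0 : ε = 0 := by omega
      rw [hjq', fib_q_empty hq hε0, fib_q_empty hq hε0, sum_empty, sum_empty]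
  intro j hj
  by_cases hjs : j = q + ε - 1
  · have hmem : j ∈ Finset.range (q + 1) := mem_range.2 (by omega)
    have h1 := readC (ε := ε) (L := L) (q := q) F w
    have h2 := readC (ε := ε) (L := L) (q := q) G z
    rw [hFt] at h1; rw [hGt] at h2
    rw [← Finset.sum_erase_add _ _ hmem] at h1 h2
    have herest : ∑ j' ∈ (Finset.range (q + 1)).erase j, ∑ v ∈ fib ε L q F j', w v
        = ∑ j' ∈ (Finset.range (q + 1)).erase j, ∑ v ∈ fib ε L q G j', z v := by
      apply Finset.sum_congr rfl
      intro j' hj'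
      have hj'ne : j' ≠ j := Finset.ne_of_mem_erase hj'
      have hj'le : j' ≤ q := by
        have := Finset.mem_of_mem_erase hj'
        exact Nat.lt_succ_iff.1 (mem_range.1 this)
      exact hread j' hj'le (by omega)
    rw [herest] at h1
    linarith [h1, h2]
  · exact hread j hj hjs

/-! ### 1-D mass lemmas -/

lemma block_zero {n : ℕ} (A C : Finset (Fin n)) (w z : Fin n → ℝ)
    (hA : ∀ v ∈ A, ∀ x ∈ A, v.1 ≤ x.1 + 1)
    (hC : ∀ v ∈ C, ∀ x ∈ C, v.1 ≤ x.1 + 1)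
    (hw : ∀ v ∈ A, 0 ≤ w v) (hz : ∀ v ∈ C, 0 ≤ z v)
    (hu : ∑ v ∈ A, w v = ∑ v ∈ C, z v)
    (hs : ∑ v ∈ A, w v * ((v.1 : ℝ) + 1) = ∑ v ∈ C, z v * ((v.1 : ℝ) + 1))
    (v : Fin n) (hvA : v ∈ A) (hvC : v ∉ C) : w v = 0 := by
  rcases C.eq_empty_or_nonempty with hCe | hCne
  · have h0 : ∑ x ∈ A, w x = 0 := by rw [hu, hCe, sum_empty]
    exact (Finset.sum_eq_zero_iff_of_nonneg hw).1 h0 v hvA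
  · have hu0 : (0:ℝ) ≤ ∑ x ∈ C, z x := Finset.sum_nonneg hz
    have hside : (∀ c ∈ C, c.1 < v.1) ∨ (∀ c ∈ C, v.1 < c.1) := by
      by_contra hcon
      push_neg at hcon
      obtain ⟨⟨c₁, hc₁, hc₁v⟩, ⟨c₂, hc₂, hc₂v⟩⟩ := hcon
      have h1 : c₁ ≠ v := fun h => hvC (h ▸ hc₁)
      have h2 : c₂ ≠ v := fun h => hvC (h ▸ hc₂)
      have := hC c₁ hc₁ c₂ hc₂
      have hne1 : c₁.1 ≠ v.1 := fun h => h1 (Fin.ext h)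
      have hne2 : c₂.1 ≠ v.1 := fun h => h2 (Fin.ext h)
      omega
    have hwv := hw v hvA
    have hmass : ∑ x ∈ A.erase v, w x = (∑ x ∈ C, z x) - w v := by
      have := Finset.sum_erase_add A w hvA
      rw [hu] at this; linarith
    have hsplit : ∑ x ∈ A, w x * ((x.1 : ℝ) + 1)
        = (∑ x ∈ A.erase v, w x * ((x.1 : ℝ) + 1)) + w v * ((v.1 : ℝ) + 1) := by
      rw [Finset.sum_erase_add _ _ hvA]
    rcases hside with hlt | hgt
    · have h1 : ∑ c ∈ C, z c * ((c.1 : ℝ) + 1) ≤ (∑ x ∈ C, z x) * (v.1 : ℝ) := by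
        rw [Finset.sum_mul]
        apply Finset.sum_le_sum
        intro c hc
        have hcc : (c.1 : ℕ) + 1 ≤ v.1 := hlt c hc
        have : (c.1 : ℝ) + 1 ≤ (v.1 : ℝ) := by exact_mod_cast hcc
        exact mul_le_mul_of_nonneg_left this (hz c hc)
      have hb : ∑ x ∈ A.erase v, w x * (v.1 : ℝ)
          ≤ ∑ x ∈ A.erase v, w x * ((x.1 : ℝ) + 1) := by
        apply Finset.sum_le_sum
        intro x hx
        have hxA := Finset.mem_of_mem_erase hx
        have : (v.1 : ℝ) ≤ (x.1 : ℝ) + 1 := by exact_mod_cast hA v hvA x hxA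
        exact mul_le_mul_of_nonneg_left this (hw x hxA)
      have hb' : ∑ x ∈ A.erase v, w x * (v.1 : ℝ)
          = ((∑ x ∈ C, z x) - w v) * (v.1 : ℝ) := by
        rw [← Finset.sum_mul, hmass]
      rw [hs] at hsplit
      nlinarith [h1, hb, hb', hsplit, hwv]
    · have h1 : (∑ x ∈ C, z x) * ((v.1 : ℝ) + 2) ≤ ∑ c ∈ C, z c * ((c.1 : ℝ) + 1) := by
        rw [Finset.sum_mul]
        apply Finset.sum_le_sum
        intro c hc
        have hcc : (v.1 : ℕ) + 2 ≤ c.1 + 1 := by have := hgt c hc; omega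
        have : (v.1 : ℝ) + 2 ≤ (c.1 : ℝ) + 1 := by exact_mod_cast hcc
        exact mul_le_mul_of_nonneg_left this (hz c hc)
      have hb : ∑ x ∈ A.erase v, w x * ((x.1 : ℝ) + 1)
          ≤ ∑ x ∈ A.erase v, w x * ((v.1 : ℝ) + 2) := by
        apply Finset.sum_le_sum
        intro x hx
        have hxA := Finset.mem_of_mem_erase hx
        have hxv : (x.1 : ℕ) + 1 ≤ v.1 + 2 := by have := hA x hxA v hvA; omega
        have : (x.1 : ℝ) + 1 ≤ (v.1 : ℝ) + 2 := by exact_mod_cast hxv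
        exact mul_le_mul_of_nonneg_left this (hw x hxA)
      have hb' : ∑ x ∈ A.erase v, w x * ((v.1 : ℝ) + 2)
          = ((∑ x ∈ C, z x) - w v) * ((v.1 : ℝ) + 2) := by
        rw [← Finset.sum_mul, hmass]
      rw [hs] at hsplit
      nlinarith [h1, hb, hb', hsplit, hwv]

/-- zero total mass and zero moment on a consecutive pair set forces all coefficients zero. -/
lemma pair_zero {n : ℕ} (A : Finset (Fin n)) (w : Fin n → ℝ)
    (hcons : ∀ v ∈ A, ∀ x ∈ A, v = x ∨ v.1 + 1 = x.1 ∨ x.1 + 1 = v.1)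
    (h0 : ∑ v ∈ A, w v = 0) (h1 : ∑ v ∈ A, w v * ((v.1 : ℝ) + 1) = 0)
    (v : Fin n) (hv : v ∈ A) : w v = 0 := by
  have hne : A.Nonempty := ⟨v, hv⟩
  set v₀ := A.min' hne with hv₀
  have hv₀A : v₀ ∈ A := A.min'_mem hne
  have hsub : ∀ x ∈ A, x = v₀ ∨ x.1 = v₀.1 + 1 := by
    intro x hx
    have hmin : v₀ ≤ x := A.min'_le x hx
    rcases hcons v₀ hv₀A x hx with h | h | h
    · left; exact h.symm
    · right; omega
    · have : x = v₀ := by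
        apply Fin.ext
        have h1 : v₀.1 ≤ x.1 := hmin
        omega
      left; exact this
  by_cases hex : ∃ x ∈ A, x.1 = v₀.1 + 1
  · obtain ⟨x, hxA, hx1⟩ := hex
    have hxne : v₀ ≠ x := by intro h; rw [h] at hx1; omega
    have hAeq : A = {v₀, x} := by
      apply Finset.Subset.antisymm
      · intro y hy
        rcases hsub y hy with h | h
        · simp [h]
        · have : y = x := Fin.ext (by omega)
          simp [this]
      · intro y hy
        simp only [Finset.mem_insert, Finset.mem_singleton] at hy
        rcases hy with h | h
        · rw [h]; exact hv₀A
        · rw [h]; exact hxA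
    rw [hAeq, Finset.sum_pair hxne] at h0 h1
    have hx1' : (x.1 : ℝ) = (v₀.1 : ℝ) + 1 := by exact_mod_cast hx1
    rw [hx1'] at h1
    have hwx : w x = 0 := by nlinarith [h0, h1]
    have hwv₀ : w v₀ = 0 := by linarith
    rcases hsub v hv with h | h
    · rw [h]; exact hwv₀
    · have : v = x := Fin.ext (by omega)
      rw [this]; exact hwx
  · have hAeq : A = {v₀} := by
      apply Finset.Subset.antisymm
      · intro y hy
        rcases hsub y hy with h | h
        · simp [h]
        · exact absurd ⟨y, hy, h⟩ hex
      · intro y hy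
        simp only [Finset.mem_singleton] at hy
        rw [hy]; exact hv₀A
    rw [hAeq, Finset.sum_singleton] at h0
    have : v = v₀ := by
      rcases hsub v hv with h | h
      · exact h
      · exact absurd ⟨v, hv, h⟩ hex
    rw [this]; exact h0

/-! ### Affine independence of faces -/

lemma sum_transfer {n : ℕ} (F : Finset (Fin n)) (w : {x // x ∈ F} → ℝ) (g : Fin n → ℝ) :
    ∑ v ∈ F, (if h : v ∈ F then w ⟨v, h⟩ else 0) * g v = ∑ i : {x // x ∈ F}, w i * g i.1 := by
  rw [Finset.univ_eq_attach, ← Finset.sum_attach F (fun v => (if h : v ∈ F then w ⟨v, h⟩ else 0) * g v)]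
  apply Finset.sum_congr rfl
  intro x _
  rw [dif_pos x.2]

lemma affInd {a ε L q n r : ℕ} (hq : 1 ≤ q) (hε : ε ≤ 1) (hr : r + 1 = 2 * q + ε)
    (F : Finset (Fin n)) (hF : isFace a ε L q F) :
    AffineIndependent ℝ (fun v : {x // x ∈ F} => fmap ε L q (n := n) (r := r) v.1) := by
  rw [affineIndependent_iff_of_fintype]
  intro w hw0 hwvsub
  rw [Finset.weightedVSub_eq_linear_combination _ hw0] at hwvsub
  intro i
  set w' : Fin n → ℝ := fun v => if h : v ∈ F then w ⟨v, h⟩ else 0 with hw'def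
  have t1 : ∑ v ∈ F, w' v = 0 := by
    have := sum_transfer F w (fun _ => 1)
    simp only [mul_one] at this
    rw [hw'def]; rw [this]; exact hw0
  have t2 : ∀ k : Fin r, ∑ v ∈ F, w' v * fmap ε L q v k = 0 := by
    intro k
    have hcong := congrFun hwvsub k
    rw [Finset.sum_apply] at hcong
    simp only [Pi.smul_apply, smul_eq_mul, Pi.zero_apply] at hcong
    rw [hw'def, sum_transfer F w (fun v => fmap ε L q v k)]
    exact hcong
  have hfib : ∀ j ≤ q, ∑ v ∈ fib ε L q F j, w' v = 0 := by
    intro j hj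
    have := fiber_agree hq hε hr F ∅ w' (fun _ => 0) 0 t1 (by simp) (by
      intro k; rw [t2 k]; simp) j hj
    simpa [fib] using this
  suffices hgoal : w' i.1 = 0 by
    rw [hw'def] at hgoal
    simpa [dif_pos i.2] using hgoal
  by_cases hv : (i.1).1 < ε
  · -- apex
    have hbq : blk ε L q (i.1).1 = q := by unfold blk; rw [if_pos hv]
    have hmem : i.1 ∈ fib ε L q F q := by
      rw [fib, mem_filter]; exact ⟨i.2, hbq⟩
    have hsingle : fib ε L q F q = {i.1} := by
      apply Finset.Subset.antisymm
      · intro x hx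
        rw [fib, mem_filter] at hx
        have hxlt : x.1 < ε := by
          by_contra hc
          have := blk_lt ε L q x.1 hq hc
          omega
        have : x = i.1 := Fin.ext (by omega)
        simp [this]
      · intro x hx
        simp only [Finset.mem_singleton] at hx
        rw [hx]; exact hmem
    have := hfib q le_rfl
    rw [hsingle, Finset.sum_singleton] at this
    exact this
  · -- real block
    have hjlt : blk ε L q (i.1).1 < q := blk_lt ε L q (i.1).1 hq hv
    set j := blk ε L q (i.1).1 with hjdef
    apply pair_zero (fib ε L q F j) w' ?_ (hfib j (le_of_lt hjlt)) ?_ i.1 ?_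
    · intro x hx y hy
      rw [fib, mem_filter] at hx hy
      have := hF x hx.1 y hy.1 (by rw [hx.2, hy.2])
      tauto
    · have hcoord : 2 * j < r := by omega
      have := t2 ⟨2 * j, hcoord⟩
      rw [readB F w' j hjlt _ rfl] at this
      exact this
    · rw [fib, mem_filter]; exact ⟨i.2, rfl⟩

/-! ### Injectivity of the embedding -/

lemma fmap_inj {ε L q n r : ℕ} (hq : 1 ≤ q) (hε : ε ≤ 1) (hr : r + 1 = 2 * q + ε) :
    Function.Injective (fmap ε L q (n := n) (r := r)) := by
  intro v w h
  by_contra hne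
  have hne' : v.1 ≠ w.1 := fun hh => hne (Fin.ext hh)
  -- a vertex which is not apex differs from anything with different value
  have key : ∀ x y : Fin n, ¬ x.1 < ε → x.1 ≠ y.1 → fmap ε L q (n := n) (r := r) x ≠ fmap ε L q y := by
    intro x y hx hxy heq
    have hblt : blk ε L q x.1 < q := blk_lt ε L q x.1 hq hx
    have hcoord : 2 * blk ε L q x.1 < r := by omega
    have := congrFun heq ⟨2 * blk ε L q x.1, hcoord⟩
    rw [fmap, fmap] at this
    simp only [if_neg hx, if_true, eq_self_iff_true] at this
    by_cases hy : y.1 < ε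
    · rw [if_pos hy] at this
      have : (x.1 : ℝ) + 1 = 0 := by simpa using this
      have hx1 : (0:ℝ) ≤ (x.1 : ℝ) := by positivity
      linarith
    · rw [if_neg hy] at this
      by_cases hbxy : blk ε L q x.1 = blk ε L q y.1
      · rw [if_pos (by rw [hbxy])] at this
        have hxy' : (x.1 : ℝ) + 1 = (y.1 : ℝ) + 1 := this
        have : x.1 = y.1 := by
          have := add_right_cancel hxy'
          exact_mod_cast this
        exact hxy this
      · rw [if_neg (by intro hc; exact hbxy (by omega)), if_neg (by omega)] at this
        have hx1 : (0:ℝ) ≤ (x.1 : ℝ) := by positivity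
        linarith
  by_cases hv : v.1 < ε
  · by_cases hw : w.1 < ε
    · exact hne' (by omega)
    · exact key w v hw (fun hh => hne' hh.symm) h.symm
  · exact key v w hv hne' h

/-! ### Weight extraction and the hull intersection property -/

lemma exists_weights {ε L q n r : ℕ} (hq : 1 ≤ q) (hε : ε ≤ 1) (hr : r + 1 = 2 * q + ε)
    (F : Finset (Fin n)) (x : Fin r → ℝ)
    (hx : x ∈ convexHull ℝ (fmap ε L q '' (F : Set (Fin n)))) :
    ∃ w : Fin n → ℝ, (∀ v, 0 ≤ w v) ∧ (∀ v, v ∉ F → w v = 0) ∧ (∑ v ∈ F, w v = 1) ∧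
      (∑ v ∈ F, w v • fmap ε L q (n := n) (r := r) v = x) := by
  rw [← Finset.coe_image, Finset.convexHull_eq] at hx
  obtain ⟨W, hW0, hW1, hWc⟩ := hx
  have hinj : ∀ v ∈ F, ∀ y ∈ F, fmap ε L q (n := n) (r := r) v = fmap ε L q y → v = y :=
    fun v _ y _ h => fmap_inj hq hε hr h
  refine ⟨fun v => if v ∈ F then W (fmap ε L q v) else 0, ?_, ?_, ?_, ?_⟩
  · intro v
    by_cases hv : v ∈ F
    · simp only [if_pos hv]
      exact hW0 _ (Finset.mem_image_of_mem _ hv)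
    · simp only [if_neg hv, le_refl]
  · intro v hv; simp only [if_neg hv]
  · have : ∑ v ∈ F, (if v ∈ F then W (fmap ε L q (n := n) (r := r) v) else 0)
        = ∑ v ∈ F, W (fmap ε L q v) :=
      Finset.sum_congr rfl (fun v hv => if_pos hv)
    rw [this, ← Finset.sum_image hinj]
    exact hW1
  · have h1 : ∑ v ∈ F, (if v ∈ F then W (fmap ε L q (n := n) (r := r) v) else 0) •
          fmap ε L q (n := n) (r := r) v
        = ∑ v ∈ F, W (fmap ε L q (n := n) (r := r) v) • fmap ε L q (n := n) (r := r) v :=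
      Finset.sum_congr rfl (fun v hv => by rw [if_pos hv])
    rw [h1]
    have himg : ∑ y ∈ F.image (fmap ε L q (n := n) (r := r)), W y • y
        = ∑ v ∈ F, W (fmap ε L q (n := n) (r := r) v) • fmap ε L q (n := n) (r := r) v :=
      Finset.sum_image hinj (f := fun y => W y • y)
    rw [← himg]
    rw [Finset.centerMass_eq_of_sum_1 _ id hW1] at hWc
    simpa using hWc

lemma hull_inter {a ε L q n r : ℕ} (hq : 1 ≤ q) (hε : ε ≤ 1) (hr : r + 1 = 2 * q + ε)
    (F G : Finset (Fin n)) (hF : isFace a ε L q F) (hG : isFace a ε L q G) :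
    convexHull ℝ (fmap ε L q '' (F : Set (Fin n))) ∩
        convexHull ℝ (fmap ε L q '' (G : Set (Fin n)))
      = convexHull ℝ (fmap ε L q (n := n) (r := r) '' ((F ∩ G : Finset (Fin n)) : Set (Fin n))) := by
  apply Set.Subset.antisymm
  · rintro x ⟨hxF, hxG⟩
    obtain ⟨w, hw0, hwsupp, hw1, hwx⟩ := exists_weights hq hε hr F x hxF
    obtain ⟨z, hz0, hzsupp, hz1, hzx⟩ := exists_weights hq hε hr G x hxG
    have hxk : ∀ k : Fin r, ∑ v ∈ F, w v * fmap ε L q v k = ∑ v ∈ G, z v * fmap ε L q v k := by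
      intro k
      have h1 := congrFun hwx k
      have h2 := congrFun hzx k
      rw [Finset.sum_apply] at h1 h2
      simp only [Pi.smul_apply, smul_eq_mul] at h1 h2
      rw [h1, h2]
    have hfib := fiber_agree hq hε hr F G w z 1 hw1 hz1 hxk
    -- key claim: w vanishes on F \ G
    have key : ∀ v ∈ F, v ∉ G → w v = 0 := by
      intro v hvF hvG
      by_cases hv : v.1 < ε
      · -- apex
        have hbq : blk ε L q v.1 = q := by unfold blk; rw [if_pos hv]
        have hGq : fib ε L q G q = ∅ := by
          rw [fib, Finset.filter_eq_empty_iff]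
          intro y hy
          intro hby
          have hyε : y.1 < ε := by
            by_contra hc
            have := blk_lt ε L q y.1 hq hc
            omega
          have : y = v := Fin.ext (by omega)
          rw [this] at hy
          exact hvG hy
        have h0 : ∑ x ∈ fib ε L q F q, w x = 0 := by
          rw [hfib q le_rfl, hGq, sum_empty]
        have hvfib : v ∈ fib ε L q F q := by
          rw [fib, mem_filter]; exact ⟨hvF, hbq⟩
        exact (Finset.sum_eq_zero_iff_of_nonneg (fun y _ => hw0 y)).1 h0 v hvfib
      · have hjlt : blk ε L q v.1 < q := blk_lt ε L q v.1 hq hv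
        set j := blk ε L q v.1 with hjdef
        refine block_zero (fib ε L q F j) (fib ε L q G j) w z ?_ ?_
          (fun y _ => hw0 y) (fun y _ => hz0 y) (hfib j (le_of_lt hjlt)) ?_ v ?_ ?_
        · intro y hy x hx
          rw [fib, mem_filter] at hy hx
          have := hF y hy.1 x hx.1 (by rw [hy.2, hx.2])
          rcases this with h | ⟨_, h | h⟩ <;> omega
        · intro y hy x hx
          rw [fib, mem_filter] at hy hx
          have := hG y hy.1 x hx.1 (by rw [hy.2, hx.2])
          rcases this with h | ⟨_, h | h⟩ <;> omega
        · have hcoord : 2 * j < r := by omega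
          have h1 := readB (ε := ε) (L := L) (q := q) F w j hjlt ⟨2 * j, hcoord⟩ rfl
          have h2 := readB (ε := ε) (L := L) (q := q) G z j hjlt ⟨2 * j, hcoord⟩ rfl
          rw [← h1, ← h2]
          exact hxk _
        · rw [fib, mem_filter]; exact ⟨hvF, rfl⟩
        · rw [fib, mem_filter]
          intro hc
          exact hvG hc.1
    -- pack up
    have hsub : (F ∩ G : Finset (Fin n)) ⊆ F := Finset.inter_subset_left
    have hker : ∀ v ∈ F, v ∉ F ∩ G → w v = 0 := by
      intro v hv hvn
      rw [Finset.mem_inter] at hvn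
      push_neg at hvn
      exact key v hv (hvn hv)
    have hsum1 : ∑ v ∈ F ∩ G, w v = 1 := by
      rw [Finset.sum_subset hsub hker]; exact hw1
    have hsumx : ∑ v ∈ F ∩ G, w v • fmap ε L q (n := n) (r := r) v = x := by
      rw [Finset.sum_subset hsub (fun v hv hvn => by rw [hker v hv hvn, zero_smul])]
      exact hwx
    have := centerMass_mem_convexHull (R := ℝ) (s := fmap ε L q (n := n) (r := r) ''
          ((F ∩ G : Finset (Fin n)) : Set (Fin n))) (F ∩ G) (w := w)
        (fun v _ => hw0 v) (by rw [hsum1]; norm_num)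
        (z := fmap ε L q) (fun v hv => Set.mem_image_of_mem _ (by exact_mod_cast hv))
    rwa [Finset.centerMass_eq_of_sum_1 _ _ hsum1, hsumx] at this
  · apply Set.subset_inter
    · exact convexHull_mono (Set.image_mono (by exact_mod_cast Finset.inter_subset_left))
    · exact convexHull_mono (Set.image_mono (by exact_mod_cast Finset.inter_subset_right))

/-! ### Cardinality bound for faces -/

lemma sum_two_one (a q : ℕ) (ha : a ≤ q) :
    ∑ j ∈ Finset.range q, (if j < a then 2 else 1) = q + a := by
  have h1 : ∀ j ∈ Finset.range q, (if j < a then 2 else 1) = 1 + (if j < a then 1 else 0) := by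
    intro j _; split_ifs <;> rfl
  rw [Finset.sum_congr rfl h1, Finset.sum_add_distrib, Finset.sum_const, smul_eq_mul, mul_one,
    ← Finset.card_filter]
  have h2 : (Finset.range q).filter (fun j => j < a) = Finset.range a := by
    ext j
    simp only [Finset.mem_filter, Finset.mem_range]
    omega
  rw [h2]
  simp

lemma fib_card_le {a ε L q n : ℕ} (hq : 1 ≤ q) (hε : ε ≤ 1)
    {F : Finset (Fin n)} (hF : isFace a ε L q F) (j : ℕ) :
    (fib ε L q F j).card ≤ if j < a then 2 else if j < q then 1 else ε := by
  by_cases hja : j < a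
  · rw [if_pos hja]
    rcases (fib ε L q F j).eq_empty_or_nonempty with he | hne
    · rw [he]; simp
    · obtain ⟨v₀, hv₀m, hv₀min⟩ : ∃ v₀ ∈ fib ε L q F j, ∀ x ∈ fib ε L q F j, v₀ ≤ x :=
        ⟨(fib ε L q F j).min' hne, (fib ε L q F j).min'_mem hne,
          fun x hx => (fib ε L q F j).min'_le x hx⟩
      simp only [fib, mem_filter] at hv₀m
      have hsub : fib ε L q F j ⊆ {v₀} ∪ (Finset.univ.filter (fun x : Fin n => x.1 = v₀.1 + 1)) := by
        intro x hx
        have hmin : v₀ ≤ x := hv₀min x hx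
        simp only [fib, mem_filter] at hx
        have := hF v₀ hv₀m.1 x hx.1 (by rw [hv₀m.2, hx.2])
        simp only [Finset.mem_union, Finset.mem_singleton, Finset.mem_filter, Finset.mem_univ,
          true_and]
        rcases this with h | ⟨_, h | h⟩
        · left; exact h.symm
        · right; omega
        · left
          apply Fin.ext
          have : v₀.1 ≤ x.1 := hmin
          omega
      calc (fib ε L q F j).card ≤ _ := Finset.card_le_card hsub
        _ ≤ ({v₀} : Finset (Fin n)).card
            + (Finset.univ.filter (fun x : Fin n => x.1 = v₀.1 + 1)).card := Finset.card_union_le _ _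
        _ ≤ 1 + 1 := by
            apply Nat.add_le_add (le_of_eq (Finset.card_singleton _))
            apply Finset.card_le_one.2
            intro x hx y hy
            simp only [Finset.mem_filter] at hx hy
            exact Fin.ext (by omega)
  · rw [if_neg hja]
    by_cases hjq : j < q
    · rw [if_pos hjq]
      apply Finset.card_le_one.2
      intro x hx y hy
      rw [fib, mem_filter] at hx hy
      have := hF x hx.1 y hy.1 (by rw [hx.2, hy.2])
      rcases this with h | ⟨hb, _⟩
      · exact h
      · rw [hx.2] at hb; omega
    · rw [if_neg hjq]
      rcases Nat.eq_zero_or_pos ε with hε0 | hε1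
      · have hj : (fib ε L q F j).card = 0 := by
          rw [Finset.card_eq_zero, fib, Finset.filter_eq_empty_iff]
          intro v _
          have := blk_lt ε L q v.1 hq (by omega)
          omega
        omega
      · have : (fib ε L q F j).card ≤ 1 := by
          apply Finset.card_le_one.2
          intro x hx y hy
          rw [fib, mem_filter] at hx hy
          have hxq : x.1 < ε := by
            by_contra hc
            have := blk_lt ε L q x.1 hq hc
            omega
          have hyq : y.1 < ε := by
            by_contra hc
            have := blk_lt ε L q y.1 hq hc
            omega
          exact Fin.ext (by omega)
        omega

lemma card_face_le {a ε L q n d : ℕ} (hq : 1 ≤ q) (hε : ε ≤ 1) (ha : a ≤ q)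
    (hd : d + 1 = a + q + ε) {F : Finset (Fin n)} (hF : isFace a ε L q F) :
    F.card ≤ d + 1 := by
  have hcard : F.card = ∑ j ∈ Finset.range (q + 1), (fib ε L q F j).card := by
    exact Finset.card_eq_sum_card_fiberwise (fun v _ => mem_range.2
      (Nat.lt_succ_of_le (blk_le ε L q v.1)))
  rw [hcard]
  calc ∑ j ∈ Finset.range (q + 1), (fib ε L q F j).card
      ≤ ∑ j ∈ Finset.range (q + 1), (if j < a then 2 else if j < q then 1 else ε) :=
        Finset.sum_le_sum (fun j _ => fib_card_le hq hε hF j)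
    _ = d + 1 := by
        rw [Finset.sum_range_succ]
        have h1 : ∀ j ∈ Finset.range q, (if j < a then 2 else if j < q then 1 else ε)
            = (if j < a then 2 else 1) := by
          intro j hj
          rw [mem_range] at hj
          split_ifs <;> omega
        rw [Finset.sum_congr rfl h1, sum_two_one a q ha]
        have : ¬ (q < a) := by omega
        rw [if_neg this, if_neg (lt_irrefl q)]
        omega

/-! ### Explicit top faces and counting -/

def vtx {n : ℕ} (hn : 0 < n) (m : ℕ) : Fin n := ⟨m % n, Nat.mod_lt m hn⟩

lemma vtx_val {n : ℕ} (hn : 0 < n) {m : ℕ} (h : m < n) : (vtx hn m).1 = m :=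
  Nat.mod_eq_of_lt h

def Fc {n : ℕ} (hn : 0 < n) (a ε L q : ℕ) (c : Fin q → ℕ) : Finset (Fin n) :=
  (if ε = 1 then {vtx hn 0} else ∅) ∪
    (Finset.univ : Finset (Fin q)).biUnion (fun i =>
      if i.1 < a then {vtx hn (ε + i.1 * L + c i), vtx hn (ε + i.1 * L + c i + 1)}
      else {vtx hn (ε + i.1 * L + c i)})

lemma blk_explicit {ε L q : ℕ} (hL : 0 < L) (i t : ℕ) (hi : i < q) (ht : t < L) :
    blk ε L q (ε + i * L + t) = i := by
  unfold blk
  rw [if_neg (by omega)]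
  have h1 : ε + i * L + t - ε = t + i * L := by omega
  rw [h1, Nat.mul_comm i L, Nat.add_mul_div_left t i hL, Nat.div_eq_of_lt ht, Nat.zero_add]
  exact min_eq_left (by omega)

lemma val_lt {ε L q n : ℕ} (hLn : ε + q * L ≤ n) {i t : ℕ} (hi : i < q) (ht : t < L) :
    ε + i * L + t < n := by
  have h3 : i * L + L ≤ q * L := by
    have h : (i + 1) * L ≤ q * L := Nat.mul_le_mul_right L (by omega)
    calc i * L + L = (i + 1) * L := by ring
      _ ≤ q * L := h
  omega

lemma mem_Fc {a ε L q n : ℕ} (hn : 0 < n) (hL : 2 ≤ L) (hLn : ε + q * L ≤ n)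
    {c : Fin q → ℕ} (hc : ∀ i, c i < L - 1) {v : Fin n} :
    v ∈ Fc hn a ε L q c ↔ ((ε = 1 ∧ v.1 = 0) ∨
      ∃ i : Fin q, v.1 = ε + i.1 * L + c i ∨ (i.1 < a ∧ v.1 = ε + i.1 * L + c i + 1)) := by
  rw [Fc, Finset.mem_union, Finset.mem_biUnion]
  constructor
  · rintro (h | ⟨i, _, hi⟩)
    · by_cases hε1 : ε = 1
      · rw [if_pos hε1, Finset.mem_singleton] at h
        left
        refine ⟨hε1, ?_⟩
        rw [h]; exact vtx_val hn (by omega)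
      · rw [if_neg hε1] at h; exact absurd h (Finset.notMem_empty v)
    · right
      refine ⟨i, ?_⟩
      by_cases hia : i.1 < a
      · rw [if_pos hia, Finset.mem_insert, Finset.mem_singleton] at hi
        rcases hi with h | h
        · left; rw [h]; exact vtx_val hn (val_lt hLn i.2 (by have := hc i; omega))
        · right
          refine ⟨hia, ?_⟩
          rw [h]
          have : ε + i.1 * L + (c i + 1) < n := val_lt hLn i.2 (by have := hc i; omega)
          have := vtx_val hn (m := ε + i.1 * L + c i + 1) (by omega)
          rw [this]
      · rw [if_neg hia, Finset.mem_singleton] at hi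
        left; rw [hi]; exact vtx_val hn (val_lt hLn i.2 (by have := hc i; omega))
  · rintro (⟨hε1, hv0⟩ | ⟨i, hi⟩)
    · left
      rw [if_pos hε1, Finset.mem_singleton]
      apply Fin.ext
      rw [hv0, vtx_val hn (by omega)]
    · right
      refine ⟨i, Finset.mem_univ i, ?_⟩
      by_cases hia : i.1 < a
      · rw [if_pos hia, Finset.mem_insert, Finset.mem_singleton]
        rcases hi with h | ⟨_, h⟩
        · left
          apply Fin.ext
          rw [h, vtx_val hn (val_lt hLn i.2 (by have := hc i; omega))]
        · right
          apply Fin.ext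
          have hlt : ε + i.1 * L + (c i + 1) < n := val_lt hLn i.2 (by have := hc i; omega)
          rw [h, vtx_val hn (m := ε + i.1 * L + c i + 1) (by omega)]
      · rw [if_neg hia, Finset.mem_singleton]
        rcases hi with h | ⟨hia', _⟩
        · apply Fin.ext
          rw [h, vtx_val hn (val_lt hLn i.2 (by have := hc i; omega))]
        · exact absurd hia' hia

lemma Fc_isFace {a ε L q n : ℕ} (hn : 0 < n) (hq : 1 ≤ q) (hε : ε ≤ 1) (hL : 2 ≤ L)
    (hLn : ε + q * L ≤ n) {c : Fin q → ℕ} (hc : ∀ i, c i < L - 1) :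
    isFace a ε L q (Fc hn a ε L q c) := by
  intro v hv w hw hblk
  rw [mem_Fc hn hL hLn hc] at hv hw
  have hblkval : ∀ (i : Fin q) (t : ℕ), t < L → blk ε L q (ε + i.1 * L + t) = i.1 :=
    fun i t ht => blk_explicit (by omega) i.1 t i.2 ht
  rcases hv with ⟨hε1, hv0⟩ | ⟨i, hi⟩
  · rcases hw with ⟨_, hw0⟩ | ⟨i', hi'⟩
    · left; exact Fin.ext (by omega)
    · -- v apex, w in a block : blk differ
      exfalso
      have hbv : blk ε L q v.1 = q := by unfold blk; rw [if_pos (by omega)]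
      have hbw : blk ε L q w.1 = i'.1 := by
        rcases hi' with h | ⟨_, h⟩
        · rw [h]; exact hblkval i' (c i') (by have := hc i'; omega)
        · have h' : w.1 = ε + i'.1 * L + (c i' + 1) := by omega
          rw [h']; exact hblkval i' (c i' + 1) (by have := hc i'; omega)
      have := i'.2
      omega
  · rcases hw with ⟨_, hw0⟩ | ⟨i', hi'⟩
    · exfalso
      have hbw : blk ε L q w.1 = q := by unfold blk; rw [if_pos (by omega)]
      have hbv : blk ε L q v.1 = i.1 := by
        rcases hi with h | ⟨_, h⟩
        · rw [h]; exact hblkval i (c i) (by have := hc i; omega)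
        · have h' : v.1 = ε + i.1 * L + (c i + 1) := by omega
          rw [h']; exact hblkval i (c i + 1) (by have := hc i; omega)
      have := i.2
      omega
    · have hbv : blk ε L q v.1 = i.1 := by
        rcases hi with h | ⟨_, h⟩
        · rw [h]; exact hblkval i (c i) (by have := hc i; omega)
        · have h' : v.1 = ε + i.1 * L + (c i + 1) := by omega
          rw [h']; exact hblkval i (c i + 1) (by have := hc i; omega)
      have hbw : blk ε L q w.1 = i'.1 := by
        rcases hi' with h | ⟨_, h⟩
        · rw [h]; exact hblkval i' (c i') (by have := hc i'; omega)
        · have h' : w.1 = ε + i'.1 * L + (c i' + 1) := by omega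
          rw [h']; exact hblkval i' (c i' + 1) (by have := hc i'; omega)
      have hii' : i = i' := by
        apply Fin.ext
        omega
      subst hii'
      rcases hi with h | ⟨hia, h⟩ <;> rcases hi' with h' | ⟨hia', h'⟩
      · left; exact Fin.ext (by omega)
      · right; exact ⟨by omega, by omega⟩
      · right; exact ⟨by omega, by omega⟩
      · left; exact Fin.ext (by omega)

lemma Fc_card {a ε L q n d : ℕ} (hn : 0 < n) (hq : 1 ≤ q) (hε : ε ≤ 1) (ha : a ≤ q)
    (hL : 2 ≤ L) (hLn : ε + q * L ≤ n) (hd : d + 1 = a + q + ε)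
    {c : Fin q → ℕ} (hc : ∀ i, c i < L - 1) :
    (Fc hn a ε L q c).card = d + 1 := by
  rw [Fc]
  have hdisj : Disjoint (if ε = 1 then ({vtx hn 0} : Finset (Fin n)) else ∅)
      ((Finset.univ : Finset (Fin q)).biUnion (fun i =>
        if i.1 < a then {vtx hn (ε + i.1 * L + c i), vtx hn (ε + i.1 * L + c i + 1)}
        else {vtx hn (ε + i.1 * L + c i)})) := by
    rw [Finset.disjoint_left]
    intro v hv hvb
    by_cases hε1 : ε = 1
    · rw [if_pos hε1, Finset.mem_singleton] at hv
      have hv0 : v.1 = 0 := by rw [hv]; exact vtx_val hn (by omega)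
      rw [Finset.mem_biUnion] at hvb
      obtain ⟨i, _, hi⟩ := hvb
      by_cases hia : i.1 < a
      · rw [if_pos hia, Finset.mem_insert, Finset.mem_singleton] at hi
        rcases hi with h | h
        · have := vtx_val hn (val_lt hLn i.2 (show c i < L by have := hc i; omega))
          rw [h] at hv0; omega
        · have h1 : ε + i.1 * L + (c i + 1) < n := val_lt hLn i.2 (by have := hc i; omega)
          have := vtx_val hn (m := ε + i.1 * L + c i + 1) (by omega)
          rw [h] at hv0; omega
      · rw [if_neg hia, Finset.mem_singleton] at hi
        have := vtx_val hn (val_lt hLn i.2 (show c i < L by have := hc i; omega))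
        rw [hi] at hv0; omega
    · rw [if_neg hε1] at hv; exact Finset.notMem_empty v hv
  rw [Finset.card_union_of_disjoint hdisj]
  have h1 : (if ε = 1 then ({vtx hn 0} : Finset (Fin n)) else ∅).card = ε := by
    by_cases hε1 : ε = 1
    · rw [if_pos hε1, Finset.card_singleton, hε1]
    · rw [if_neg hε1, Finset.card_empty]; omega
  have hblkval : ∀ (i : Fin q) (t : ℕ), t < L → blk ε L q (ε + i.1 * L + t) = i.1 :=
    fun i t ht => blk_explicit (by omega) i.1 t i.2 ht
  have h2 : ((Finset.univ : Finset (Fin q)).biUnion (fun i =>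
      if i.1 < a then {vtx hn (ε + i.1 * L + c i), vtx hn (ε + i.1 * L + c i + 1)}
      else {vtx hn (ε + i.1 * L + c i)})).card = q + a := by
    rw [Finset.card_biUnion]
    · have hterm : ∀ i : Fin q, (if i.1 < a then
          ({vtx hn (ε + i.1 * L + c i), vtx hn (ε + i.1 * L + c i + 1)} : Finset (Fin n))
          else {vtx hn (ε + i.1 * L + c i)}).card = if i.1 < a then 2 else 1 := by
        intro i
        by_cases hia : i.1 < a
        · rw [if_pos hia, if_pos hia]
          rw [Finset.card_insert_of_notMem, Finset.card_singleton]
          rw [Finset.mem_singleton]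
          intro hcon
          have hv1 := vtx_val hn (val_lt hLn i.2 (show c i < L by have := hc i; omega))
          have hlt : ε + i.1 * L + (c i + 1) < n := val_lt hLn i.2 (by have := hc i; omega)
          have hv2 := vtx_val hn (m := ε + i.1 * L + c i + 1) (by omega)
          rw [Fin.ext_iff, hv1, hv2] at hcon
          omega
        · rw [if_neg hia, if_neg hia, Finset.card_singleton]
      rw [Finset.sum_congr rfl (fun i _ => hterm i)]
      rw [Fin.sum_univ_eq_sum_range (fun j => if j < a then 2 else 1) q]
      rw [sum_two_one a q ha]
    · intro i _ i' _ hne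
      simp only [Function.onFun]
      rw [Finset.disjoint_left]
      intro v hv hv'
      have hval : ∀ (ii : Fin q), v ∈ (if ii.1 < a then
          ({vtx hn (ε + ii.1 * L + c ii), vtx hn (ε + ii.1 * L + c ii + 1)} : Finset (Fin n))
          else {vtx hn (ε + ii.1 * L + c ii)}) → blk ε L q v.1 = ii.1 := by
        intro ii hmem
        by_cases hia : ii.1 < a
        · rw [if_pos hia, Finset.mem_insert, Finset.mem_singleton] at hmem
          rcases hmem with h | h
          · rw [h, vtx_val hn (val_lt hLn ii.2 (show c ii < L by have := hc ii; omega))]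
            exact hblkval ii (c ii) (by have := hc ii; omega)
          · have hlt : ε + ii.1 * L + (c ii + 1) < n := val_lt hLn ii.2 (by have := hc ii; omega)
            rw [h, vtx_val hn (m := ε + ii.1 * L + c ii + 1) (by omega)]
            have hbb := hblkval ii (c ii + 1) (by have := hc ii; omega)
            have harg : ε + ii.1 * L + c ii + 1 = ε + ii.1 * L + (c ii + 1) := by omega
            rw [harg]
            exact hbb
        · rw [if_neg hia, Finset.mem_singleton] at hmem
          rw [hmem, vtx_val hn (val_lt hLn ii.2 (show c ii < L by have := hc ii; omega))]
          exact hblkval ii (c ii) (by have := hc ii; omega)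
      have e1 := hval i hv
      have e2 := hval i' hv'
      exact hne (Fin.ext (by omega))
  rw [h1, h2]
  omega

lemma Fc_sub {a ε L q n : ℕ} (hn : 0 < n) (hL : 2 ≤ L) (hLn : ε + q * L ≤ n)
    {c c' : Fin q → ℕ} (hc : ∀ i, c i < L - 1) (hc' : ∀ i, c' i < L - 1)
    (hsub : Fc hn a ε L q c ⊆ Fc hn a ε L q c') (i : Fin q) :
    c i = c' i ∨ c i = c' i + 1 := by
  have hmem : vtx hn (ε + i.1 * L + c i) ∈ Fc hn a ε L q c := by
    rw [mem_Fc hn hL hLn hc]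
    right
    exact ⟨i, Or.inl (vtx_val hn (val_lt hLn i.2 (by have := hc i; omega)))⟩
  have hmem' := hsub hmem
  rw [mem_Fc hn hL hLn hc'] at hmem'
  have hval : (vtx hn (ε + i.1 * L + c i) : Fin n).1 = ε + i.1 * L + c i :=
    vtx_val hn (val_lt hLn i.2 (by have := hc i; omega))
  rcases hmem' with ⟨hε1, h0⟩ | ⟨i', hi'⟩
  · omega
  · -- block indices must agree
    have hb : blk ε L q (ε + i.1 * L + c i) = i.1 :=
      blk_explicit (by omega) i.1 (c i) i.2 (by have := hc i; omega)
    have hb' : blk ε L q (vtx hn (ε + i.1 * L + c i) : Fin n).1 = i'.1 := by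
      rcases hi' with h | ⟨_, h⟩
      · rw [h]; exact blk_explicit (by omega) i'.1 (c' i') i'.2 (by have := hc' i'; omega)
      · have h' : (vtx hn (ε + i.1 * L + c i) : Fin n).1 = ε + i'.1 * L + (c' i' + 1) := by omega
        rw [h']; exact blk_explicit (by omega) i'.1 (c' i' + 1) i'.2 (by have := hc' i'; omega)
    rw [hval] at hb'
    have hii : i.1 = i'.1 := by omega
    have : i = i' := Fin.ext hii
    subst this
    rcases hi' with h | ⟨_, h⟩ <;> omega

lemma topcount {a ε L q n d : ℕ} (hn : 0 < n) (hq : 1 ≤ q) (hε : ε ≤ 1) (ha : a ≤ q)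
    (hL : 2 ≤ L) (hLn : ε + q * L ≤ n) (hd : d + 1 = a + q + ε) :
    (L - 1) ^ q ≤ ((KK a ε L q n).filter (fun F => F.card = d + 1)).card := by
  have hmaps : ∀ c ∈ Fintype.piFinset (fun _ : Fin q => Finset.range (L - 1)),
      Fc hn a ε L q c ∈ (KK a ε L q n).filter (fun F => F.card = d + 1) := by
    intro c hcmem
    have hc : ∀ i, c i < L - 1 := by
      intro i
      have := Fintype.mem_piFinset.1 hcmem i
      rwa [Finset.mem_range] at this
    rw [Finset.mem_filter]
    exact ⟨mem_KK.2 (Fc_isFace hn hq hε hL hLn hc), Fc_card hn hq hε ha hL hLn hd hc⟩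
  have hinj : Set.InjOn (fun c => Fc hn a ε L q c)
      ↑(Fintype.piFinset (fun _ : Fin q => Finset.range (L - 1))) := by
    intro c hcmem c' hcmem' heq
    rw [Finset.mem_coe] at hcmem hcmem'
    have hc : ∀ i, c i < L - 1 := by
      intro i
      have := Fintype.mem_piFinset.1 hcmem i
      rwa [Finset.mem_range] at this
    have hc' : ∀ i, c' i < L - 1 := by
      intro i
      have := Fintype.mem_piFinset.1 hcmem' i
      rwa [Finset.mem_range] at this
    simp only at heq
    funext i
    have h1 := Fc_sub hn hL hLn hc hc' (le_of_eq heq) i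
    have h2 := Fc_sub hn hL hLn hc' hc (le_of_eq heq.symm) i
    omega
  have := Finset.card_le_card_of_injOn _ hmaps hinj
  rw [Fintype.card_piFinset] at this
  simpa using this

end Stmt4

open Stmt4 in
/-- For 1 ≤ d ≤ r ≤ 2d there is c > 0 such that for every n ≥ r+1 there is a
d-dimensional simplicial complex on n vertices that embeds linearly into ℝ^r
and has at least c · n^⌈r/2⌉ simplices of dimension d. -/
theorem stmt_4 (d r : ℕ) (hd : 1 ≤ d) (hdr : d ≤ r) (hr : r ≤ 2 * d) :
    ∃ c : ℝ, 0 < c ∧ ∀ n : ℕ, r + 1 ≤ n →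
      ∃ K : Finset (Finset (Fin n)),
        K.Nonempty ∧
        (∀ F ∈ K, ∀ G ⊆ F, G ∈ K) ∧
        (∀ F ∈ K, F.card ≤ d + 1) ∧
        (∃ F ∈ K, F.card = d + 1) ∧
        (∀ v : Fin n, {v} ∈ K) ∧
        (∃ f : Fin n → (Fin r → ℝ),
          (∀ F ∈ K, AffineIndependent ℝ (fun v : F => f v.1)) ∧
          (∀ F ∈ K, ∀ G ∈ K,
            convexHull ℝ (f '' (F : Set (Fin n))) ∩ convexHull ℝ (f '' (G : Set (Fin n))) =
              convexHull ℝ (f '' ((F ∩ G : Finset (Fin n)) : Set (Fin n))))) ∧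
        c * (n : ℝ) ^ ((r + 1) / 2 : ℕ) ≤ ((K.filter fun F => F.card = d + 1).card : ℝ) := by
  set q := (r + 1) / 2 with hqdef
  set ε := r + 1 - 2 * q with hεdef
  have hq1 : 1 ≤ q := by omega
  have hrq : r + 1 = 2 * q + ε := by omega
  have hε : ε ≤ 1 := by omega
  set a := d + q - r with hadef
  have ha : a ≤ q := by omega
  have hd1 : d + 1 = a + q + ε := by omega
  have hq0 : (0 : ℝ) < (q : ℝ) := by exact_mod_cast hq1
  refine ⟨(1 / (4 * (q : ℝ))) ^ q, by positivity, ?_⟩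
  intro n hn
  have hn0 : 0 < n := by omega
  set L := (n - ε) / q with hLdef
  have hL2 : 2 ≤ L := by
    rw [hLdef]
    rw [Nat.le_div_iff_mul_le (by omega)]
    omega
  have hLn : ε + q * L ≤ n := by
    have h1 : L * q ≤ n - ε := Nat.div_mul_le_self (n - ε) q
    have h2 : q * L = L * q := Nat.mul_comm q L
    omega
  refine ⟨KK a ε L q n, KK_nonempty, fun F hF G hG => KK_down hF hG, ?_, ?_,
    fun v => KK_single v, ⟨fmap ε L q, ?_, ?_⟩, ?_⟩
  · intro F hF
    exact card_face_le hq1 hε ha hd1 (mem_KK.1 hF)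
  · exact ⟨Fc hn0 a ε L q (fun _ => 0),
      mem_KK.2 (Fc_isFace hn0 hq1 hε hL2 hLn (fun _ => by omega)),
      Fc_card hn0 hq1 hε ha hL2 hLn hd1 (fun _ => by omega)⟩
  · intro F hF
    exact affInd hq1 hε hrq F (mem_KK.1 hF)
  · intro F hF G hG
    exact hull_inter hq1 hε hrq F G (mem_KK.1 hF) (mem_KK.1 hG)
  · -- the counting estimate
    have hcount := topcount (d := d) hn0 hq1 hε ha hL2 hLn hd1
    -- natural number inequality n ≤ 4 q (L-1)
    have hnat : n ≤ 4 * (q * (L - 1)) := by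
      have hdm : q * L + (n - ε) % q = n - ε := by
        rw [hLdef]; exact Nat.div_add_mod (n - ε) q
      have hmod : (n - ε) % q < q := Nat.mod_lt _ (by omega)
      have hsub : q * (L - 1) = q * L - q * 1 := Nat.mul_sub q L 1
      have h2q : q * 2 ≤ q * L := Nat.mul_le_mul_left q hL2
      omega
    have h4q : (0 : ℝ) < 4 * (q : ℝ) := by positivity
    have hcast : (n : ℝ) ≤ ((L - 1 : ℕ) : ℝ) * (4 * (q : ℝ)) := by
      have : (n : ℝ) ≤ ((4 * (q * (L - 1)) : ℕ) : ℝ) := by exact_mod_cast hnat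
      push_cast at this ⊢
      linarith
    have hdiv : (n : ℝ) / (4 * (q : ℝ)) ≤ ((L - 1 : ℕ) : ℝ) := (div_le_iff₀ h4q).2 hcast
    calc (1 / (4 * (q : ℝ))) ^ q * (n : ℝ) ^ q
        = ((n : ℝ) / (4 * (q : ℝ))) ^ q := by
          rw [← mul_pow]
          congr 1
          ring
      _ ≤ ((L - 1 : ℕ) : ℝ) ^ q := pow_le_pow_left₀ (by positivity) hdiv q
      _ = (((L - 1) ^ q : ℕ) : ℝ) := by push_cast; ring
      _ ≤ _ := by exact_mod_cast hcount
end

section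
/- Let n ≥ 6 and let K be a shifted simplicial complex of dimension 2 that is a subcomplex of Δ(5,n). Then f_2(K) ≤ 4·f_1(K) − 8, and in particular f_2(K) < 4·f_1(K). -/
/-- `S` is a maximal simplex of Δ(d,n): a d-element subset of [n] such that
for every k ∈ [n] with k ∉ S the interval {k+1, …, d-k+2} is contained in S. -/
def deltaMaxFace (d n : ℕ) (S : Finset ℕ) : Prop :=
  S ⊆ Finset.Icc 1 n ∧ S.card = d ∧
    ∀ k ∈ Finset.Icc 1 n, k ∉ S → Finset.Icc (k + 1) (d - k + 2) ⊆ S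

/-- The minimum element of a finset of naturals (0 for the empty set). -/
def minOf (F : Finset ℕ) : ℕ := WithTop.untopD 0 F.min

lemma minOf_mem {F : Finset ℕ} (h : F.Nonempty) : minOf F ∈ F := by
  have h1 := F.min'_mem h
  have h2 : minOf F = F.min' h := by
    rw [minOf, ← Finset.coe_min' h, WithTop.untopD_coe]
  rwa [h2]

lemma minOf_le {F : Finset ℕ} {x : ℕ} (hx : x ∈ F) : minOf F ≤ x := by
  have h : F.Nonempty := ⟨x, hx⟩
  have h2 : minOf F = F.min' h := by
    rw [minOf, ← Finset.coe_min' h, WithTop.untopD_coe]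
  rw [h2]
  exact F.min'_le x hx

/-- Any 3-element subset of a maximal face of Δ(5,n) has an element ≤ 4. -/
lemma small_mem {n : ℕ} (hn : 6 ≤ n) {S F : Finset ℕ} (hS : deltaMaxFace 5 n S)
    (hFS : F ⊆ S) (hF : F.card = 3) : ∃ x ∈ F, x ≤ 4 := by
  obtain ⟨hSn, hcard, hint⟩ := hS
  have hT : ∃ T : Finset ℕ, T ⊆ S ∧ T.card = 3 ∧ ∀ x ∈ T, x ≤ 4 := by
    by_cases h1 : 1 ∈ S
    · by_cases h2 : 2 ∈ S
      · by_cases h3 : 3 ∈ S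
        · refine ⟨{1,2,3}, ?_, by decide, by decide⟩
          intro x hx; simp only [Finset.mem_insert, Finset.mem_singleton] at hx
          rcases hx with rfl|rfl|rfl <;> assumption
        · have h4 : 4 ∈ S := by
            have := hint 3 (by simp [Finset.mem_Icc]; omega) h3
            exact this (by simp)
          refine ⟨{1,2,4}, ?_, by decide, by decide⟩
          intro x hx; simp only [Finset.mem_insert, Finset.mem_singleton] at hx
          rcases hx with rfl|rfl|rfl <;> assumption
      · have h' := hint 2 (by simp [Finset.mem_Icc]; omega) h2
        have h3 : 3 ∈ S := h' (by simp [Finset.mem_Icc])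
        have h4 : 4 ∈ S := h' (by simp [Finset.mem_Icc])
        refine ⟨{1,3,4}, ?_, by decide, by decide⟩
        intro x hx; simp only [Finset.mem_insert, Finset.mem_singleton] at hx
        rcases hx with rfl|rfl|rfl <;> assumption
    · have h' := hint 1 (by simp [Finset.mem_Icc]; omega) h1
      have h2 : 2 ∈ S := h' (by simp [Finset.mem_Icc])
      have h3 : 3 ∈ S := h' (by simp [Finset.mem_Icc])
      have h4 : 4 ∈ S := h' (by simp [Finset.mem_Icc])
      refine ⟨{2,3,4}, ?_, by decide, by decide⟩
      intro x hx; simp only [Finset.mem_insert, Finset.mem_singleton] at hx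
      rcases hx with rfl|rfl|rfl <;> assumption
  obtain ⟨T, hTS, hTc, hT4⟩ := hT
  have hu : (F ∪ T).card ≤ 5 := by
    have hsub : F ∪ T ⊆ S := Finset.union_subset hFS hTS
    calc (F ∪ T).card ≤ S.card := Finset.card_le_card hsub
      _ = 5 := hcard
  have hci := Finset.card_union_add_card_inter F T
  have hpos : 0 < (F ∩ T).card := by omega
  obtain ⟨x, hx⟩ := Finset.card_pos.mp hpos
  rw [Finset.mem_inter] at hx
  exact ⟨x, hx.1, hT4 x hx.2⟩

/-- In a shifted complex containing a triple, {1,2,3} is a face. -/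
lemma base_triple {n : ℕ} (K : Finset (Finset ℕ))
    (hshift : ∀ F ∈ K, ∀ i ∈ F, ∀ j, 1 ≤ j → j < i → j ∉ F → insert j (F.erase i) ∈ K)
    (hsub : ∀ F ∈ K, ∃ S, deltaMaxFace 5 n S ∧ F ⊆ S) :
    ∀ m F, F ∈ K → F.card = 3 → (∑ x ∈ F, x) ≤ m → ({1,2,3} : Finset ℕ) ∈ K := by
  intro m
  induction m with
  | zero =>
    intro F hF hc hs
    exfalso
    obtain ⟨S, hS, hFS⟩ := hsub F hF
    have hne : F.Nonempty := Finset.card_pos.mp (by omega)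
    obtain ⟨x, hx⟩ := hne
    have hx1 : 1 ≤ x := by
      have := hS.1 (hFS hx)
      simp [Finset.mem_Icc] at this; omega
    have : x ≤ ∑ y ∈ F, y := Finset.single_le_sum (fun i _ => Nat.zero_le i) hx
    omega
  | succ m ih =>
    intro F hF hc hs
    by_cases heq : F = {1,2,3}
    · exact heq ▸ hF
    · obtain ⟨S, hS, hFS⟩ := hsub F hF
      have hi : ∃ i ∈ F, i ∉ ({1,2,3} : Finset ℕ) := by
        by_contra h
        push_neg at h
        have hsub2 : F ⊆ ({1,2,3} : Finset ℕ) := fun x hx => h x hx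
        exact heq (Finset.eq_of_subset_of_card_le hsub2 (by simp [hc]))
      have hj : ∃ j ∈ ({1,2,3} : Finset ℕ), j ∉ F := by
        by_contra h
        push_neg at h
        have hsub2 : ({1,2,3} : Finset ℕ) ⊆ F := fun x hx => h x hx
        exact heq (Finset.eq_of_subset_of_card_le hsub2 (by simp [hc])).symm
      obtain ⟨i, hiF, hi3⟩ := hi
      obtain ⟨j, hj3, hjF⟩ := hj
      have hi1 : 1 ≤ i := by
        have := hS.1 (hFS hiF)
        simp [Finset.mem_Icc] at this; omega
      have hi4 : 4 ≤ i := by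
        simp only [Finset.mem_insert, Finset.mem_singleton] at hi3
        push_neg at hi3
        omega
      have hjle : j ≤ 3 := by
        simp only [Finset.mem_insert, Finset.mem_singleton] at hj3
        rcases hj3 with rfl|rfl|rfl <;> omega
      have hj1 : 1 ≤ j := by
        simp only [Finset.mem_insert, Finset.mem_singleton] at hj3
        rcases hj3 with rfl|rfl|rfl <;> omega
      have hji : j < i := by omega
      have hF' : insert j (F.erase i) ∈ K := hshift F hF i hiF j hj1 hji hjF
      have hjne : j ∉ F.erase i := fun h => hjF (Finset.mem_of_mem_erase h)
      have hc' : (insert j (F.erase i)).card = 3 := by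
        rw [Finset.card_insert_of_notMem hjne, Finset.card_erase_of_mem hiF, hc]
      have hsum1 : (∑ x ∈ F.erase i, x) + i = ∑ x ∈ F, x :=
        Finset.sum_erase_add F _ hiF
      have hsum2 : (∑ x ∈ insert j (F.erase i), x) = j + ∑ x ∈ F.erase i, x :=
        Finset.sum_insert hjne
      exact ih (insert j (F.erase i)) hF' hc' (by omega)

/-- A shifted 2-dimensional subcomplex K of Δ(5,n) satisfies
f₂(K) ≤ 4·f₁(K) − 8, in particular f₂(K) < 4·f₁(K). -/
theorem stmt_5 (n : ℕ) (hn : 6 ≤ n) (K : Finset (Finset ℕ))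
    (hne : K.Nonempty)
    (hdown : ∀ F ∈ K, ∀ G ⊆ F, G ∈ K)
    (hshift : ∀ F ∈ K, ∀ i ∈ F, ∀ j, 1 ≤ j → j < i → j ∉ F → insert j (F.erase i) ∈ K)
    (hdim : ∀ F ∈ K, F.card ≤ 3)
    (hdim' : ∃ F ∈ K, F.card = 3)
    (hsub : ∀ F ∈ K, ∃ S, deltaMaxFace 5 n S ∧ F ⊆ S) :
    (K.filter fun F => F.card = 3).card + 8 ≤ 4 * (K.filter fun F => F.card = 2).card ∧
    (K.filter fun F => F.card = 3).card < 4 * (K.filter fun F => F.card = 2).card := by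
  classical
  set T3 := K.filter fun F => F.card = 3 with hT3def
  set E2 := K.filter fun F => F.card = 2 with hE2def
  obtain ⟨F0, hF0, hF0c⟩ := hdim'
  have h123 : ({1,2,3} : Finset ℕ) ∈ K :=
    base_triple K hshift hsub (∑ x ∈ F0, x) F0 hF0 hF0c le_rfl
  have h12 : ({1,2} : Finset ℕ) ∈ K := hdown _ h123 _ (by decide)
  have h13 : ({1,3} : Finset ℕ) ∈ K := hdown _ h123 _ (by decide)
  have h12E : ({1,2} : Finset ℕ) ∈ E2 := by
    rw [hE2def, Finset.mem_filter]; exact ⟨h12, by decide⟩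
  have h13E : ({1,3} : Finset ℕ) ∈ E2 := by
    rw [hE2def, Finset.mem_filter]; exact ⟨h13, by decide⟩
  set f : Finset ℕ → Finset ℕ := fun F => F.erase (minOf F) with hfdef
  -- basic facts about elements of T3
  have hT3fact : ∀ F ∈ T3, F ∈ K ∧ F.card = 3 ∧ minOf F ∈ F ∧ 1 ≤ minOf F ∧ minOf F ≤ 4 := by
    intro F hF
    rw [hT3def, Finset.mem_filter] at hF
    obtain ⟨hFK, hFc⟩ := hF
    have hne' : F.Nonempty := Finset.card_pos.mp (by omega)
    have hmem := minOf_mem hne'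
    obtain ⟨S, hS, hFS⟩ := hsub F hFK
    have h1 : 1 ≤ minOf F := by
      have := hS.1 (hFS hmem)
      simp [Finset.mem_Icc] at this; omega
    have h4 : minOf F ≤ 4 := by
      obtain ⟨x, hxF, hx4⟩ := small_mem hn hS hFS hFc
      exact le_trans (minOf_le hxF) hx4
    exact ⟨hFK, hFc, hmem, h1, h4⟩
  have hfE : ∀ F ∈ T3, f F ∈ E2 ∧ 1 ∉ f F := by
    intro F hF
    obtain ⟨hFK, hFc, hmem, h1, h4⟩ := hT3fact F hF
    constructor
    · rw [hE2def, Finset.mem_filter]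
      refine ⟨hdown F hFK _ (Finset.erase_subset _ _), ?_⟩
      rw [hfdef]; simp only
      rw [Finset.card_erase_of_mem hmem, hFc]
    · intro h1f
      rw [hfdef] at h1f; simp only at h1f
      have h1F : 1 ∈ F := Finset.mem_of_mem_erase h1f
      have hne1 : (1 : ℕ) ≠ minOf F := Finset.ne_of_mem_erase h1f
      have := minOf_le h1F
      omega
  have himg : T3.image f ⊆ E2 \ {({1,2} : Finset ℕ), ({1,3} : Finset ℕ)} := by
    intro P hP
    obtain ⟨F, hF, rfl⟩ := Finset.mem_image.mp hP
    obtain ⟨hPE, h1P⟩ := hfE F hF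
    rw [Finset.mem_sdiff]
    refine ⟨hPE, ?_⟩
    intro hc
    simp only [Finset.mem_insert, Finset.mem_singleton] at hc
    rcases hc with hc | hc <;> rw [hc] at h1P <;> exact h1P (by decide)
  -- fiber bound
  have hfiber : ∀ P ∈ T3.image f, (T3.filter fun F => f F = P).card ≤ 4 := by
    intro P _
    have : (T3.filter fun F => f F = P).card ≤ (Finset.Icc 1 4).card := by
      apply Finset.card_le_card_of_injOn (fun F => minOf F)
      · intro F hF
        rw [Finset.mem_coe, Finset.mem_filter] at hF
        obtain ⟨_, _, _, h1, h4⟩ := hT3fact F hF.1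
        simp [Finset.mem_Icc]; omega
      · intro F1 hF1 F2 hF2 hmineq
        rw [Finset.mem_coe, Finset.mem_filter] at hF1 hF2
        obtain ⟨_, _, hmem1, _, _⟩ := hT3fact F1 hF1.1
        obtain ⟨_, _, hmem2, _, _⟩ := hT3fact F2 hF2.1
        have e1 : insert (minOf F1) (f F1) = F1 := Finset.insert_erase hmem1
        have e2 : insert (minOf F2) (f F2) = F2 := Finset.insert_erase hmem2
        simp only at hmineq
        rw [← e1, ← e2, hF1.2, hF2.2, hmineq]
    simpa using this
  have hcount : T3.card ≤ 4 * (T3.image f).card :=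
    Finset.card_le_mul_card_image T3 4 hfiber
  have hpair : ({({1,2} : Finset ℕ), ({1,3} : Finset ℕ)} : Finset (Finset ℕ)) ⊆ E2 := by
    intro x hx
    simp only [Finset.mem_insert, Finset.mem_singleton] at hx
    rcases hx with rfl | rfl
    · exact h12E
    · exact h13E
  have hpaircard : ({({1,2} : Finset ℕ), ({1,3} : Finset ℕ)} : Finset (Finset ℕ)).card = 2 := by
    decide
  have hsd : (E2 \ {({1,2} : Finset ℕ), ({1,3} : Finset ℕ)}).card = E2.card - 2 := by
    rw [Finset.card_sdiff_of_subset hpair, hpaircard]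
  have hE2ge : 2 ≤ E2.card := by
    calc 2 = ({({1,2} : Finset ℕ), ({1,3} : Finset ℕ)} : Finset (Finset ℕ)).card := hpaircard.symm
      _ ≤ E2.card := Finset.card_le_card hpair
  have himgcard : (T3.image f).card ≤ E2.card - 2 := by
    rw [← hsd]; exact Finset.card_le_card himg
  constructor <;> omega
end

section
/- Let d ≥ 1, n ≥ 2d+1, and let S ⊆ [n] with |S| = d+1. Then S is the vertex set of a d-face of the cyclic polytope C_{2d+1}(n) — that is, S is contained in some (2d+1)-element subset of [n] satisfying Gale's evenness condition — if and only if 1 ∈ S, or n ∈ S, or there exists i with {i, i+1} ⊆ S. -/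
/-- `T ⊆ [n]` satisfies Gale's evenness condition: for all i < j in [n] ∖ T,
the number of elements k ∈ T with i < k < j is even. -/
def GaleEven (n : ℕ) (T : Finset ℕ) : Prop :=
  T ⊆ Finset.Icc 1 n ∧
    ∀ i ∈ Finset.Icc 1 n, ∀ j ∈ Finset.Icc 1 n, i ∉ T → j ∉ T → i < j →
      Even (T.filter fun k => i < k ∧ k < j).card


def galeCover : List ℕ → Finset ℕ
  | [] => ∅
  | [a] => if a = 1 then {1} else {a - 1, a}
  | a :: b :: l =>
      if b + 1 = a then {b, a} ∪ galeCover l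
      else {a - 1, a} ∪ galeCover (b :: l)

theorem gc_eq_pair (b : ℕ) (l : List ℕ) :
    galeCover ((b+1) :: b :: l) = {b, b+1} ∪ galeCover l := by
  simp [galeCover]

theorem gc_eq_skip (a b : ℕ) (l : List ℕ) (h : ¬ b + 1 = a) :
    galeCover (a :: b :: l) = {a-1, a} ∪ galeCover (b :: l) := by
  simp [galeCover, h]

theorem gc_le' : ∀ (l : List ℕ), ∀ x ∈ galeCover l, ∃ z ∈ l, x ≤ z := by
  intro l
  induction l using galeCover.induct with
  | case1 => intro x hx; simp [galeCover] at hx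
  | case2 => intro x hx; simp [galeCover] at hx; exact ⟨1, by simp, by omega⟩
  | case3 a ha =>
    intro x hx; simp [galeCover, ha] at hx
    exact ⟨a, by simp, by omega⟩
  | case4 b l ih =>
    intro x hx; rw [gc_eq_pair, Finset.mem_union] at hx
    rcases hx with hx | hx
    · simp at hx; exact ⟨b + 1, by simp, by omega⟩
    · obtain ⟨z, hz, hxz⟩ := ih x hx; exact ⟨z, by simp [hz], hxz⟩
  | case5 a b l hba ih =>
    intro x hx; rw [gc_eq_skip a b l hba, Finset.mem_union] at hx
    rcases hx with hx | hx
    · simp at hx; exact ⟨a, by simp, by omega⟩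
    · obtain ⟨z, hz, hxz⟩ := ih x hx; exact ⟨z, by simp at hz ⊢; tauto, hxz⟩

theorem gc_ge : ∀ (l : List ℕ), l.Pairwise (· > ·) → (∀ x ∈ l, 1 ≤ x) →
    ∀ x ∈ galeCover l, 1 ≤ x := by
  intro l
  induction l using galeCover.induct with
  | case1 => intro _ _ x hx; simp [galeCover] at hx
  | case2 => intro _ _ x hx; simp [galeCover] at hx; omega
  | case3 a ha =>
    intro _ h1 x hx; simp [galeCover, ha] at hx
    have := h1 a (by simp); omega
  | case4 b l ih =>
    intro hs h1 x hx; rw [gc_eq_pair, Finset.mem_union] at hx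
    have hb1 : 1 ≤ b := h1 b (by simp)
    rcases hx with hx | hx
    · simp at hx; omega
    · exact ih (hs.of_cons.of_cons) (fun y hy => h1 y (by simp [hy])) x hx
  | case5 a b l hba ih =>
    intro hs h1 x hx; rw [gc_eq_skip a b l hba, Finset.mem_union] at hx
    have hb1 : 1 ≤ b := h1 b (by simp)
    have hab : b < a := List.rel_of_pairwise_cons hs (a' := b) (by simp)
    rcases hx with hx | hx
    · simp at hx; omega
    · exact ih hs.of_cons (fun y hy => h1 y (by simp at hy ⊢; tauto)) x hx

theorem gc_self_mem : ∀ (l : List ℕ), ∀ x ∈ l, x ∈ galeCover l := by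
  intro l
  induction l using galeCover.induct with
  | case1 => intro x hx; simp at hx
  | case2 => intro x hx; simp at hx; simp [galeCover, hx]
  | case3 a ha => intro x hx; simp at hx; simp [galeCover, ha, hx]
  | case4 b l ih =>
    intro x hx; rw [gc_eq_pair, Finset.mem_union]
    simp at hx
    rcases hx with hx | hx | hx
    · left; simp [hx]
    · left; simp [hx]
    · right; exact ih x hx
  | case5 a b l hba ih =>
    intro x hx; rw [gc_eq_skip a b l hba, Finset.mem_union]
    simp at hx
    rcases hx with hx | hx
    · left; simp [hx]
    · right; exact ih x (by simp [hx])

theorem gc_card_le : ∀ (l : List ℕ), (galeCover l).card ≤ 2 * l.length := by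
  intro l
  induction l using galeCover.induct with
  | case1 => simp [galeCover]
  | case2 => simp [galeCover]
  | case3 a ha =>
    rw [show galeCover [a] = {a-1, a} by simp [galeCover, ha]]
    have h2 : ({a-1, a} : Finset ℕ).card ≤ 2 := by
      simpa using Finset.card_insert_le (a-1) ({a} : Finset ℕ)
    simpa using h2
  | case4 b l ih =>
    rw [gc_eq_pair]
    have h1 := Finset.card_union_le ({b, b+1} : Finset ℕ) (galeCover l)
    have h2 : ({b, b+1} : Finset ℕ).card ≤ 2 := by
      simpa using Finset.card_insert_le b ({b+1} : Finset ℕ)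
    simp only [List.length_cons]; omega
  | case5 a b l hba ih =>
    rw [gc_eq_skip a b l hba]
    have h1 := Finset.card_union_le ({a-1, a} : Finset ℕ) (galeCover (b :: l))
    have h2 : ({a-1, a} : Finset ℕ).card ≤ 2 := by
      simpa using Finset.card_insert_le (a-1) ({a} : Finset ℕ)
    simp only [List.length_cons] at ih ⊢; omega

theorem gc_card_lt : ∀ (l : List ℕ), l.Pairwise (· > ·) → (∀ x ∈ l, 1 ≤ x) →
    ((1 ∈ l) ∨ ∃ x, x ∈ l ∧ x + 1 ∈ l) → (galeCover l).card + 1 ≤ 2 * l.length := by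
  intro l
  induction l using galeCover.induct with
  | case1 => intro _ _ h; simp at h
  | case2 => intro _ _ _; simp [galeCover]
  | case3 a ha =>
    intro _ _ h
    rcases h with h | ⟨x, hx, hx1⟩
    · simp at h; omega
    · simp at hx hx1; omega
  | case4 b l ih =>
    intro _ _ _
    rw [gc_eq_pair]
    have h1 := Finset.card_union_le ({b, b+1} : Finset ℕ) (galeCover l)
    have h2 : ({b, b+1} : Finset ℕ).card ≤ 2 := by
      simpa using Finset.card_insert_le b ({b+1} : Finset ℕ)
    have h3 := gc_card_le l
    simp only [List.length_cons]; omega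
  | case5 a b l hba ih =>
    intro hs hpos h
    rw [gc_eq_skip a b l hba]
    have hab : b < a := List.rel_of_pairwise_cons hs (a' := b) (by simp)
    have hb1 : 1 ≤ b := hpos b (by simp)
    have hbl : ∀ y ∈ b :: l, y < a := fun y hy => List.rel_of_pairwise_cons hs hy
    have h' : (1 ∈ b :: l) ∨ ∃ x, x ∈ b :: l ∧ x + 1 ∈ b :: l := by
      rcases h with h | ⟨x, hx, hx1⟩
      · left
        rcases List.mem_cons.mp h with h | h
        · omega
        · exact h
      · right
        have hxa : x ≠ a := by
          intro he
          rcases List.mem_cons.mp hx1 with h1 | h1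
          · omega
          · have := hbl _ h1; omega
        have hx1a : x + 1 ≠ a := by
          intro he
          rcases List.mem_cons.mp hx with h1 | h1
          · omega
          · rcases List.mem_cons.mp h1 with h2 | h2
            · omega
            · have := List.rel_of_pairwise_cons hs.of_cons (a' := x) h2; omega
        refine ⟨x, ?_, ?_⟩
        · rcases List.mem_cons.mp hx with h1 | h1
          · exact absurd h1 hxa
          · exact h1
        · rcases List.mem_cons.mp hx1 with h1 | h1
          · exact absurd h1 hx1a
          · exact h1
    have h1 := Finset.card_union_le ({a-1, a} : Finset ℕ) (galeCover (b :: l))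
    have h2 : ({a-1, a} : Finset ℕ).card ≤ 2 := by
      simpa using Finset.card_insert_le (a-1) ({a} : Finset ℕ)
    have h3 := ih hs.of_cons (fun y hy => hpos y (by simp at hy ⊢; tauto)) h'
    simp only [List.length_cons] at h3 ⊢; omega

-- evenness for a pair block
theorem pair_even (a i j : ℕ) (ha : 2 ≤ a) (hi : 1 ≤ i) (hij : i < j)
    (hiT : i ∉ ({a-1, a} : Finset ℕ)) (hjT : j ∉ ({a-1, a} : Finset ℕ)) :
    Even (({a-1, a} : Finset ℕ).filter fun k => i < k ∧ k < j).card := by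
  simp only [Finset.mem_insert, Finset.mem_singleton, not_or] at hiT hjT
  by_cases h : i < a ∧ a < j
  · have : (({a-1, a} : Finset ℕ).filter fun k => i < k ∧ k < j) = {a-1, a} := by
      apply Finset.filter_true_of_mem
      intro k hk
      simp only [Finset.mem_insert, Finset.mem_singleton] at hk
      rcases hk with hk | hk <;> omega
    rw [this]
    have : ({a-1, a} : Finset ℕ).card = 2 := by
      rw [Finset.card_insert_of_notMem (by simp; omega), Finset.card_singleton]
    rw [this]; exact ⟨1, rfl⟩
  · have : (({a-1, a} : Finset ℕ).filter fun k => i < k ∧ k < j) = ∅ := by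
      apply Finset.filter_false_of_mem
      intro k hk
      simp only [Finset.mem_insert, Finset.mem_singleton] at hk
      rcases hk with hk | hk <;> omega
    rw [this]; simp

theorem filter_union_card {s t : Finset ℕ} (h : Disjoint s t) (p : ℕ → Prop)
    [DecidablePred p] :
    ((s ∪ t).filter p).card = (s.filter p).card + (t.filter p).card := by
  rw [Finset.filter_union]
  exact Finset.card_union_of_disjoint (Finset.disjoint_filter_filter h)


theorem gc_even : ∀ (l : List ℕ), l.Pairwise (· > ·) → (∀ x ∈ l, 1 ≤ x) →
    ∀ i j : ℕ, 1 ≤ i → i < j → i ∉ galeCover l → j ∉ galeCover l →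
    Even ((galeCover l).filter fun k => i < k ∧ k < j).card := by
  intro l
  induction l using galeCover.induct with
  | case1 => intro _ _ i j _ _ _ _; simp [galeCover]
  | case2 =>
    intro _ _ i j hi hij _ _
    have : (galeCover [1]).filter (fun k => i < k ∧ k < j) = ∅ := by
      apply Finset.filter_false_of_mem
      intro k hk; simp [galeCover] at hk; omega
    rw [this]; simp
  | case3 a ha =>
    intro _ h1 i j hi hij hiT hjT
    rw [show galeCover [a] = {a-1, a} by simp [galeCover, ha]] at *
    exact pair_even a i j (by have := h1 a (by simp); omega) hi hij hiT hjT
  | case4 b l ih =>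
    intro hs h1 i j hi hij hiT hjT
    rw [gc_eq_pair] at *
    have hb1 : 1 ≤ b := h1 b (by simp)
    have hdisj : Disjoint ({b, b+1} : Finset ℕ) (galeCover l) := by
      rw [Finset.disjoint_left]
      intro x hx hx2
      obtain ⟨z, hz, hxz⟩ := gc_le' l x hx2
      have hzb : z < b := by
        have h' := List.rel_of_pairwise_cons hs.of_cons (a' := z) hz; exact h'
      simp at hx; omega
    rw [filter_union_card hdisj]
    simp only [Finset.mem_union, not_or] at hiT hjT
    refine Even.add ?_ ?_
    · have : ({b, b+1} : Finset ℕ) = {(b+1)-1, b+1} := by norm_num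
      rw [this] at hiT hjT ⊢
      exact pair_even (b+1) i j (by omega) hi hij hiT.1 hjT.1
    · exact ih hs.of_cons.of_cons (fun y hy => h1 y (by simp [hy])) i j hi hij hiT.2 hjT.2
  | case5 a b l hba ih =>
    intro hs h1 i j hi hij hiT hjT
    rw [gc_eq_skip a b l hba] at *
    have hb1 : 1 ≤ b := h1 b (by simp)
    have hab : b < a := List.rel_of_pairwise_cons hs (a' := b) (by simp)
    have hdisj : Disjoint ({a-1, a} : Finset ℕ) (galeCover (b :: l)) := by
      rw [Finset.disjoint_left]
      intro x hx hx2
      obtain ⟨z, hz, hxz⟩ := gc_le' (b :: l) x hx2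
      have hzb : z ≤ b := by
        rcases List.mem_cons.mp hz with h' | h'
        · omega
        · have := List.rel_of_pairwise_cons hs.of_cons (a' := z) h'; omega
      simp at hx; omega
    rw [filter_union_card hdisj]
    simp only [Finset.mem_union, not_or] at hiT hjT
    refine Even.add ?_ ?_
    · exact pair_even a i j (by omega) hi hij hiT.1 hjT.1
    · exact ih hs.of_cons (fun y hy => h1 y (by simp at hy ⊢; tauto)) i j hi hij hiT.2 hjT.2
theorem nat_ivt (f : ℕ → ℕ) (v : ℕ) :
    ∀ (k a : ℕ), (∀ j, a ≤ j → j < a + k → f j ≤ f (j+1) + 1) →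
      f (a + k) ≤ v → v ≤ f a → ∃ m, a ≤ m ∧ m ≤ a + k ∧ f m = v := by
  intro k
  induction k with
  | zero => intro a _ h1 h2; simp only [Nat.add_zero] at h1; exact ⟨a, le_rfl, by omega, by omega⟩
  | succ k ih =>
    intro a hst h1 h2
    by_cases hfa : f a = v
    · exact ⟨a, le_rfl, by omega, hfa⟩
    · have h3 : v ≤ f (a+1) := by
        have := hst a le_rfl (by omega); omega
      obtain ⟨m, hm1, hm2, hm3⟩ := ih (a+1)
        (fun j hj hj2 => hst j (by omega) (by omega))
        (by rw [show a + 1 + k = a + (k+1) by omega]; exact h1) h3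
      exact ⟨m, by omega, by omega, hm3⟩

theorem gale_pad (n d : ℕ) (hn : 2*d+1 ≤ n) (T0 : Finset ℕ)
    (hsub : T0 ⊆ Finset.Icc 1 n) (hc : T0.card ≤ 2*d+1)
    (he : ∀ i j : ℕ, 1 ≤ i → j ≤ n → i < j → i ∉ T0 → j ∉ T0 →
      Even ((T0.filter fun k => i < k ∧ k < j).card)) :
    ∃ T : Finset ℕ, GaleEven n T ∧ T.card = 2*d+1 ∧ T0 ⊆ T := by
  set f : ℕ → ℕ := fun m => (T0 ∪ Finset.Icc m n).card with hf
  have hstep : ∀ j, 1 ≤ j → j < 1 + n → f j ≤ f (j+1) + 1 := by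
    intro j _ _
    have hss : T0 ∪ Finset.Icc j n ⊆ insert j (T0 ∪ Finset.Icc (j+1) n) := by
      intro x hx
      rcases Finset.mem_union.mp hx with hx | hx
      · exact Finset.mem_insert_of_mem (Finset.mem_union_left _ hx)
      · rw [Finset.mem_Icc] at hx
        rcases eq_or_lt_of_le hx.1 with h | h
        · exact h ▸ Finset.mem_insert_self _ _
        · exact Finset.mem_insert_of_mem (Finset.mem_union_right _
            (Finset.mem_Icc.mpr ⟨h, hx.2⟩))
    calc f j ≤ (insert j (T0 ∪ Finset.Icc (j+1) n)).card := Finset.card_le_card hss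
      _ ≤ f (j+1) + 1 := Finset.card_insert_le _ _
  have hend : f (1 + n) ≤ 2*d+1 := by
    have : Finset.Icc (1+n) n = ∅ := Finset.Icc_eq_empty (by omega)
    simp only [hf, this, Finset.union_empty]; exact hc
  have hbeg : 2*d+1 ≤ f 1 := by
    have h1 : T0 ∪ Finset.Icc 1 n = Finset.Icc 1 n := Finset.union_eq_right.mpr hsub
    simp only [hf, h1, Nat.card_Icc]; omega
  obtain ⟨m, hm1, hm2, hm3⟩ := nat_ivt f (2*d+1) n 1 hstep hend hbeg
  refine ⟨T0 ∪ Finset.Icc m n, ⟨?_, ?_⟩, hm3, Finset.subset_union_left⟩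
  · exact Finset.union_subset hsub (Finset.Icc_subset_Icc hm1 le_rfl)
  · intro i hi j hj hiT hjT hij
    rw [Finset.mem_Icc] at hi hj
    have hjm : j < m := by
      by_contra hc'
      exact hjT (Finset.mem_union_right _ (Finset.mem_Icc.mpr ⟨by omega, hj.2⟩))
    have hfe : ((T0 ∪ Finset.Icc m n).filter fun k => i < k ∧ k < j)
        = T0.filter fun k => i < k ∧ k < j := by
      rw [Finset.filter_union, show ((Finset.Icc m n).filter fun k => i < k ∧ k < j) = ∅ by
        apply Finset.filter_false_of_mem
        intro k hk
        rw [Finset.mem_Icc] at hk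
        omega, Finset.union_empty]
    rw [hfe]
    exact he i j hi.1 hj.2 hij (fun h => hiT (Finset.mem_union_left _ h))
      (fun h => hjT (Finset.mem_union_left _ h))
theorem gc_pack (n : ℕ) (S' : Finset ℕ) (hsub : S' ⊆ Finset.Icc 1 n) :
    ∃ T0 : Finset ℕ, S' ⊆ T0 ∧ T0 ⊆ Finset.Icc 1 n ∧ T0.card ≤ 2 * S'.card ∧
      ((1 ∈ S' ∨ ∃ x, x ∈ S' ∧ x + 1 ∈ S') → T0.card + 1 ≤ 2 * S'.card) ∧
      (∀ i j : ℕ, 1 ≤ i → i < j → i ∉ T0 → j ∉ T0 →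
        Even ((T0.filter fun k => i < k ∧ k < j).card)) := by
  set l : List ℕ := (S'.sort (· ≤ ·)).reverse with hl
  have hmem : ∀ x, x ∈ l ↔ x ∈ S' := by
    intro x; rw [hl, List.mem_reverse, Finset.mem_sort]
  have hsorted : l.Pairwise (· > ·) := by
    rw [hl]
    have := S'.sortedLT_sort.pairwise
    exact List.pairwise_reverse.mpr this
  have hpos : ∀ x ∈ l, 1 ≤ x := by
    intro x hx
    have := hsub ((hmem x).mp hx)
    rw [Finset.mem_Icc] at this; exact this.1
  have hlen : l.length = S'.card := by
    rw [hl, List.length_reverse, Finset.length_sort]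
  refine ⟨galeCover l, ?_, ?_, ?_, ?_, ?_⟩
  · intro x hx; exact gc_self_mem l x ((hmem x).mpr hx)
  · intro x hx
    obtain ⟨z, hz, hxz⟩ := gc_le' l x hx
    have hz' := hsub ((hmem z).mp hz)
    rw [Finset.mem_Icc] at hz' ⊢
    exact ⟨gc_ge l hsorted hpos x hx, le_trans hxz hz'.2⟩
  · rw [← hlen]; exact gc_card_le l
  · intro h
    rw [← hlen]
    apply gc_card_lt l hsorted hpos
    rcases h with h | ⟨x, hx, hx1⟩
    · exact Or.inl ((hmem 1).mpr h)
    · exact Or.inr ⟨x, (hmem x).mpr hx, (hmem (x+1)).mpr hx1⟩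
  · exact gc_even l hsorted hpos


theorem gale_forward (d n : ℕ) (S T : Finset ℕ) (hS : S ⊆ Finset.Icc 1 n)
    (hcard : S.card = d + 1) (hTsub : T ⊆ Finset.Icc 1 n)
    (hgale : ∀ i ∈ Finset.Icc 1 n, ∀ j ∈ Finset.Icc 1 n, i ∉ T → j ∉ T → i < j →
      Even (T.filter fun k => i < k ∧ k < j).card)
    (hTcard : T.card = 2 * d + 1) (hST : S ⊆ T)
    (h1S : 1 ∉ S) (hnS : n ∉ S) (hcons : ∀ i, i ∈ S → i + 1 ∉ S) : False := by
  -- bounds on elements of S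
  have hmemS : ∀ s ∈ S, 2 ≤ s ∧ s + 1 ≤ n := by
    intro s hs
    have h := hS hs; rw [Finset.mem_Icc] at h
    constructor
    · rcases Nat.lt_or_ge s 2 with h2 | h2
      · interval_cases s
        · omega
        · exact absurd hs h1S
      · exact h2
    · rcases Nat.lt_or_ge s n with h2 | h2
      · omega
      · have : s = n := by omega
        exact absurd (this ▸ hs) hnS
  -- the generic counting contradiction
  have hbound : ∀ p : ℕ → ℕ, (∀ s ∈ S, p s ∈ T) → Set.InjOn p S →
      (∀ s ∈ S, p s ∉ S) → False := by
    intro p hmap hinj hdisj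
    have hdj : Disjoint S (S.image p) := by
      rw [Finset.disjoint_right]
      intro x hx
      obtain ⟨s, hs, hps⟩ := Finset.mem_image.mp hx
      exact fun hxS => hdisj s hs (hps ▸ hxS)
    have hsub2 : S ∪ S.image p ⊆ T := by
      apply Finset.union_subset hST
      intro x hx
      obtain ⟨s, hs, hps⟩ := Finset.mem_image.mp hx
      exact hps ▸ hmap s hs
    have hc1 : (S ∪ S.image p).card = S.card + (S.image p).card :=
      Finset.card_union_of_disjoint hdj
    have hc2 : (S.image p).card = S.card := Finset.card_image_of_injOn hinj
    have := Finset.card_le_card hsub2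
    omega
  set c : ℕ → ℕ := fun x => (T.filter (· ≤ x)).card with hc
  -- step lemmas
  have hstep1 : ∀ x : ℕ, x + 1 ∈ T → c (x+1) = c x + 1 := by
    intro x hx
    have : T.filter (· ≤ x + 1) = insert (x+1) (T.filter (· ≤ x)) := by
      ext k
      simp only [Finset.mem_filter, Finset.mem_insert]
      constructor
      · rintro ⟨hk, hk2⟩
        rcases Nat.eq_or_lt_of_le hk2 with h | h
        · exact Or.inl h
        · exact Or.inr ⟨hk, by omega⟩
      · rintro (h | ⟨hk, hk2⟩)
        · exact ⟨h ▸ hx, by omega⟩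
        · exact ⟨hk, by omega⟩
    rw [hc]
    simp only [this]
    rw [Finset.card_insert_of_notMem (by simp only [Finset.mem_filter, not_and]; intro _; omega)]
  have hstep2 : ∀ x : ℕ, x + 1 ∉ T → c (x+1) = c x := by
    intro x hx
    have : T.filter (· ≤ x + 1) = T.filter (· ≤ x) := by
      ext k
      simp only [Finset.mem_filter]
      constructor
      · rintro ⟨hk, hk2⟩
        refine ⟨hk, ?_⟩
        have : k ≠ x + 1 := fun h => hx (h ▸ hk)
        omega
      · rintro ⟨hk, hk2⟩; exact ⟨hk, by omega⟩
    simp only [hc, this]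
  -- parity is constant on non-elements
  have hparity : ∀ i ∈ Finset.Icc 1 n, ∀ j ∈ Finset.Icc 1 n, i ∉ T → j ∉ T →
      c i % 2 = c j % 2 := by
    have key : ∀ i ∈ Finset.Icc 1 n, ∀ j ∈ Finset.Icc 1 n, i ∉ T → j ∉ T → i < j →
        c i % 2 = c j % 2 := by
      intro i hi j hj hiT hjT hij
      have hsplit : T.filter (· ≤ j) =
          T.filter (· ≤ i) ∪ T.filter (fun k => i < k ∧ k < j) := by
        ext k
        simp only [Finset.mem_filter, Finset.mem_union]
        constructor
        · rintro ⟨hk, hkj⟩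
          by_cases h : k ≤ i
          · exact Or.inl ⟨hk, h⟩
          · have : k ≠ j := fun he => hjT (he ▸ hk)
            exact Or.inr ⟨hk, by omega, by omega⟩
        · rintro (⟨hk, h⟩ | ⟨hk, h1, h2⟩)
          · exact ⟨hk, by omega⟩
          · exact ⟨hk, by omega⟩
      have hdj : Disjoint (T.filter (· ≤ i)) (T.filter (fun k => i < k ∧ k < j)) := by
        rw [Finset.disjoint_left]
        intro x hx hx2
        simp only [Finset.mem_filter] at hx hx2
        omega
      have hcs : c j = c i + (T.filter (fun k => i < k ∧ k < j)).card := by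
        rw [hc]
        simp only [hsplit]
        exact Finset.card_union_of_disjoint hdj
      obtain ⟨t, ht⟩ := hgale i hi j hj hiT hjT hij
      omega
    intro i hi j hj hiT hjT
    rcases lt_trichotomy i j with h | h | h
    · exact key i hi j hj hiT hjT h
    · rw [h]
    · exact (key j hj i hi hjT hiT h).symm
  by_cases hj0 : ∃ j0, j0 ∈ Finset.Icc 1 n ∧ j0 ∉ T
  · obtain ⟨j0, hj0m, hj0T⟩ := hj0
    set δ := c j0 % 2 with hδ
    have hFactA : ∀ j ∈ Finset.Icc 1 n, j ∉ T → c j % 2 = δ := by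
      intro j hj hjT
      exact hparity j hj j0 hj0m hjT hj0T
    set p : ℕ → ℕ := fun s => if c s % 2 = δ then s - 1 else s + 1 with hp
    have hmap : ∀ s ∈ S, p s ∈ T := by
      intro s hs
      obtain ⟨hs2, hsn⟩ := hmemS s hs
      by_cases hcs : c s % 2 = δ
      · simp only [hp, if_pos hcs]
        by_contra hsT
        have h1 : s - 1 ∈ Finset.Icc 1 n := by rw [Finset.mem_Icc]; omega
        have h2 := hFactA (s-1) h1 hsT
        have e : s - 1 + 1 = s := by omega
        have h3 : c (s - 1 + 1) = c (s-1) + 1 := hstep1 (s-1) (by rw [e]; exact hST hs)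
        rw [e] at h3
        omega
      · simp only [hp, if_neg hcs]
        by_contra hsT
        have h1 : s + 1 ∈ Finset.Icc 1 n := by rw [Finset.mem_Icc]; omega
        have h2 := hFactA (s+1) h1 hsT
        have h3 : c (s+1) = c s := hstep2 s hsT
        omega
    have hinj : Set.InjOn p S := by
      intro s hs t ht heq
      simp only [Finset.mem_coe] at hs ht
      obtain ⟨hs2, hsn⟩ := hmemS s hs
      obtain ⟨ht2, htn⟩ := hmemS t ht
      by_contra hne
      have haux : ∀ u v : ℕ, u ∈ S → v ∈ S → c u % 2 = δ → ¬ (c v % 2 = δ) →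
          u - 1 = v + 1 → False := by
        intro u v hu hv hcu hcv huv
        obtain ⟨hu2, hun⟩ := hmemS u hu
        have hu' : u = v + 2 := by omega
        have hv1T : v + 1 ∈ T := by
          have := hmap v hv
          simp only [hp, if_neg hcv] at this
          exact this
        have huT : u ∈ T := hST hu
        have e1 : c (v+1) = c v + 1 := hstep1 v hv1T
        have e2 : c (v+2) = c (v+1) + 1 := hstep1 (v+1) (by rw [← hu']; exact huT)
        rw [hu'] at hcu
        omega
      by_cases hcs : c s % 2 = δ <;> by_cases hct : c t % 2 = δ
      · simp only [hp, if_pos hcs, if_pos hct] at heq; omega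
      · simp only [hp, if_pos hcs, if_neg hct] at heq
        exact haux s t hs ht hcs hct heq
      · simp only [hp, if_neg hcs, if_pos hct] at heq
        exact haux t s ht hs hct hcs heq.symm
      · simp only [hp, if_neg hcs, if_neg hct] at heq; omega
    have hdisj : ∀ s ∈ S, p s ∉ S := by
      intro s hs hps
      obtain ⟨hs2, hsn⟩ := hmemS s hs
      by_cases hcs : c s % 2 = δ
      · simp only [hp, if_pos hcs] at hps
        have := hcons (s-1) hps
        have e : s - 1 + 1 = s := by omega
        rw [e] at this
        exact this hs
      · simp only [hp, if_neg hcs] at hps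
        exact hcons s hs hps
    exact hbound p hmap hinj hdisj
  · push_neg at hj0
    have hmap : ∀ s ∈ S, s + 1 ∈ T := by
      intro s hs
      obtain ⟨hs2, hsn⟩ := hmemS s hs
      exact hj0 (s+1) (Finset.mem_Icc.mpr ⟨by omega, hsn⟩)
    have hinj : Set.InjOn (· + 1) S := fun a _ b _ h => Nat.succ_injective h
    exact hbound (· + 1) hmap hinj (fun s hs h => hcons s hs h)


/-- A (d+1)-subset S of [n] is the vertex set of a d-face of the cyclic polytope
C_{2d+1}(n), i.e. is contained in a Gale-even (2d+1)-subset, iff 1 ∈ S, or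
n ∈ S, or S contains two consecutive elements. -/
theorem stmt_8 (d n : ℕ) (hd : 1 ≤ d) (hn : 2 * d + 1 ≤ n) (S : Finset ℕ)
    (hS : S ⊆ Finset.Icc 1 n) (hcard : S.card = d + 1) :
    (∃ T : Finset ℕ, GaleEven n T ∧ T.card = 2 * d + 1 ∧ S ⊆ T) ↔
      (1 ∈ S ∨ n ∈ S ∨ ∃ i, i ∈ S ∧ i + 1 ∈ S) := by
  constructor
  · rintro ⟨T, ⟨hTsub, hgale⟩, hTcard, hST⟩
    by_contra hcon
    push_neg at hcon
    obtain ⟨h1S, hnS, hcons⟩ := hcon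
    exact gale_forward d n S T hS hcard hTsub hgale hTcard hST h1S hnS
      (fun i hi => hcons i hi)
  · intro h
    by_cases hnS : n ∈ S
    · set S' := S.erase n with hS'
      have hsub' : S' ⊆ Finset.Icc 1 n := (Finset.erase_subset _ _).trans hS
      obtain ⟨T0, hT0S, hT0sub, hT0card, _, hT0even⟩ := gc_pack n S' hsub'
      have hc' : S'.card = d := by rw [hS', Finset.card_erase_of_mem hnS, hcard]; omega
      set T1 := insert n T0 with hT1
      have hT1sub : T1 ⊆ Finset.Icc 1 n :=
        Finset.insert_subset (Finset.mem_Icc.mpr ⟨by omega, le_rfl⟩) hT0sub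
      have hT1card : T1.card ≤ 2 * d + 1 := by
        have h1 : T1.card ≤ T0.card + 1 := by
          rw [hT1]; exact Finset.card_insert_le n T0
        have h2 : T0.card ≤ 2 * d := by rw [hc'] at hT0card; exact hT0card
        omega
      have hT1even : ∀ i j : ℕ, 1 ≤ i → j ≤ n → i < j → i ∉ T1 → j ∉ T1 →
          Even ((T1.filter fun k => i < k ∧ k < j).card) := by
        intro i j hi hjn hij hiT hjT
        have he : T1.filter (fun k => i < k ∧ k < j) =
            T0.filter (fun k => i < k ∧ k < j) := by
          rw [hT1, Finset.filter_insert, if_neg (by omega)]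
        rw [he]
        exact hT0even i j hi hij (fun hh => hiT (Finset.mem_insert_of_mem hh))
          (fun hh => hjT (Finset.mem_insert_of_mem hh))
      obtain ⟨T, hg, hcT, hsubT⟩ := gale_pad n d hn T1 hT1sub hT1card hT1even
      refine ⟨T, hg, hcT, ?_⟩
      intro s hs
      by_cases hsn : s = n
      · exact hsubT (hsn ▸ Finset.mem_insert_self n T0)
      · exact hsubT (Finset.mem_insert_of_mem (hT0S (Finset.mem_erase.mpr ⟨hsn, hs⟩)))
    · have h' : 1 ∈ S ∨ ∃ x, x ∈ S ∧ x + 1 ∈ S := by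
        rcases h with h | h | h
        · exact Or.inl h
        · exact absurd h hnS
        · exact Or.inr h
      obtain ⟨T0, hT0S, hT0sub, _, hT0card, hT0even⟩ := gc_pack n S hS
      have hc0 : T0.card ≤ 2 * d + 1 := by
        have := hT0card h'
        rw [hcard] at this
        omega
      obtain ⟨T, hg, hcT, hsubT⟩ := gale_pad n d hn T0 hT0sub hc0
        (fun i j hi _ hij => hT0even i j hi hij)
      exact ⟨T, hg, hcT, hT0S.trans hsubT⟩
end

section
/- Let d ≥ 1 and n ≥ 2d+3. Let K be the d-skeleton of the boundary complex of the cyclic polytope C_{2d+1}(n), i.e., the simplicial complex of all subsets S ⊆ [n] with |S| ≤ d+1 that are contained in some Gale-even (2d+1)-subset of [n], and let M be a missing d-face of C_{2d+1}(n), i.e., a (d+1)-element subset of [n] not contained in any Gale-even (2d+1)-subset. Then (Δ_{2d+2})^{≤d}, the d-skeleton of the (2d+2)-dimensional simplex, is a minor of K ∪ {M}. -/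
open Classical in
/-- The d-skeleton of the boundary complex of the cyclic polytope C_{2d+1}(n):
all subsets of [n] of cardinality at most d+1 contained in some Gale-even
(2d+1)-subset of [n]. -/
noncomputable def cycSkeleton (d n : ℕ) : Finset (Finset ℕ) :=
  (Finset.Icc 1 n).powerset.filter fun S =>
    S.card ≤ d + 1 ∧ ∃ T : Finset ℕ, GaleEven n T ∧ T.card = 2 * d + 1 ∧ S ⊆ T

/-- `M` is a missing face of `K`: `M ∉ K` but every proper subset of `M` is in `K`. -/
def MissingFace (K : Finset (Finset ℕ)) (M : Finset ℕ) : Prop :=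
  M ∉ K ∧ ∀ F ⊂ M, F ∈ K

/-- The complex obtained from `K` by identifying the vertex `u` with `v`:
{F ∈ K : u ∉ F} ∪ {(F ∖ {u}) ∪ {v} : F ∈ K, u ∈ F}. -/
def contractVerts (K : Finset (Finset ℕ)) (u v : ℕ) : Finset (Finset ℕ) :=
  K.filter (fun F => u ∉ F) ∪ (K.filter fun F => u ∈ F).image fun F => insert v (F.erase u)

/-- `L` is obtained from `K` by an admissible contraction: identification of two
distinct vertices u, v of K not both contained in any missing k-face of K with
k ≤ dim K (i.e. of cardinality at most dim K + 1 = sup of simplex cardinalities). -/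
def AdmissibleContraction (K L : Finset (Finset ℕ)) : Prop :=
  ∃ u v : ℕ, u ≠ v ∧ {u} ∈ K ∧ {v} ∈ K ∧
    (∀ M : Finset ℕ, M.card ≤ K.sup Finset.card → MissingFace K M → ¬(u ∈ M ∧ v ∈ M)) ∧
    L = contractVerts K u v

/-- `L` is obtained from `K` by a deletion, i.e. `L` is a subcomplex of `K`. -/
def Deletion (K L : Finset (Finset ℕ)) : Prop :=
  L ⊆ K ∧ ∀ F ∈ L, ∀ G ⊆ F, G ∈ L

/-- One minor step: a deletion or an admissible contraction. -/
def MinorStep (K L : Finset (Finset ℕ)) : Prop :=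
  Deletion K L ∨ AdmissibleContraction K L



section AuxStmt9
open Finset

/-- pair starts covering a sorted list -/
def pairsOf : List ℕ → Finset ℕ
  | [] => ∅
  | a :: l => insert a (pairsOf (l.erase (a+1)))
termination_by l => l.length
decreasing_by simp_wf; exact List.length_erase_le

lemma pairsOf_subset : ∀ l : List ℕ, ∀ q ∈ pairsOf l, q ∈ l
  | [], q, hq => by simp [pairsOf] at hq
  | a :: l, q, hq => by
    rw [pairsOf] at hq
    rcases Finset.mem_insert.1 hq with h | h
    · exact h ▸ List.mem_cons_self
    · exact List.mem_cons_of_mem _ (List.mem_of_mem_erase (pairsOf_subset _ q h))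
termination_by l => l.length
decreasing_by simp_wf; exact List.length_erase_le

lemma pairsOf_card : ∀ l : List ℕ, (pairsOf l).card ≤ l.length
  | [] => by simp [pairsOf]
  | a :: l => by
    rw [pairsOf]
    calc (insert a (pairsOf (l.erase (a+1)))).card ≤ (pairsOf (l.erase (a+1))).card + 1 :=
      Finset.card_insert_le _ _
    _ ≤ (l.erase (a+1)).length + 1 := by exact Nat.add_le_add_right (pairsOf_card _) 1
    _ ≤ l.length + 1 := Nat.add_le_add_right (List.length_erase_le) 1
    _ = (a :: l).length := by simp
termination_by l => l.length
decreasing_by simp_wf; exact List.length_erase_le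

lemma pairsOf_card_merge : ∀ l : List ℕ, l.Pairwise (· < ·) →
    (∃ k, k ∈ l ∧ k + 1 ∈ l) → (pairsOf l).card + 1 ≤ l.length
  | [], _, h => by simp at h
  | a :: l, hs, ⟨k, hk, hk1⟩ => by
    rw [pairsOf]
    by_cases hmem : a + 1 ∈ l
    · calc (insert a (pairsOf (l.erase (a+1)))).card + 1
          ≤ ((pairsOf (l.erase (a+1))).card + 1) + 1 :=
            Nat.add_le_add_right (Finset.card_insert_le _ _) 1
      _ ≤ ((l.erase (a+1)).length + 1) + 1 := by
            exact Nat.add_le_add_right (Nat.add_le_add_right (pairsOf_card _) 1) 1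
      _ = (a :: l).length := by
            rw [List.length_erase_of_mem hmem]
            have : l.length ≠ 0 := by rintro h0; rw [List.length_eq_zero_iff] at h0; simp [h0] at hmem
            simp [Nat.succ_pred_eq_of_pos (Nat.pos_of_ne_zero this)]
            omega
    · -- the adjacent pair is inside l
      have ha_lt : ∀ x ∈ l, a < x := fun x hx => (List.pairwise_cons.1 hs).1 x hx
      have hka : k ≠ a := by
        rintro rfl
        rcases List.mem_cons.1 hk1 with h | h
        · omega
        · exact hmem h
      have hkl : k ∈ l := (List.mem_cons.1 hk).resolve_left hka
      have hk1l : k + 1 ∈ l := by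
        rcases List.mem_cons.1 hk1 with h | h
        · exfalso; have := ha_lt k hkl; omega
        · exact h
      have her : l.erase (a+1) = l := List.erase_of_not_mem hmem
      rw [her]
      have hIH : (pairsOf l).card + 1 ≤ l.length :=
        pairsOf_card_merge l (List.pairwise_cons.1 hs).2 ⟨k, hkl, hk1l⟩
      calc (insert a (pairsOf l)).card + 1 ≤ ((pairsOf l).card + 1) + 1 :=
        Nat.add_le_add_right (Finset.card_insert_le _ _) 1
      _ ≤ l.length + 1 := Nat.add_le_add_right hIH 1
      _ = (a :: l).length := by simp
termination_by l => l.length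
decreasing_by
  all_goals simp_wf
  all_goals try exact List.length_erase_le

lemma pairsOf_cover : ∀ l : List ℕ, ∀ x ∈ l, ∃ q ∈ pairsOf l, x = q ∨ x = q + 1
  | [], x, hx => by simp at hx
  | a :: l, x, hx => by
    rw [pairsOf]
    rcases List.mem_cons.1 hx with rfl | hxl
    · exact ⟨x, Finset.mem_insert_self _ _, Or.inl rfl⟩
    · by_cases hxa : x = a + 1
      · exact ⟨a, Finset.mem_insert_self _ _, Or.inr hxa⟩
      · obtain ⟨q, hq, hor⟩ := pairsOf_cover (l.erase (a+1)) x (List.mem_erase_of_ne hxa |>.2 hxl)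
        exact ⟨q, Finset.mem_insert_of_mem hq, hor⟩
termination_by l => l.length
decreasing_by
  all_goals simp_wf
  all_goals try exact List.length_erase_le

lemma pairsOf_sparse : ∀ l : List ℕ, l.Pairwise (· < ·) →
    ∀ q ∈ pairsOf l, ∀ q' ∈ pairsOf l, q < q' → q + 2 ≤ q'
  | [], _, q, hq, q', hq', hlt => by simp [pairsOf] at hq
  | a :: l, hs, q, hq, q', hq', hlt => by
    rw [pairsOf] at hq hq'
    have hal : ∀ x ∈ l, a < x := fun x hx => (List.pairwise_cons.1 hs).1 x hx
    have htail : ∀ r ∈ pairsOf (l.erase (a+1)), a + 2 ≤ r := by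
      intro r hr
      have hmem := pairsOf_subset _ _ hr
      have hnd : l.Nodup := (List.pairwise_cons.1 hs).2.nodup
      have hne : r ≠ a + 1 := (hnd.mem_erase_iff.1 hmem).1
      have hrl : r ∈ l := List.mem_of_mem_erase hmem
      have : a < r := hal r hrl
      rcases Nat.lt_or_ge r (a+2) with h | h
      · exfalso; exact hne (by omega)
      · exact h
    rcases Finset.mem_insert.1 hq with rfl | hq1
    · rcases Finset.mem_insert.1 hq' with rfl | hq1'
      · omega
      · exact htail q' hq1'
    · rcases Finset.mem_insert.1 hq' with rfl | hq1'
      · exact absurd (htail q hq1) (by omega)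
      · exact pairsOf_sparse (l.erase (a+1)) ((List.pairwise_cons.1 hs).2.erase _) q hq1 q' hq1' hlt
termination_by l => l.length
decreasing_by
  all_goals simp_wf
  all_goals try exact List.length_erase_le

/-- Master structure lemma: prefix ∪ disjoint pairs ∪ optional {n} is Gale-even. -/
lemma master_gale (n t : ℕ) (Q suf : Finset ℕ) (hn : 1 ≤ n) (ht : t ≤ n)
    (hsuf : suf ⊆ {n})
    (hQ : ∀ a ∈ Q, 1 ≤ a ∧ a + 1 ≤ n)
    (hsp : ∀ a ∈ Q, ∀ b ∈ Q, a < b → a + 2 ≤ b) :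
    GaleEven n (Finset.Icc 1 t ∪ Q.biUnion (fun a => {a, a + 1}) ∪ suf) := by
  set P := Q.biUnion (fun a => {a, a + 1}) with hP
  set T := Finset.Icc 1 t ∪ P ∪ suf with hT
  have hPmem : ∀ x, x ∈ P ↔ ∃ a ∈ Q, x = a ∨ x = a + 1 := by
    intro x
    simp [hP, Finset.mem_biUnion, Finset.mem_insert, Finset.mem_singleton]
  constructor
  · intro x hx
    rcases Finset.mem_union.1 hx with hx | hx
    · rcases Finset.mem_union.1 hx with hx | hx
      · have := Finset.mem_Icc.1 hx; exact Finset.mem_Icc.2 ⟨this.1, le_trans this.2 ht⟩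
      · obtain ⟨a, ha, hor⟩ := (hPmem x).1 hx
        have := hQ a ha
        rcases hor with rfl | rfl
        · exact Finset.mem_Icc.2 ⟨this.1, by omega⟩
        · exact Finset.mem_Icc.2 ⟨by omega, this.2⟩
    · have := hsuf hx; rw [Finset.mem_singleton] at this
      exact Finset.mem_Icc.2 ⟨by omega, by omega⟩
  · intro i hi j hj hiT hjT hij
    have hi1 : 1 ≤ i := (Finset.mem_Icc.1 hi).1
    have hjn : j ≤ n := (Finset.mem_Icc.1 hj).2
    have key : T.filter (fun k => i < k ∧ k < j)
        = (Q.filter (fun a => i < a ∧ a + 1 < j)).biUnion (fun a => {a, a + 1}) := by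
      ext k
      simp only [Finset.mem_filter, Finset.mem_biUnion, Finset.mem_insert, Finset.mem_singleton]
      constructor
      · rintro ⟨hkT, hik, hkj⟩
        have hknotpre : ¬ (k ∈ Finset.Icc 1 t) := by
          intro hk
          have hkt := (Finset.mem_Icc.1 hk).2
          have : i ∈ Finset.Icc 1 t := Finset.mem_Icc.2 ⟨hi1, by omega⟩
          exact hiT (Finset.mem_union_left _ (Finset.mem_union_left _ this))
        have hknotsuf : k ∉ suf := by
          intro hk; have := hsuf hk; rw [Finset.mem_singleton] at this; omega
        have hkP : k ∈ P := by
          rcases Finset.mem_union.1 hkT with h | h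
          · rcases Finset.mem_union.1 h with h | h
            · exact absurd h hknotpre
            · exact h
          · exact absurd h hknotsuf
        obtain ⟨a, ha, hor⟩ := (hPmem k).1 hkP
        refine ⟨a, ⟨ha, ?_, ?_⟩, hor⟩
        · -- i < a
          rcases hor with h | h
          · omega
          · rcases Nat.lt_or_ge i a with h2 | h2
            · exact h2
            · have hia : i = a := by omega
              exact absurd (Finset.mem_union_left _ (Finset.mem_union_right _
                ((hPmem i).2 ⟨a, ha, Or.inl hia⟩))) hiT
        · -- a + 1 < j
          rcases hor with h | h
          · rcases Nat.lt_or_ge (a+1) j with h2 | h2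
            · exact h2
            · have hj' : j = a + 1 := by omega
              exact absurd (Finset.mem_union_left _ (Finset.mem_union_right _
                ((hPmem j).2 ⟨a, ha, Or.inr hj'⟩))) hjT
          · omega
      · rintro ⟨a, ⟨ha, hia, haj⟩, hor⟩
        refine ⟨Finset.mem_union_left _ (Finset.mem_union_right _
          ((hPmem k).2 ⟨a, ha, hor⟩)), ?_, ?_⟩
        · rcases hor with rfl | rfl <;> omega
        · rcases hor with rfl | rfl <;> omega
    rw [key, Finset.card_biUnion]
    · have : ∀ a ∈ Q.filter (fun a => i < a ∧ a + 1 < j), ({a, a+1} : Finset ℕ).card = 2 := by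
        intro a _
        rw [Finset.card_insert_of_notMem (by simp), Finset.card_singleton]
      rw [Finset.sum_congr rfl this]
      simp [Finset.sum_const, mul_comm]
    · intro a ha b hb hab
      have ha' := Finset.mem_filter.1 ha |>.1
      have hb' := Finset.mem_filter.1 hb |>.1
      have : a + 2 ≤ b ∨ b + 2 ≤ a := by
        rcases Nat.lt_or_ge a b with h | h
        · exact Or.inl (hsp a ha' b hb' h)
        · have hba : b < a := by omega
          exact Or.inr (hsp b hb' a ha' hba)
      rw [Function.onFun, Finset.disjoint_left]
      intro x hx hx'
      simp only [Finset.mem_insert, Finset.mem_singleton] at hx hx'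
      omega

/-- Discrete intermediate value for prefix padding. -/
lemma ivt_prefix (n v : ℕ) (P : Finset ℕ) :
    ∀ t0, t0 ≤ n → (Finset.Icc 1 t0 ∪ P).card ≤ v → v ≤ (Finset.Icc 1 n ∪ P).card →
    ∃ t, t0 ≤ t ∧ t ≤ n ∧ (Finset.Icc 1 t ∪ P).card = v := by
  intro t0
  induction' hfuel : n - t0 with fuel ih generalizing t0
  · intro ht0 h1 h2
    have ht0n : n ≤ t0 := by omega
    have heq : t0 = n := le_antisymm ht0 ht0n
    subst heq
    exact ⟨t0, le_refl _, le_refl _, le_antisymm h1 h2⟩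
  · intro ht0 h1 h2
    by_cases heq : (Finset.Icc 1 t0 ∪ P).card = v
    · exact ⟨t0, le_refl _, by omega, heq⟩
    · have hnext : (Finset.Icc 1 (t0+1) ∪ P).card ≤ v := by
        have : Finset.Icc 1 (t0+1) ∪ P ⊆ insert (t0+1) (Finset.Icc 1 t0 ∪ P) := by
          intro x hx
          rcases Finset.mem_union.1 hx with hx | hx
          · have := Finset.mem_Icc.1 hx
            rcases Nat.lt_or_ge x (t0+1) with h | h
            · exact Finset.mem_insert_of_mem (Finset.mem_union_left _
                (Finset.mem_Icc.2 ⟨this.1, by omega⟩))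
            · have : x = t0 + 1 := by omega
              exact this ▸ Finset.mem_insert_self _ _
          · exact Finset.mem_insert_of_mem (Finset.mem_union_right _ hx)
        have := Finset.card_le_card this
        have h3 := Finset.card_insert_le (t0+1) (Finset.Icc 1 t0 ∪ P)
        omega
      have ht0n : t0 < n := by
        rcases Nat.lt_or_ge t0 n with h | h
        · exact h
        · exfalso
          have : Finset.Icc 1 n ⊆ Finset.Icc 1 t0 := Finset.Icc_subset_Icc_right h
          have hle : (Finset.Icc 1 n ∪ P).card ≤ (Finset.Icc 1 t0 ∪ P).card :=
            Finset.card_le_card (Finset.union_subset_union_left this)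
          omega
      obtain ⟨t, hta, htb, htc⟩ := ih (t0+1) (by omega) (by omega) hnext h2
      exact ⟨t, by omega, htb, htc⟩

/-- The key face-existence lemma. -/
lemma face_lemma (d n : ℕ) (hd : 1 ≤ d) (hn : 2*d+3 ≤ n) (S : Finset ℕ)
    (hS : S ⊆ Finset.Icc 1 n) (hc : S.card ≤ d+1)
    (hcase : S.card ≤ d ∨ 1 ∈ S ∨ n ∈ S ∨ ∃ k, k ∈ S ∧ k+1 ∈ S) :
    ∃ T, GaleEven n T ∧ T.card = 2*d+1 ∧ S ⊆ T := by
  classical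
  set S' : Finset ℕ := (S.erase 1).erase n with hS'
  set l : List ℕ := S'.sort (· ≤ ·) with hl
  have hlmem : ∀ x, x ∈ l ↔ x ∈ S' := fun x => Finset.mem_sort _
  have hlsort : l.Pairwise (· < ·) := (Finset.sortedLT_sort _).pairwise
  set Q : Finset ℕ := pairsOf l with hQ
  have hQsub : ∀ a ∈ Q, a ∈ S' := fun a ha => (hlmem a).1 (pairsOf_subset l a ha)
  have hQS : ∀ a ∈ Q, a ∈ S := fun a ha =>
    Finset.mem_of_mem_erase (Finset.mem_of_mem_erase (hQsub a ha))
  have hQr : ∀ a ∈ Q, 1 ≤ a ∧ a + 1 ≤ n := by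
    intro a ha
    have h1 := Finset.mem_Icc.1 (hS (hQS a ha))
    have hne : a ≠ n := (Finset.mem_erase.1 (hQsub a ha)).1
    exact ⟨h1.1, by omega⟩
  have hsp : ∀ a ∈ Q, ∀ b ∈ Q, a < b → a + 2 ≤ b :=
    fun a ha b hb hab => pairsOf_sparse l hlsort a ha b hb hab
  set suf : Finset ℕ := if n ∈ S then {n} else ∅ with hsufdef
  have hsuf : suf ⊆ {n} := by
    rw [hsufdef]; split <;> simp
  set t0 : ℕ := if 1 ∈ S then 1 else 0 with ht0def
  set P : Finset ℕ := Q.biUnion (fun a => {a, a + 1}) ∪ suf with hPdef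
  -- cardinalities
  have hcardS' : S'.card + (if 1 ∈ S then 1 else 0) + (if n ∈ S then 1 else 0) = S.card := by
    have h1n : (1 : ℕ) ≠ n := by omega
    rw [hS']
    have her1 : ∀ h1 : 1 ∈ S, (S.erase 1).card + 1 = S.card := fun h1 => by
      rw [Finset.card_erase_of_mem h1]
      have : 1 ≤ S.card := Finset.card_pos.2 ⟨1, h1⟩
      omega
    by_cases h1 : 1 ∈ S <;> by_cases h2 : n ∈ S
    · have hn2 : n ∈ S.erase 1 := Finset.mem_erase.2 ⟨Ne.symm h1n, h2⟩
      have e2 : ((S.erase 1).erase n).card + 1 = (S.erase 1).card := by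
        rw [Finset.card_erase_of_mem hn2]
        have : 1 ≤ (S.erase 1).card := Finset.card_pos.2 ⟨n, hn2⟩
        omega
      simp only [h1, h2, if_true]
      have := her1 h1
      omega
    · have : (S.erase 1).erase n = S.erase 1 :=
        Finset.erase_eq_of_notMem (fun hcon => h2 (Finset.mem_of_mem_erase hcon))
      rw [this]
      simp only [h1, h2, if_true, if_false]
      have := her1 h1
      omega
    · have h1' : S.erase 1 = S := Finset.erase_eq_of_notMem h1
      rw [h1']
      have hn2 : n ∈ S := h2
      have e2 : (S.erase n).card + 1 = S.card := by
        rw [Finset.card_erase_of_mem hn2]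
        have : 1 ≤ S.card := Finset.card_pos.2 ⟨n, hn2⟩
        omega
      simp only [h1, h2, if_true, if_false]
      omega
    · have h1' : S.erase 1 = S := Finset.erase_eq_of_notMem h1
      rw [h1', Finset.erase_eq_of_notMem h2]
      simp only [h1, h2, if_false]
      omega
  have hQlen : Q.card ≤ S'.card := by
    have := pairsOf_card l
    rwa [Finset.length_sort] at this
  have hkey : 2 * Q.card + t0 + suf.card ≤ 2*d+1 := by
    by_cases h1 : 1 ∈ S
    · have ht0 : t0 = 1 := by rw [ht0def]; simp [h1]
      rw [ht0]
      by_cases h2 : n ∈ S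
      · have hsufcard : suf.card = 1 := by rw [hsufdef]; simp [h2]
        simp only [h1, h2, if_true] at hcardS'
        omega
      · have hsufcard : suf.card = 0 := by rw [hsufdef]; simp [h2]
        simp only [h1, h2, if_true, if_false] at hcardS'
        omega
    · by_cases h2 : n ∈ S
      · simp only [ht0def, hsufdef, h1, h2, if_true, if_false]
        simp only [Finset.card_singleton]
        simp [h1, h2] at hcardS'
        omega
      · -- 1 ∉ S, n ∉ S
        have hSeq : S' = S := by
          rw [hS', Finset.erase_eq_of_notMem h1, Finset.erase_eq_of_notMem h2]
        simp only [ht0def, hsufdef, h1, h2, if_false]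
        simp only [Finset.card_empty]
        rcases hcase with h | h | h | ⟨k, hk, hk1⟩
        · omega
        · exact absurd h h1
        · exact absurd h h2
        · have hmerge : Q.card + 1 ≤ l.length := by
            apply pairsOf_card_merge l hlsort
            exact ⟨k, (hlmem k).2 (hSeq ▸ hk), (hlmem (k+1)).2 (hSeq ▸ hk1)⟩
          rw [Finset.length_sort, hSeq] at hmerge
          omega
  have hPcard : P.card ≤ 2 * Q.card + suf.card := by
    calc P.card ≤ (Q.biUnion (fun a => {a, a + 1})).card + suf.card := Finset.card_union_le _ _
    _ ≤ (∑ a ∈ Q, ({a, a+1} : Finset ℕ).card) + suf.card :=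
        Nat.add_le_add_right (Finset.card_biUnion_le) _
    _ ≤ 2 * Q.card + suf.card := by
        have : ∀ a ∈ Q, ({a, a+1} : Finset ℕ).card ≤ 2 := by
          intro a _
          apply le_trans (Finset.card_insert_le _ _)
          simp
        have := Finset.sum_le_sum this
        simp only [Finset.sum_const, smul_eq_mul] at this
        omega
  have hlow : (Finset.Icc 1 t0 ∪ P).card ≤ 2*d+1 := by
    calc (Finset.Icc 1 t0 ∪ P).card ≤ (Finset.Icc 1 t0).card + P.card := Finset.card_union_le _ _
    _ ≤ t0 + (2 * Q.card + suf.card) := by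
        have : (Finset.Icc 1 t0).card = t0 := by rw [Nat.card_Icc]; omega
        omega
    _ ≤ 2*d+1 := by omega
  have hhigh : 2*d+1 ≤ (Finset.Icc 1 n ∪ P).card := by
    have h1 : (Finset.Icc 1 n).card ≤ (Finset.Icc 1 n ∪ P).card :=
      Finset.card_le_card Finset.subset_union_left
    have h2 : (Finset.Icc 1 n).card = n := by rw [Nat.card_Icc]; omega
    omega
  have ht0n : t0 ≤ n := by rw [ht0def]; split <;> omega
  obtain ⟨t, htt0, htn, htcard⟩ := ivt_prefix n (2*d+1) P t0 ht0n hlow hhigh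
  refine ⟨Finset.Icc 1 t ∪ P, ?_, htcard, ?_⟩
  · have := master_gale n t Q suf (by omega) htn hsuf hQr hsp
    rwa [Finset.union_assoc] at this
  · intro x hx
    by_cases hx1 : x = 1
    · subst hx1
      have : t0 = 1 := by rw [ht0def]; simp [hx]
      exact Finset.mem_union_left _ (Finset.mem_Icc.2 ⟨le_refl _, by omega⟩)
    · by_cases hxn : x = n
      · subst hxn
        apply Finset.mem_union_right
        apply Finset.mem_union_right
        rw [hsufdef]; simp [hx]
      · have hxS' : x ∈ S' := by
          rw [hS']; exact Finset.mem_erase.2 ⟨hxn, Finset.mem_erase.2 ⟨hx1, hx⟩⟩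
        obtain ⟨q, hq, hor⟩ := pairsOf_cover l x ((hlmem x).2 hxS')
        apply Finset.mem_union_right
        apply Finset.mem_union_left
        apply Finset.mem_biUnion.2
        exact ⟨q, hq, by rcases hor with rfl | rfl <;> simp⟩


/-- Sequence of contractions `u ↦ u+1` along a list. -/
def contractSeq : List ℕ → Finset (Finset ℕ) → Finset (Finset ℕ)
  | [], B => B
  | u :: l, B => contractSeq l (contractVerts B u (u+1))

/-- The vertex map realized by the sequence of contractions. -/
def phiL (l : List ℕ) (x : ℕ) : ℕ :=
  l.foldl (fun y u => if y = u then u + 1 else y) x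

lemma phiL_nil (x : ℕ) : phiL [] x = x := rfl

lemma phiL_cons (u : ℕ) (l : List ℕ) (x : ℕ) :
    phiL (u :: l) x = phiL l (if x = u then u + 1 else x) := rfl

lemma phiL_not_mem : ∀ (l : List ℕ) (x : ℕ), x ∉ l → phiL l x = x
  | [], x, _ => rfl
  | u :: l, x, hx => by
    rw [phiL_cons, if_neg (by rintro rfl; exact hx (List.mem_cons_self))]
    exact phiL_not_mem l x (fun h => hx (List.mem_cons_of_mem _ h))

lemma phiL_mem_step : ∀ (l : List ℕ), l.Pairwise (· < ·) → ∀ x ∈ l, phiL l x = phiL l (x+1)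
  | [], _, x, hx => by simp at hx
  | u :: l, hs, x, hx => by
    have hal : ∀ y ∈ l, u < y := fun y hy => (List.pairwise_cons.1 hs).1 y hy
    rcases List.mem_cons.1 hx with rfl | hxl
    · rw [phiL_cons, if_pos rfl, phiL_cons, if_neg (by omega)]
    · have hxu : x ≠ u := by have := hal x hxl; omega
      have hx1u : x + 1 ≠ u := by have := hal x hxl; omega
      rw [phiL_cons, if_neg hxu, phiL_cons, if_neg hx1u]
      exact phiL_mem_step l (List.pairwise_cons.1 hs).2 x hxl

lemma phiL_run (l : List ℕ) (hs : l.Pairwise (· < ·)) :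
    ∀ k a b, b - a ≤ k → a ≤ b → (∀ y, a ≤ y → y < b → y ∈ l) → b ∉ l → phiL l a = b := by
  intro k
  induction' k with k ih
  · intro a b hk hab _ hb
    have : a = b := by omega
    rw [this]
    exact phiL_not_mem l b hb
  · intro a b hk hab hy hb
    by_cases hab' : a = b
    · rw [hab']; exact phiL_not_mem l b hb
    · have hal : a ∈ l := hy a (le_refl _) (by omega)
      rw [phiL_mem_step l hs a hal]
      exact ih (a+1) b (by omega) (by omega) (fun y h1 h2 => hy y (by omega) h2) hb

lemma image_step (F : Finset ℕ) (u : ℕ) :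
    F.image (fun x => if x = u then u + 1 else x)
      = if u ∈ F then insert (u+1) (F.erase u) else F := by
  classical
  split
  · next h =>
    ext y
    simp only [Finset.mem_image, Finset.mem_insert, Finset.mem_erase]
    constructor
    · rintro ⟨x, hx, rfl⟩
      by_cases hxu : x = u
      · simp [hxu]
      · refine Or.inr ⟨?_, by simpa [hxu] using hx⟩
        simp only [if_neg hxu]
        exact hxu
    · rintro (rfl | ⟨hy, hyF⟩)
      · exact ⟨u, h, by simp⟩
      · exact ⟨y, hyF, by simp [hy]⟩
  · next h =>
    ext y
    simp only [Finset.mem_image]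
    constructor
    · rintro ⟨x, hx, rfl⟩
      rw [if_neg (by rintro rfl; exact h hx)]
      exact hx
    · intro hy
      exact ⟨y, hy, by rw [if_neg (by rintro rfl; exact h hy)]⟩

lemma contractSeq_mem : ∀ (l : List ℕ) (B : Finset (Finset ℕ)) (F : Finset ℕ),
    F ∈ B → F.image (phiL l) ∈ contractSeq l B
  | [], B, F, hF => by
    rw [contractSeq]
    have : F.image (phiL []) = F := by
      ext y; simp [phiL]
    rwa [this]
  | u :: l, B, F, hF => by
    rw [contractSeq]
    have himg : F.image (phiL (u :: l)) = (F.image (fun x => if x = u then u + 1 else x)).image (phiL l) := by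
      rw [Finset.image_image]
      rfl
    rw [himg]
    apply contractSeq_mem l
    rw [image_step]
    split
    · next h =>
      apply Finset.mem_union_right
      exact Finset.mem_image.2 ⟨F, Finset.mem_filter.2 ⟨hF, h⟩, rfl⟩
    · next h =>
      exact Finset.mem_union_left _ (Finset.mem_filter.2 ⟨hF, h⟩)

lemma reach (d n : ℕ) (hd : 1 ≤ d) (hn : 2*d+3 ≤ n) :
    ∀ (l : List ℕ) (Vc : Finset ℕ) (B : Finset (Finset ℕ)),
    l.Pairwise (· < ·) →
    (∀ u ∈ l, u ∈ Vc ∧ u + 1 ∈ Vc) →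
    Vc ⊆ Finset.Icc 1 n →
    (∀ S ∈ B, S ⊆ Vc ∧ S.card ≤ d + 1) →
    (∀ S : Finset ℕ, S ⊆ Vc → S.card ≤ d + 1 →
      (∃ T, GaleEven n T ∧ T.card = 2*d+1 ∧ S ⊆ T) → S ∈ B) →
    Relation.ReflTransGen MinorStep B (contractSeq l B) ∧
    (∀ S ∈ contractSeq l B, S ⊆ Vc \ l.toFinset ∧ S.card ≤ d + 1) := by
  intro l
  induction' l with u l' IH
  · intro Vc B _ _ _ hB1 _
    refine ⟨Relation.ReflTransGen.refl, ?_⟩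
    intro S hS
    rw [contractSeq] at hS
    simpa using hB1 S hS
  · intro Vc B hsort hul hVc hB1 hB2
    have hal : ∀ y ∈ l', u < y := fun y hy => (List.pairwise_cons.1 hsort).1 y hy
    set B' := contractVerts B u (u+1) with hB'def
    -- the contraction step is admissible
    have hstep : MinorStep B B' := by
      right
      refine ⟨u, u+1, by omega, ?_, ?_, ?_, rfl⟩
      · apply hB2 {u} (Finset.singleton_subset_iff.2 (hul u (List.mem_cons_self)).1)
          (by simp)
        apply face_lemma d n hd hn _ (Finset.singleton_subset_iff.2
          (hVc (hul u (List.mem_cons_self)).1)) (by simp)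
        exact Or.inl (by simp; omega)
      · apply hB2 {u+1} (Finset.singleton_subset_iff.2 (hul u (List.mem_cons_self)).2)
          (by simp)
        apply face_lemma d n hd hn _ (Finset.singleton_subset_iff.2
          (hVc (hul u (List.mem_cons_self)).2)) (by simp)
        exact Or.inl (by simp; omega)
      · rintro N hNcard ⟨hNout, hNsub⟩ ⟨huN, hvN⟩
        have hNVc : N ⊆ Vc := by
          intro w hw
          have hwProper : {w} ⊂ N := by
            refine Finset.ssubset_iff_of_subset (Finset.singleton_subset_iff.2 hw) |>.2 ?_
            by_cases hwu : w = u
            · exact ⟨u+1, hvN, by simp [hwu]⟩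
            · exact ⟨u, huN, by simp [Ne.symm hwu]⟩
          have := (hB1 _ (hNsub _ hwProper)).1
          exact Finset.singleton_subset_iff.1 this
        have hsup : B.sup Finset.card ≤ d + 1 :=
          Finset.sup_le (fun S hS => (hB1 S hS).2)
        have hface := face_lemma d n hd hn N (hNVc.trans hVc) (le_trans hNcard hsup)
          (Or.inr (Or.inr (Or.inr ⟨u, huN, hvN⟩)))
        exact hNout (hB2 N hNVc (le_trans hNcard hsup) hface)
    -- preservation of invariants
    have hB1' : ∀ S ∈ B', S ⊆ Vc.erase u ∧ S.card ≤ d + 1 := by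
      intro S hS
      rcases Finset.mem_union.1 hS with hS | hS
      · obtain ⟨hSB, huS⟩ := Finset.mem_filter.1 hS
        refine ⟨fun x hx => Finset.mem_erase.2 ⟨?_, (hB1 S hSB).1 hx⟩, (hB1 S hSB).2⟩
        rintro rfl; exact huS hx
      · obtain ⟨F, hFfil, rfl⟩ := Finset.mem_image.1 hS
        obtain ⟨hFB, huF⟩ := Finset.mem_filter.1 hFfil
        constructor
        · apply Finset.insert_subset
          · exact Finset.mem_erase.2 ⟨by omega, (hul u (List.mem_cons_self)).2⟩
          · exact (Finset.erase_subset_erase u (hB1 F hFB).1)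
        · have h1 : (F.erase u).card + 1 = F.card := by
            rw [Finset.card_erase_of_mem huF]
            have : 1 ≤ F.card := Finset.card_pos.2 ⟨u, huF⟩
            omega
          have := Finset.card_insert_le (u+1) (F.erase u)
          have := (hB1 F hFB).2
          omega
    have hB2' : ∀ S : Finset ℕ, S ⊆ Vc.erase u → S.card ≤ d + 1 →
        (∃ T, GaleEven n T ∧ T.card = 2*d+1 ∧ S ⊆ T) → S ∈ B' := by
      intro S hSVc hScard hface
      have hSVc' : S ⊆ Vc := hSVc.trans (Finset.erase_subset _ _)
      have huS : u ∉ S := fun h => (Finset.mem_erase.1 (hSVc h)).1 rfl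
      exact Finset.mem_union_left _ (Finset.mem_filter.2 ⟨hB2 S hSVc' hScard hface, huS⟩)
    have hul' : ∀ w ∈ l', w ∈ Vc.erase u ∧ w + 1 ∈ Vc.erase u := by
      intro w hw
      have h1 := hul w (List.mem_cons_of_mem _ hw)
      have h2 := hal w hw
      exact ⟨Finset.mem_erase.2 ⟨by omega, h1.1⟩, Finset.mem_erase.2 ⟨by omega, h1.2⟩⟩
    obtain ⟨hRT, hfin⟩ := IH (Vc.erase u) B' (List.pairwise_cons.1 hsort).2 hul'
      ((Finset.erase_subset _ _).trans hVc) hB1' hB2'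
    constructor
    · exact Relation.ReflTransGen.head hstep hRT
    · intro S hS
      obtain ⟨h1, h2⟩ := hfin S hS
      refine ⟨fun x hx => ?_, h2⟩
      have := h1 hx
      rw [Finset.mem_sdiff, Finset.mem_erase] at this
      rw [Finset.mem_sdiff, List.toFinset_cons, Finset.mem_insert]
      exact ⟨this.1.2, by push_neg; exact ⟨this.1.1, this.2⟩⟩

def pMfun (M : Finset ℕ) (m1 x : ℕ) : ℕ :=
  (insert m1 (M.filter (· < x))).max' (Finset.insert_nonempty _ _)

lemma pMfun_mem (M : Finset ℕ) (m1 x : ℕ) (h : m1 ∈ M) : pMfun M m1 x ∈ M := by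
  have := (insert m1 (M.filter (· < x))).max'_mem (Finset.insert_nonempty _ _)
  rcases Finset.mem_insert.1 this with h' | h'
  · rw [pMfun, h']; exact h
  · rw [pMfun]; exact (Finset.mem_filter.1 h').1

lemma pMfun_lt (M : Finset ℕ) (m1 x : ℕ) (h : m1 < x) : pMfun M m1 x < x := by
  have := (insert m1 (M.filter (· < x))).max'_mem (Finset.insert_nonempty _ _)
  rcases Finset.mem_insert.1 this with h' | h'
  · rw [pMfun, h']; exact h
  · rw [pMfun]; exact (Finset.mem_filter.1 h').2

lemma pMfun_max (M : Finset ℕ) (m1 x y : ℕ) (hy : y ∈ M) (h : y < x) : y ≤ pMfun M m1 x := by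
  rw [pMfun]
  apply Finset.le_max' (insert m1 (M.filter (· < x))) y
  exact Finset.mem_insert_of_mem (Finset.mem_filter.2 ⟨hy, h⟩)


end AuxStmt9

/-- For d ≥ 1, n ≥ 2d+3 and any missing d-face M of C_{2d+1}(n), the d-skeleton
(Δ_{2d+2})^{≤d} of the (2d+2)-simplex is a minor (in the sense of Nevo, up to
isomorphism) of the complex (∂C_{2d+1}(n))^{≤d} ∪ {M}. -/
theorem stmt_9 (d n : ℕ) (hd : 1 ≤ d) (hn : 2 * d + 3 ≤ n) (M : Finset ℕ)
    (hM : M ⊆ Finset.Icc 1 n) (hMcard : M.card = d + 1)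
    (hMmiss : ¬ ∃ T : Finset ℕ, GaleEven n T ∧ T.card = 2 * d + 1 ∧ M ⊆ T) :
    ∃ (L : Finset (Finset ℕ)) (W : Finset ℕ),
      Relation.ReflTransGen MinorStep (insert M (cycSkeleton d n)) L ∧
      W.card = 2 * d + 3 ∧
      L = W.powerset.filter fun F => F.card ≤ d + 1 := by
  classical
  have hMne : M.Nonempty := Finset.card_pos.1 (by omega)
  have hM1 : 1 ∉ M := fun h => hMmiss (face_lemma d n hd hn M hM (by omega) (Or.inr (Or.inl h)))
  have hMn : n ∉ M := fun h =>
    hMmiss (face_lemma d n hd hn M hM (by omega) (Or.inr (Or.inr (Or.inl h))))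
  have hMadj : ∀ k, ¬(k ∈ M ∧ k + 1 ∈ M) := fun k hk =>
    hMmiss (face_lemma d n hd hn M hM (by omega) (Or.inr (Or.inr (Or.inr ⟨k, hk.1, hk.2⟩))))
  set m1 := M.min' hMne with hm1def
  set m2 := M.max' hMne with hm2def
  have hm1M : m1 ∈ M := M.min'_mem hMne
  have hm2M : m2 ∈ M := M.max'_mem hMne
  have hm1lb : 2 ≤ m1 := by
    have h1 := (Finset.mem_Icc.1 (hM hm1M)).1
    have : m1 ≠ 1 := fun h => hM1 (h ▸ hm1M)
    omega
  have hm2ub : m2 < n := by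
    have h1 := (Finset.mem_Icc.1 (hM hm2M)).2
    have : m2 ≠ n := fun h => hMn (h ▸ hm2M)
    omega
  have hm1m2 : m1 ≤ m2 := M.min'_le _ hm2M
  have hMmin : ∀ x ∈ M, m1 ≤ x := fun x hx => M.min'_le _ hx
  have hMmax : ∀ x ∈ M, x ≤ m2 := fun x hx => M.le_max' _ hx
  set V : Finset ℕ := insert 1 (insert n (Finset.Icc m1 m2)) with hVdef
  set D : Finset ℕ := (Finset.Icc m1 m2).filter (fun u => u ∉ M ∧ u + 1 ∉ M) with hDdef
  set K' := insert M (cycSkeleton d n) with hK'def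
  have hcycmem : ∀ S : Finset ℕ, S ⊆ Finset.Icc 1 n → S.card ≤ d + 1 →
      (∃ T, GaleEven n T ∧ T.card = 2 * d + 1 ∧ S ⊆ T) → S ∈ cycSkeleton d n := by
    intro S h1 h2 h3
    rw [cycSkeleton]
    exact Finset.mem_filter.2 ⟨Finset.mem_powerset.2 h1, h2, h3⟩
  have hcycmem' : ∀ S ∈ cycSkeleton d n, S ⊆ Finset.Icc 1 n ∧ S.card ≤ d + 1 ∧
      ∃ T, GaleEven n T ∧ T.card = 2 * d + 1 ∧ S ⊆ T := by
    intro S hS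
    rw [cycSkeleton] at hS
    obtain ⟨h1, h2⟩ := Finset.mem_filter.1 hS
    exact ⟨Finset.mem_powerset.1 h1, h2.1, h2.2⟩
  have hVIcc : V ⊆ Finset.Icc 1 n := by
    intro x hx
    rw [hVdef] at hx
    rcases Finset.mem_insert.1 hx with rfl | hx
    · exact Finset.mem_Icc.2 ⟨le_refl _, by omega⟩
    · rcases Finset.mem_insert.1 hx with rfl | hx
      · exact Finset.mem_Icc.2 ⟨by omega, le_refl _⟩
      · have := Finset.mem_Icc.1 hx
        exact Finset.mem_Icc.2 ⟨by omega, by omega⟩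
  have hMV : M ⊆ V := by
    intro x hx
    rw [hVdef]
    exact Finset.mem_insert_of_mem (Finset.mem_insert_of_mem
      (Finset.mem_Icc.2 ⟨hMmin x hx, hMmax x hx⟩))
  set B0 := K'.filter (· ⊆ V) with hB0def
  -- K' is subset-closed
  have hK'closed : ∀ F ∈ K', ∀ G ⊆ F, G ∈ K' := by
    intro F hF G hGF
    rcases Finset.mem_insert.1 hF with rfl | hF
    · by_cases hGM : G = F
      · exact hGM ▸ Finset.mem_insert_self _ _
      · have hGss : G ⊂ F := Finset.ssubset_iff_subset_ne.2 ⟨hGF, hGM⟩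
        have hGcard : G.card ≤ d := by
          have := Finset.card_lt_card hGss
          omega
        apply Finset.mem_insert_of_mem
        exact hcycmem G (hGF.trans hM) (by omega)
          (face_lemma d n hd hn G (hGF.trans hM) (by omega) (Or.inl hGcard))
    · obtain ⟨h1, h2, T, hT⟩ := hcycmem' F hF
      apply Finset.mem_insert_of_mem
      exact hcycmem G (hGF.trans h1) (le_trans (Finset.card_le_card hGF) h2)
        ⟨T, hT.1, hT.2.1, hGF.trans hT.2.2⟩
  have hdel : MinorStep K' B0 := by
    left
    refine ⟨Finset.filter_subset _ _, ?_⟩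
    intro F hF G hGF
    obtain ⟨hFK, hFV⟩ := Finset.mem_filter.1 hF
    exact Finset.mem_filter.2 ⟨hK'closed F hFK G hGF, hGF.trans hFV⟩
  have hB0_1 : ∀ S ∈ B0, S ⊆ V ∧ S.card ≤ d + 1 := by
    intro S hS
    obtain ⟨hSK, hSV⟩ := Finset.mem_filter.1 hS
    refine ⟨hSV, ?_⟩
    rcases Finset.mem_insert.1 hSK with rfl | hS'
    · omega
    · exact (hcycmem' S hS').2.1
  have hB0_2 : ∀ S : Finset ℕ, S ⊆ V → S.card ≤ d + 1 →
      (∃ T, GaleEven n T ∧ T.card = 2 * d + 1 ∧ S ⊆ T) → S ∈ B0 := by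
    intro S h1 h2 h3
    exact Finset.mem_filter.2 ⟨Finset.mem_insert_of_mem (hcycmem S (h1.trans hVIcc) h2 h3), h1⟩
  set ds := D.sort (· ≤ ·) with hdsdef
  have hdsmem : ∀ x, x ∈ ds ↔ x ∈ D := fun x => Finset.mem_sort _
  have hdssort : ds.Pairwise (· < ·) := (Finset.sortedLT_sort _).pairwise
  have hdsToF : ds.toFinset = D := Finset.sort_toFinset _ _
  have hul : ∀ u ∈ ds, u ∈ V ∧ u + 1 ∈ V := by
    intro u hu
    obtain ⟨huIcc, huM, hu1M⟩ := Finset.mem_filter.1 ((hdsmem u).1 hu)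
    have h1 := Finset.mem_Icc.1 huIcc
    have hune : u ≠ m2 := fun h => huM (h ▸ hm2M)
    constructor
    · rw [hVdef]
      exact Finset.mem_insert_of_mem (Finset.mem_insert_of_mem huIcc)
    · rw [hVdef]
      exact Finset.mem_insert_of_mem (Finset.mem_insert_of_mem
        (Finset.mem_Icc.2 ⟨by omega, by omega⟩))
  obtain ⟨hRT, hfin⟩ := reach d n hd hn ds V B0 hdssort hul hVIcc hB0_1 hB0_2
  set Bf := contractSeq ds B0 with hBfdef
  set W : Finset ℕ := V \ D with hWdef
  have hDIcc : D ⊆ Finset.Icc m1 m2 := Finset.filter_subset _ _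
  have h1D : (1 : ℕ) ∉ D := fun h => by
    have := Finset.mem_Icc.1 (hDIcc h); omega
  have hnD : n ∉ D := fun h => by
    have := Finset.mem_Icc.1 (hDIcc h); omega
  have h1nIcc : (1 : ℕ) ∉ insert n (Finset.Icc m1 m2) := by
    intro h
    rcases Finset.mem_insert.1 h with h | h
    · omega
    · have := Finset.mem_Icc.1 h; omega
  have hnIcc : n ∉ Finset.Icc m1 m2 := fun h => by
    have := Finset.mem_Icc.1 h; omega
  -- the card of W
  have hWcard : W.card = 2 * d + 3 := by
    have hstep1 : W = insert 1 (insert n (Finset.Icc m1 m2 \ D)) := by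
      rw [hWdef, hVdef, Finset.insert_sdiff_of_notMem _ h1D,
        Finset.insert_sdiff_of_notMem _ hnD]
    have hcfilter : Finset.Icc m1 m2 \ D = (Finset.Icc m1 m2).filter (fun u => ¬(u ∉ M ∧ u + 1 ∉ M)) := by
      rw [hDdef, Finset.filter_not]
    have hCeq : (Finset.Icc m1 m2).filter (fun u => ¬(u ∉ M ∧ u + 1 ∉ M))
        = M ∪ (M.erase m1).image (· - 1) := by
      ext x
      simp only [Finset.mem_filter, Finset.mem_Icc, Finset.mem_union, Finset.mem_image,
        Finset.mem_erase]
      constructor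
      · rintro ⟨⟨hx1, hx2⟩, hx3⟩
        push_neg at hx3
        by_cases hxM : x ∈ M
        · exact Or.inl hxM
        · refine Or.inr ⟨x + 1, ⟨?_, hx3 hxM⟩, by omega⟩
          have := hMmin (x+1) (hx3 hxM)
          omega
      · rintro (hxM | ⟨y, ⟨hym1, hyM⟩, rfl⟩)
        · exact ⟨⟨hMmin x hxM, hMmax x hxM⟩, fun h => absurd hxM h.1⟩
        · have hy1 : m1 < y := lt_of_le_of_ne (hMmin y hyM) (Ne.symm hym1)
          have hy2 : y ≤ m2 := hMmax y hyM
          have hyy : y - 1 + 1 = y := by omega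
          refine ⟨⟨by omega, by omega⟩, fun h => absurd (hyy ▸ hyM) h.2⟩
    have hdisj : Disjoint M ((M.erase m1).image (· - 1)) := by
      rw [Finset.disjoint_left]
      rintro x hxM hximg
      obtain ⟨y, hy, rfl⟩ := Finset.mem_image.1 hximg
      obtain ⟨hym1, hyM⟩ := Finset.mem_erase.1 hy
      have hy1 : m1 < y := lt_of_le_of_ne (hMmin y hyM) (Ne.symm hym1)
      have hyy : y - 1 + 1 = y := by omega
      exact hMadj (y - 1) ⟨hxM, hyy ▸ hyM⟩
    have himgcard : ((M.erase m1).image (· - 1)).card = d := by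
      have hinj : Set.InjOn (· - 1) (M.erase m1 : Finset ℕ) := by
        intro a ha b hb hab
        simp only [Finset.coe_erase, Set.mem_diff, Finset.mem_coe, Set.mem_singleton_iff] at ha hb
        have ha1 : m1 < a := lt_of_le_of_ne (hMmin a ha.1) (Ne.symm ha.2)
        have hb1 : m1 < b := lt_of_le_of_ne (hMmin b hb.1) (Ne.symm hb.2)
        simp only at hab
        omega
      rw [Finset.card_image_of_injOn hinj, Finset.card_erase_of_mem hm1M, hMcard]
      omega
    have hIccD : (Finset.Icc m1 m2 \ D).card = 2 * d + 1 := by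
      rw [hcfilter, hCeq, Finset.card_union_of_disjoint hdisj, himgcard, hMcard]
      omega
    rw [hstep1]
    rw [Finset.card_insert_of_notMem, Finset.card_insert_of_notMem, hIccD]
    · intro h
      exact hnIcc (Finset.mem_sdiff.1 h).1
    · intro h
      rcases Finset.mem_insert.1 h with h | h
      · omega
      · exact h1nIcc (Finset.mem_insert_of_mem (Finset.mem_sdiff.1 h).1)
  refine ⟨Bf, W, Relation.ReflTransGen.head hdel hRT, hWcard, ?_⟩
  apply Finset.Subset.antisymm
  · intro S hS
    obtain ⟨h1, h2⟩ := hfin S hS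
    rw [hdsToF] at h1
    exact Finset.mem_filter.2 ⟨Finset.mem_powerset.2 h1, h2⟩
  · intro S hS
    obtain ⟨hSW', hScard⟩ := Finset.mem_filter.1 hS
    have hSW : S ⊆ W := Finset.mem_powerset.1 hSW'
    have hWsubV : W ⊆ V := Finset.sdiff_subset
    have hWfix : ∀ x ∈ W, phiL ds x = x := by
      intro x hx
      apply phiL_not_mem
      intro hxds
      exact (Finset.mem_sdiff.1 hx).2 ((hdsmem x).1 hxds)
    have himgfix : ∀ A : Finset ℕ, A ⊆ W → A.image (phiL ds) = A := by
      intro A hA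
      have : A.image (phiL ds) = A.image id :=
        Finset.image_congr (fun x hx => hWfix x (hA hx))
      rw [this, Finset.image_id]
    by_cases hface : ∃ T, GaleEven n T ∧ T.card = 2 * d + 1 ∧ S ⊆ T
    · have hF : S ∈ B0 := hB0_2 S (hSW.trans hWsubV) hScard hface
      have := contractSeq_mem ds B0 S hF
      rwa [himgfix S hSW] at this
    by_cases hSM : S = M
    · subst hSM
      have hF : S ∈ B0 := Finset.mem_filter.2 ⟨Finset.mem_insert_self _ _, hMV⟩
      have hMW : S ⊆ W := by
        intro x hx
        refine Finset.mem_sdiff.2 ⟨hMV hx, ?_⟩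
        intro hxD
        exact (Finset.mem_filter.1 hxD).2.1 hx
      have := contractSeq_mem ds B0 S hF
      rwa [himgfix S hMW] at this
    -- the hard case : S is a non-face different from M
    have hSIcc : S ⊆ Finset.Icc 1 n := hSW.trans (hWsubV.trans hVIcc)
    have hcard : S.card = d + 1 := by
      rcases Nat.lt_or_ge S.card (d + 1) with h | h
      · exact absurd (face_lemma d n hd hn S hSIcc hScard (Or.inl (by omega))) hface
      · omega
    have h1S : 1 ∉ S := fun h =>
      hface (face_lemma d n hd hn S hSIcc hScard (Or.inr (Or.inl h)))
    have hnS : n ∉ S := fun h =>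
      hface (face_lemma d n hd hn S hSIcc hScard (Or.inr (Or.inr (Or.inl h))))
    have hadjS : ∀ k, ¬(k ∈ S ∧ k + 1 ∈ S) := fun k hk =>
      hface (face_lemma d n hd hn S hSIcc hScard (Or.inr (Or.inr (Or.inr ⟨k, hk.1, hk.2⟩))))
    have hSIcc2 : ∀ x ∈ S, x ∈ Finset.Icc m1 m2 ∧ x ∉ D := by
      intro x hx
      have hxW := hSW hx
      rw [hWdef, Finset.mem_sdiff] at hxW
      obtain ⟨hxV, hxD⟩ := hxW
      rw [hVdef] at hxV
      rcases Finset.mem_insert.1 hxV with rfl | hxV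
      · exact absurd hx h1S
      · rcases Finset.mem_insert.1 hxV with rfl | hxV
        · exact absurd hx hnS
        · exact ⟨hxV, hxD⟩
    have hnext : ∀ x ∈ S, x ∉ M → x + 1 ∈ M := by
      intro x hx hxM
      by_contra h
      exact (hSIcc2 x hx).2 (Finset.mem_filter.2 ⟨(hSIcc2 x hx).1, hxM, h⟩)
    have hSMne : (S \ M).Nonempty := by
      rw [Finset.sdiff_nonempty]
      intro hsub
      exact hSM (Finset.eq_of_subset_of_card_le hsub (by omega))
    set r := (S \ M).max' hSMne with hrdef
    have hr : r ∈ S ∧ r ∉ M := by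
      have := Finset.mem_sdiff.1 ((S \ M).max'_mem hSMne)
      exact this
    have hrmax : ∀ y ∈ S, y ∉ M → y ≤ r := fun y h1 h2 =>
      Finset.le_max' _ _ (Finset.mem_sdiff.2 ⟨h1, h2⟩)
    have hr1M : r + 1 ∈ M := hnext r hr.1 hr.2
    have hpM_mem : ∀ x, pMfun M m1 x ∈ M := fun x => pMfun_mem M m1 x hm1M
    have hpM_lt : ∀ x, m1 < x → pMfun M m1 x < x := fun x hx => pMfun_lt M m1 x hx
    have hpM_max : ∀ x y, y ∈ M → y < x → y ≤ pMfun M m1 x := fun x y h1 h2 =>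
      pMfun_max M m1 x y h1 h2
    by_cases hA : ∃ x ∈ S, x ∉ M ∧ pMfun M m1 x ∈ S
    · obtain ⟨r0, hr0S, hr0M, hpS⟩ := hA
      have hr0Icc := Finset.mem_Icc.1 (hSIcc2 r0 hr0S).1
      have hr0m1 : m1 < r0 :=
        lt_of_le_of_ne hr0Icc.1 (fun h => hr0M (h ▸ hm1M))
      have hpm : pMfun M m1 r0 ∈ M := hpM_mem r0
      have hplt : pMfun M m1 r0 < r0 := hpM_lt r0 hr0m1
      have hpm1 : m1 ≤ pMfun M m1 r0 := hMmin _ hpm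
      set F := insert (pMfun M m1 r0 + 1) (S.erase r0) with hFdef
      have hFV : F ⊆ V := by
        apply Finset.insert_subset
        · rw [hVdef]
          exact Finset.mem_insert_of_mem (Finset.mem_insert_of_mem
            (Finset.mem_Icc.2 ⟨by omega, by omega⟩))
        · exact ((Finset.erase_subset _ _).trans (hSW.trans hWsubV))
      have hFIcc : F ⊆ Finset.Icc 1 n := hFV.trans hVIcc
      have hFcard : F.card ≤ d + 1 := by
        rw [hFdef]
        have h1 := Finset.card_insert_le (pMfun M m1 r0 + 1) (S.erase r0)
        have h2 : (S.erase r0).card + 1 = S.card := by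
          rw [Finset.card_erase_of_mem hr0S]
          omega
        omega
      have hpF : pMfun M m1 r0 ∈ F :=
        Finset.mem_insert_of_mem (Finset.mem_erase.2 ⟨by omega, hpS⟩)
      have hface2 := face_lemma d n hd hn F hFIcc hFcard
        (Or.inr (Or.inr (Or.inr ⟨pMfun M m1 r0, hpF, Finset.mem_insert_self _ _⟩)))
      have hFB0 : F ∈ B0 := hB0_2 F hFV hFcard hface2
      have himg := contractSeq_mem ds B0 F hFB0
      have hphip : phiL ds (pMfun M m1 r0 + 1) = r0 := by
        apply phiL_run ds hdssort (r0 - (pMfun M m1 r0 + 1)) (pMfun M m1 r0 + 1) r0 (le_refl _) (by omega)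
        · intro y h1 h2
          rw [hdsmem]
          refine Finset.mem_filter.2 ⟨Finset.mem_Icc.2 ⟨by omega, by omega⟩, ?_, ?_⟩
          · intro hyM
            have := hpM_max r0 y hyM (by omega)
            omega
          · intro hyM
            rcases Nat.lt_or_ge (y + 1) r0 with h | h
            · have := hpM_max r0 (y + 1) hyM h
              omega
            · have : y + 1 = r0 := by omega
              exact hr0M (this ▸ hyM)
        · intro hrds
          exact (hSIcc2 r0 hr0S).2 ((hdsmem r0).1 hrds)
      have himgF : F.image (phiL ds) = S := by
        rw [hFdef, Finset.image_insert,
          himgfix (S.erase r0) ((Finset.erase_subset _ _).trans hSW), hphip,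
          Finset.insert_erase hr0S]
      rwa [himgF] at himg
    · exfalso
      set ψ : ℕ → ℕ := fun x => if x ∈ M then x else pMfun M m1 x with hψdef
      have hmaps : ∀ x ∈ S, ψ x ∈ M.erase (r + 1) := by
        intro x hx
        by_cases hxM : x ∈ M
        · rw [hψdef]; simp only [if_pos hxM]
          refine Finset.mem_erase.2 ⟨?_, hxM⟩
          rintro rfl
          exact hadjS r ⟨hr.1, hx⟩
        · rw [hψdef]; simp only [if_neg hxM]
          refine Finset.mem_erase.2 ⟨?_, hpM_mem x⟩
          intro heq
          have hxm1 : m1 < x :=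
            lt_of_le_of_ne (Finset.mem_Icc.1 (hSIcc2 x hx).1).1 (fun h => hxM (h ▸ hm1M))
          have h1 : pMfun M m1 x < x := hpM_lt x hxm1
          have h2 : x ≤ r := hrmax x hx hxM
          omega
      have hinj2 : Set.InjOn ψ S := by
        intro a ha b hb heq
        have ha' : a ∈ S := Finset.mem_coe.1 ha
        have hb' : b ∈ S := Finset.mem_coe.1 hb
        by_cases haM : a ∈ M <;> by_cases hbM : b ∈ M
        · rw [hψdef] at heq; simpa [haM, hbM] using heq
        · exfalso
          rw [hψdef] at heq; simp only [if_pos haM, if_neg hbM] at heq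
          exact hA ⟨b, hb', hbM, heq ▸ ha'⟩
        · exfalso
          rw [hψdef] at heq; simp only [if_pos hbM, if_neg haM] at heq
          exact hA ⟨a, ha', haM, heq.symm ▸ hb'⟩
        · rw [hψdef] at heq; simp only [if_neg haM, if_neg hbM] at heq
          rcases lt_trichotomy a b with h | h | h
          · exfalso
            have ha1M : a + 1 ∈ M := hnext a ha' haM
            have hab1 : a + 1 ≠ b := fun hab => hadjS a ⟨ha', hab ▸ hb'⟩
            have h3 : a + 1 ≤ pMfun M m1 b := hpM_max b (a + 1) ha1M (by omega)
            have ham1 : m1 < a :=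
              lt_of_le_of_ne (Finset.mem_Icc.1 (hSIcc2 a ha').1).1 (fun hh => haM (hh ▸ hm1M))
            have h4 : pMfun M m1 a < a := hpM_lt a ham1
            omega
          · exact h
          · exfalso
            have hb1M : b + 1 ∈ M := hnext b hb' hbM
            have hab1 : b + 1 ≠ a := fun hab => hadjS b ⟨hb', hab ▸ ha'⟩
            have h3 : b + 1 ≤ pMfun M m1 a := hpM_max a (b + 1) hb1M (by omega)
            have hbm1 : m1 < b :=
              lt_of_le_of_ne (Finset.mem_Icc.1 (hSIcc2 b hb').1).1 (fun hh => hbM (hh ▸ hm1M))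
            have h4 : pMfun M m1 b < b := hpM_lt b hbm1
            omega
      have hcount := Finset.card_le_card_of_injOn ψ hmaps hinj2
      rw [Finset.card_erase_of_mem hr1M, hMcard] at hcount
      omega
end

section
/- If a simplicial complex K of dimension d is nice on [n], then d+2 ≤ n ≤ 2d+3. -/
/-- If a simplicial complex of dimension d is nice on [n] (for every F ⊆ [n],
exactly one of F and [n] ∖ F is a simplex), then d + 2 ≤ n ≤ 2d + 3. -/
theorem stmt_11 (n d : ℕ) (K : Finset (Finset ℕ))
    (hne : K.Nonempty)
    (hdown : ∀ F ∈ K, ∀ G ⊆ F, G ∈ K)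
    (hvert : ∀ F ∈ K, F ⊆ Finset.Icc 1 n)
    (hnice : ∀ F ⊆ Finset.Icc 1 n, (F ∈ K ↔ Finset.Icc 1 n \ F ∉ K))
    (hdim : ∀ F ∈ K, F.card ≤ d + 1)
    (hdim' : ∃ F ∈ K, F.card = d + 1) :
    d + 2 ≤ n ∧ n ≤ 2 * d + 3 := by
  have hcardIcc : (Finset.Icc 1 n).card = n := by simp
  -- ∅ ∈ K
  obtain ⟨G, hG⟩ := hne
  have hempty : (∅ : Finset ℕ) ∈ K := hdown G hG ∅ (Finset.empty_subset _)
  have hfull : Finset.Icc 1 n ∉ K := by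
    have := (hnice ∅ (Finset.empty_subset _)).mp hempty
    simpa using this
  obtain ⟨F, hF, hFcard⟩ := hdim'
  have hFsub := hvert F hF
  have hle : d + 1 ≤ n := by
    have := Finset.card_le_card hFsub
    omega
  constructor
  · -- d + 2 ≤ n
    by_contra h
    have hn : n = d + 1 := by omega
    have hFeq : F = Finset.Icc 1 n := by
      apply Finset.eq_of_subset_of_card_le hFsub
      omega
    exact hfull (hFeq ▸ hF)
  · -- n ≤ 2d + 3
    by_contra h
    have hn : 2 * d + 4 ≤ n := by omega
    set A : Finset ℕ := Finset.Icc 1 (d + 2) with hA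
    have hAsub : A ⊆ Finset.Icc 1 n := Finset.Icc_subset_Icc_right (by omega)
    have hAcard : A.card = d + 2 := by simp [hA]
    have hCcard : (Finset.Icc 1 n \ A).card = n - (d + 2) := by
      rw [Finset.card_sdiff_of_subset hAsub, hcardIcc, hAcard]
    have hCnot : Finset.Icc 1 n \ A ∉ K := by
      intro hmem
      have := hdim _ hmem
      omega
    have hAmem : A ∈ K := (hnice A hAsub).mpr hCnot
    have := hdim A hAmem
    omega
end

section
/- For 1 ≤ i ≤ s let K_i be a simplicial complex of dimension d_i that is nice on [n_i], and set d = (Σ_{i=1}^s d_i) + s − 1, the dimension of the join K_1 * K_2 * … * K_s. If (Σ_{i=1}^s n_i) − s − 2 = 2d, then n_i = 2d_i + 3 and K_i = (Δ_{2d_i+2})^{≤ d_i} for every 1 ≤ i ≤ s, i.e., each K_i consists of all subsets of [n_i] of cardinality at most d_i + 1. -/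
/-- Let K₁,…,Kₛ be simplicial complexes, Kᵢ of dimension dᵢ and nice on [nᵢ],
and let d = (Σ dᵢ) + s − 1 be the dimension of their join (expressed as
d + 1 = Σ (dᵢ + 1)). If (Σ nᵢ) − s − 2 = 2d, then nᵢ = 2dᵢ + 3 and
Kᵢ = (Δ_{2dᵢ+2})^{≤dᵢ}, the set of all subsets of [nᵢ] of cardinality
at most dᵢ + 1, for every i. -/
theorem stmt_13 (s : ℕ) (hs : 1 ≤ s) (K : Fin s → Finset (Finset ℕ))
    (nn dd : Fin s → ℕ) (d : ℕ)
    (hne : ∀ i, (K i).Nonempty)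
    (hdown : ∀ i, ∀ F ∈ K i, ∀ G ⊆ F, G ∈ K i)
    (hvert : ∀ i, ∀ F ∈ K i, F ⊆ Finset.Icc 1 (nn i))
    (hnice : ∀ i, ∀ F ⊆ Finset.Icc 1 (nn i), (F ∈ K i ↔ Finset.Icc 1 (nn i) \ F ∉ K i))
    (hdim : ∀ i, ∀ F ∈ K i, F.card ≤ dd i + 1)
    (hdim' : ∀ i, ∃ F ∈ K i, F.card = dd i + 1)
    (hd : d + 1 = ∑ i, (dd i + 1))
    (hsum : ∑ i, nn i = 2 * d + s + 2) :
    ∀ i, nn i = 2 * dd i + 3 ∧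
      K i = (Finset.Icc 1 (nn i)).powerset.filter fun F => F.card ≤ dd i + 1 := by
  -- Step 1: nn i ≤ 2 * dd i + 3 for every i
  have hub : ∀ i, nn i ≤ 2 * dd i + 3 := by
    intro i
    by_contra h
    push_neg at h
    -- pick a subset of cardinality dd i + 2
    obtain ⟨G, hG, hGcard⟩ :=
      Finset.exists_subset_card_eq (s := Finset.Icc 1 (nn i)) (n := dd i + 2)
        (by rw [Nat.card_Icc]; omega)
    have hcomp : (Finset.Icc 1 (nn i) \ G).card = nn i - (dd i + 2) := by
      rw [Finset.card_sdiff_of_subset hG, Nat.card_Icc, hGcard]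
      omega
    have hcompnot : Finset.Icc 1 (nn i) \ G ∉ K i := by
      intro hmem
      have := hdim i _ hmem
      rw [hcomp] at this
      omega
    have hGK : G ∈ K i := ((hnice i G hG).mpr (by simpa using hcompnot))
    have := hdim i G hGK
    omega
  -- Step 2: equality of sums forces nn i = 2 * dd i + 3
  have hsum' : ∑ i, nn i = ∑ i, (2 * dd i + 3) := by
    have h1 : ∑ i, (2 * dd i + 3) = 2 * (∑ i, (dd i + 1)) + s := by
      rw [Finset.mul_sum]
      have : ∀ i : Fin s, 2 * dd i + 3 = 2 * (dd i + 1) + 1 := fun i => by ring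
      simp only [this, Finset.sum_add_distrib, Finset.sum_const, Finset.card_univ,
        Fintype.card_fin, smul_eq_mul, mul_one]
    rw [h1, ← hd, hsum]
    ring
  have heq : ∀ i, nn i = 2 * dd i + 3 := by
    intro i
    have h := (Finset.sum_eq_sum_iff_of_le (fun j _ => hub j)).mp hsum' i (Finset.mem_univ i)
    exact h
  intro i
  refine ⟨heq i, ?_⟩
  ext F
  simp only [Finset.mem_filter, Finset.mem_powerset]
  constructor
  · intro hF
    exact ⟨hvert i F hF, hdim i F hF⟩
  · rintro ⟨hFsub, hFcard⟩
    have hGsub : Finset.Icc 1 (nn i) \ F ⊆ Finset.Icc 1 (nn i) := Finset.sdiff_subset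
    have hGcard : (Finset.Icc 1 (nn i) \ F).card = nn i - F.card := by
      rw [Finset.card_sdiff_of_subset hFsub, Nat.card_Icc]
      omega
    have hGnot : Finset.Icc 1 (nn i) \ F ∉ K i := by
      intro hmem
      have := hdim i _ hmem
      rw [hGcard] at this
      have := heq i
      omega
    have := (hnice i _ hGsub)
    rw [Finset.sdiff_sdiff_self_left, Finset.inter_eq_right.mpr hFsub] at this
    by_contra hFK
    exact hGnot (this.mpr (by simpa using hFK)) |>.elim
end

section
/- Let k ≥ 2 and let 𝓕 be a finite family of k-uniform hypergraphs, and let n_0 ≥ k and m_0 > 1 be integers with n_0 < k·m_0 such that every F ∈ 𝓕 has at most n_0 vertices and at least m_0 edges. Then there exist a constant C > 0 (depending only on k and 𝓕) and N ∈ ℕ such that for every n ≥ N there exists an 𝓕-free k-graph on n vertices with at least C·n^{k − (n_0 − k)/(m_0 − 1)} edges; in particular ex(n,𝓕) = Ω(n^{k − (n_0−k)/(m_0−1)}). -/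
/-- A k-uniform hypergraph: a finite vertex set (of natural numbers) together
with a collection of k-element subsets of it, the edges. -/
structure HyperGraph (k : ℕ) where
  verts : Finset ℕ
  edges : Finset (Finset ℕ)
  edges_sub : ∀ e ∈ edges, e ⊆ verts
  uniform : ∀ e ∈ edges, e.card = k

/-- `H` contains a copy of `F`: an injective map of the vertex set of `F` into
that of `H` sending every edge of `F` to an edge of `H`. -/
def ContainsCopy {k : ℕ} (H F : HyperGraph k) : Prop :=
  ∃ φ : ℕ → ℕ, Set.InjOn φ F.verts ∧ (∀ v ∈ F.verts, φ v ∈ H.verts) ∧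
    ∀ e ∈ F.edges, e.image φ ∈ H.edges

/-- `H` is 𝓕-free: it contains no copy of any member of 𝓕. -/
def FreeOf {k : ℕ} (F : Set (HyperGraph k)) (H : HyperGraph k) : Prop :=
  ∀ G ∈ F, ¬ ContainsCopy H G

/-- ex(n, 𝓕): the maximum number of edges of an 𝓕-free k-graph on n vertices. -/
noncomputable def exNum (k n : ℕ) (F : Set (HyperGraph k)) : ℕ :=
  sSup {m : ℕ | ∃ H : HyperGraph k, H.verts.card = n ∧ FreeOf F H ∧ H.edges.card = m}

open Finset

lemma choose_add_le' (d a b : ℕ) : Nat.choose a b ≤ Nat.choose (a + d) (b + d) := by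
  induction d with
  | zero => simp
  | succ d ih =>
    have h : Nat.choose (a + d) (b + d) ≤ Nat.choose (a + d + 1) (b + d + 1) := by
      rw [Nat.choose_succ_succ]; exact Nat.le_add_right _ _
    have e1 : a + (d+1) = a + d + 1 := rfl
    have e2 : b + (d+1) = b + d + 1 := rfl
    rw [e1, e2]
    exact ih.trans h

lemma key_ineq' (NN mm : ℕ) (hmN : mm ≤ NN) :
    ∀ t a b, a + t = NN → b + t = mm →
      Nat.choose a b * NN ^ t ≤ Nat.choose NN mm * mm ^ t := by
  intro t
  induction t with
  | zero =>
    intro a b ha hb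
    subst ha; subst hb; simp
  | succ t ih =>
    intro a b ha hb
    have hIH := ih (a+1) (b+1) (by omega) (by omega)
    have hid : (a+1) * Nat.choose a b = Nat.choose (a+1) (b+1) * (b+1) :=
      Nat.add_one_mul_choose_eq a b
    have hba : b ≤ a := by omega
    have hkey : (b+1) * NN ≤ mm * (a+1) := by nlinarith
    have h2 : (a+1) * (Nat.choose a b * NN ^ (t+1)) ≤ (a+1) * (Nat.choose NN mm * mm ^ (t+1)) := by
      calc (a+1) * (Nat.choose a b * NN ^ (t+1))
          = ((a+1) * Nat.choose a b) * (NN ^ t * NN) := by ring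
        _ = (Nat.choose (a+1) (b+1) * NN ^ t) * ((b+1) * NN) := by rw [hid]; ring
        _ ≤ (Nat.choose NN mm * mm ^ t) * (mm * (a+1)) := Nat.mul_le_mul hIH hkey
        _ = (a+1) * (Nat.choose NN mm * mm ^ (t+1)) := by ring
    exact Nat.le_of_mul_le_mul_left h2 (by omega)

lemma card_supersets' {T E : Finset (Finset ℕ)} {m : ℕ} (hTE : T ⊆ E) :
    ((E.powersetCard m).filter (fun S => T ⊆ S)).card ≤ (E.card - T.card).choose (m - T.card) := by
  classical
  have h := Finset.card_le_card_of_injOn (s := (E.powersetCard m).filter (fun S => T ⊆ S))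
      (t := (E \ T).powersetCard (m - T.card)) (fun S => S \ T) ?_ ?_
  · rwa [Finset.card_powersetCard, Finset.card_sdiff_of_subset hTE] at h
  · intro S hS
    simp only [Finset.coe_filter, Set.mem_setOf_eq, Finset.mem_filter, Finset.mem_powersetCard] at hS
    obtain ⟨⟨hSE, hSm⟩, hTS⟩ := hS
    refine Finset.mem_powersetCard.mpr ⟨Finset.sdiff_subset_sdiff hSE (le_refl T), ?_⟩
    rw [Finset.card_sdiff_of_subset hTS, hSm]
  · intro S1 h1 S2 h2 he
    simp only [Finset.coe_filter, Set.mem_setOf_eq, Finset.mem_powersetCard] at h1 h2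
    have e1 : S1 \ T ∪ T = S1 := Finset.sdiff_union_of_subset h1.2
    have e2 : S2 \ T ∪ T = S2 := Finset.sdiff_union_of_subset h2.2
    have he2 : S1 \ T = S2 \ T := he
    rw [← e1, ← e2, he2]

lemma image_edges_injOn' {k : ℕ} {φ : ℕ → ℕ} {G : HyperGraph k}
    (h : Set.InjOn φ G.verts) :
    Set.InjOn (fun e => Finset.image φ e) (G.edges : Set (Finset ℕ)) := by
  intro e1 h1 e2 h2 he'
  have he : Finset.image φ e1 = Finset.image φ e2 := he'
  have hs1 : e1 ⊆ G.verts := G.edges_sub e1 h1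
  have hs2 : e2 ⊆ G.verts := G.edges_sub e2 h2
  ext x
  constructor
  · intro hx
    have : φ x ∈ Finset.image φ e2 := by rw [← he]; exact Finset.mem_image_of_mem φ hx
    obtain ⟨y, hy, hyx⟩ := Finset.mem_image.mp this
    have := h (hs2 hy) (hs1 hx) hyx
    rwa [← this]
  · intro hx
    have : φ x ∈ Finset.image φ e1 := by rw [he]; exact Finset.mem_image_of_mem φ hx
    obtain ⟨y, hy, hyx⟩ := Finset.mem_image.mp this
    have := h (hs1 hy) (hs2 hx) hyx
    rwa [← this]

/-- Extend a tuple `f : Fin n0 → ℕ` to a map `ℕ → ℕ` on the vertex set of `G`. -/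
def phiF {k : ℕ} (n0 : ℕ) (hn0 : 0 < n0) (G : HyperGraph k) (f : Fin n0 → ℕ) : ℕ → ℕ :=
  fun x => if x ∈ G.verts then
    f ⟨(G.verts.sort (· ≤ ·)).idxOf x % n0, Nat.mod_lt _ hn0⟩ else 0

lemma exists_tuple' {k : ℕ} (n0 n : ℕ) (hn0 : 0 < n0) (hn : 0 < n) (G : HyperGraph k)
    (hcard : G.verts.card ≤ n0) (φ : ℕ → ℕ) (hφ : ∀ v ∈ G.verts, φ v ∈ Finset.range n) :
    ∃ f ∈ Fintype.piFinset (fun _ : Fin n0 => Finset.range n),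
      ∀ x ∈ G.verts, phiF n0 hn0 G f x = φ x := by
  classical
  set l := G.verts.sort (· ≤ ·) with hl
  refine ⟨fun i => if h : (i : ℕ) < l.length then φ (l.get ⟨i, h⟩) else 0, ?_, ?_⟩
  · rw [Fintype.mem_piFinset]
    intro i
    by_cases h : (i : ℕ) < l.length
    · rw [dif_pos h]
      exact hφ _ ((Finset.mem_sort _).mp (l.get_mem _))
    · rw [dif_neg h]
      exact Finset.mem_range.mpr hn
  · intro x hx
    have hmem : x ∈ l := (Finset.mem_sort _).mpr hx
    have hidx : l.idxOf x < l.length := List.idxOf_lt_length_iff.mpr hmem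
    have hlen : l.length = G.verts.card := Finset.length_sort _
    have hlt : l.idxOf x < n0 := by omega
    have hmod : l.idxOf x % n0 = l.idxOf x := Nat.mod_eq_of_lt hlt
    rw [phiF, if_pos hx]
    simp only [← hl, hmod, hidx, dif_pos]
    congr 1
    exact List.idxOf_get hidx

/-- A choice of an edge of a hypergraph. -/
noncomputable def hgEdge {k : ℕ} (G : HyperGraph k) : Finset ℕ :=
  if h : G.edges.Nonempty then h.choose else ∅

lemma hgEdge_mem {k : ℕ} (G : HyperGraph k) (h : G.edges.Nonempty) : hgEdge G ∈ G.edges := by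
  rw [hgEdge, dif_pos h]; exact h.choose_spec

open Classical in
/-- Tuples encoding potential copies of `G` with image edge set inside `S`. -/
noncomputable def copyTuples {k : ℕ} (n0 n : ℕ) (hn0 : 0 < n0) (G : HyperGraph k)
    (S : Finset (Finset ℕ)) : Finset (Fin n0 → ℕ) :=
  (Fintype.piFinset (fun _ : Fin n0 => Finset.range n)).filter
    (fun f => Set.InjOn (phiF n0 hn0 G f) G.verts ∧
      ∀ e ∈ G.edges, e.image (phiF n0 hn0 G f) ∈ S)

lemma copyTuples_subset {k : ℕ} {n0 n : ℕ} {hn0 : 0 < n0} {G : HyperGraph k}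
    {S : Finset (Finset ℕ)} :
    copyTuples n0 n hn0 G S ⊆ Fintype.piFinset (fun _ : Fin n0 => Finset.range n) := by
  unfold copyTuples
  exact Finset.filter_subset _ _

lemma mem_copyTuples {k : ℕ} {n0 n : ℕ} {hn0 : 0 < n0} {G : HyperGraph k}
    {S : Finset (Finset ℕ)} {f : Fin n0 → ℕ} :
    f ∈ copyTuples n0 n hn0 G S ↔
      f ∈ Fintype.piFinset (fun _ : Fin n0 => Finset.range n) ∧
      Set.InjOn (phiF n0 hn0 G f) G.verts ∧
      ∀ e ∈ G.edges, e.image (phiF n0 hn0 G f) ∈ S := by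
  unfold copyTuples
  rw [Finset.mem_filter]

set_option maxHeartbeats 2000000 in
/-- Probabilistic lower bound for Turán numbers: if every member of the finite
family 𝓕 of k-graphs has at most n₀ vertices and at least m₀ > 1 edges, with
k ≤ n₀ < k·m₀, then for some C > 0 and all large n there is an 𝓕-free k-graph
on n vertices with at least C·n^{k − (n₀−k)/(m₀−1)} edges; in particular
ex(n,𝓕) ≥ C·n^{k − (n₀−k)/(m₀−1)}. -/
theorem stmt_17 (k : ℕ) (hk : 2 ≤ k) (F : Set (HyperGraph k)) (hfin : F.Finite)
    (n0 m0 : ℕ) (hn0 : k ≤ n0) (hm0 : 1 < m0) (hkm : n0 < k * m0)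
    (hbound : ∀ G ∈ F, G.verts.card ≤ n0 ∧ m0 ≤ G.edges.card) :
    ∃ C : ℝ, 0 < C ∧ ∃ N : ℕ, ∀ n : ℕ, N ≤ n →
      (∃ H : HyperGraph k, H.verts.card = n ∧ FreeOf F H ∧
        C * (n : ℝ) ^ ((k : ℝ) - ((n0 : ℝ) - k) / ((m0 : ℝ) - 1)) ≤ (H.edges.card : ℝ)) ∧
      C * (n : ℝ) ^ ((k : ℝ) - ((n0 : ℝ) - k) / ((m0 : ℝ) - 1)) ≤ (exNum k n F : ℝ) := by
  classical
  have hn0pos : 0 < n0 := by omega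
  set Fs : Finset (HyperGraph k) := hfin.toFinset with hFsdef
  have hFs : ∀ G : HyperGraph k, G ∈ Fs ↔ G ∈ F := fun G => hfin.mem_toFinset
  set cF : ℕ := Fs.card with hcFdef
  set α : ℝ := (k:ℝ) - ((n0:ℝ) - k)/((m0:ℝ) - 1) with hαdef
  have hm0R : (2:ℝ) ≤ (m0:ℝ) := by exact_mod_cast hm0
  have hkR : (2:ℝ) ≤ (k:ℝ) := by exact_mod_cast hk
  have hn0R : (k:ℝ) ≤ (n0:ℝ) := by exact_mod_cast hn0
  have hm1 : (0:ℝ) < (m0:ℝ) - 1 := by linarith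
  have hαpos : 0 < α := by
    have hkmR : (n0:ℝ) < k * m0 := by exact_mod_cast hkm
    have h1 : ((n0:ℝ) - k) / ((m0:ℝ)-1) < k := by
      rw [div_lt_iff₀ hm1]
      nlinarith
    simp only [hαdef]; linarith
  have hαk : α ≤ (k:ℝ) := by
    have h0 : 0 ≤ ((n0:ℝ) - k)/((m0:ℝ)-1) := div_nonneg (by linarith) (by linarith)
    simp only [hαdef]; linarith
  set Dk : ℝ := 2^k * (Nat.factorial k : ℝ) with hDkdef
  have hDk1 : (1:ℝ) ≤ Dk := by
    have h1 : (1:ℝ) ≤ 2^k := one_le_pow₀ (by norm_num)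
    have h2 : (1:ℝ) ≤ (Nat.factorial k : ℝ) := by
      exact_mod_cast Nat.one_le_iff_ne_zero.mpr (Nat.factorial_ne_zero k)
    nlinarith
  have hDkpos : 0 < Dk := by linarith
  set c : ℝ := 1 / (2^m0 * Dk^m0 * ((cF:ℝ)+1)) with hcdef
  have hden : (0:ℝ) < 2^m0 * Dk^m0 * ((cF:ℝ)+1) := by positivity
  have hcpos : 0 < c := by positivity
  have hc1 : c ≤ 1 := by
    rw [hcdef, div_le_one hden]
    have h1 : (1:ℝ) ≤ 2^m0 := one_le_pow₀ (by norm_num)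
    have h2 : (1:ℝ) ≤ Dk^m0 := one_le_pow₀ hDk1
    have h3 : (1:ℝ) ≤ (cF:ℝ)+1 := by have : (0:ℝ) ≤ (cF:ℝ) := Nat.cast_nonneg cF; linarith
    have h12 : (1:ℝ)*1 ≤ 2^m0 * Dk^m0 := mul_le_mul h1 h2 zero_le_one (by positivity)
    nlinarith
  refine ⟨c/2, by positivity, ?_⟩
  have htend : Filter.Tendsto (fun n : ℕ => c * (n:ℝ)^α) Filter.atTop Filter.atTop := by
    apply Filter.Tendsto.const_mul_atTop hcpos
    exact (tendsto_rpow_atTop hαpos).comp tendsto_natCast_atTop_atTop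
  have hev : ∀ᶠ n : ℕ in Filter.atTop,
      (max 1 (m0:ℝ)) ≤ c * (n:ℝ)^α ∧ 2*k ≤ n :=
    (htend.eventually_ge_atTop _).and (Filter.eventually_ge_atTop _)
  obtain ⟨N, hN⟩ := Filter.eventually_atTop.mp hev
  refine ⟨N, fun n hn => ?_⟩
  obtain ⟨hx1m0, hn2k⟩ := hN n hn
  have hnpos : 0 < n := by omega
  have hnposR : (0:ℝ) < (n:ℝ) := by exact_mod_cast hnpos
  have hn1R : (1:ℝ) ≤ (n:ℝ) := by exact_mod_cast hnpos
  set x : ℝ := c * (n:ℝ)^α with hxdef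
  have hx1 : 1 ≤ x := le_trans (le_max_left _ _) hx1m0
  have hxm0 : (m0:ℝ) ≤ x := le_trans (le_max_right _ _) hx1m0
  have hxpos : 0 < x := by linarith
  set m : ℕ := ⌈x⌉₊ with hmdef
  have hmx : x ≤ (m:ℝ) := Nat.le_ceil x
  have hm2x : (m:ℝ) ≤ 2*x := by
    have := Nat.ceil_lt_add_one hxpos.le (R := ℝ) (a := x)
    simp only [← hmdef] at this
    linarith
  have hm0m : m0 ≤ m := by exact_mod_cast le_trans hxm0 hmx
  set V : Finset ℕ := Finset.range n with hVdef
  set E : Finset (Finset ℕ) := V.powersetCard k with hEdef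
  set NN : ℕ := E.card with hNNdef
  have hNcard : NN = Nat.choose n k := by
    rw [hNNdef, hEdef, Finset.card_powersetCard, hVdef, Finset.card_range]
  -- lower bound on NN
  have hNlow : (n:ℝ)^(k:ℕ) / Dk ≤ (NN:ℝ) := by
    have h1 : ((n + 1 - k : ℕ) : ℝ)^k/(Nat.factorial k : ℝ) ≤ (Nat.choose n k : ℝ) :=
      Nat.pow_le_choose k n
    have hc1' : ((n + 1 - k : ℕ) : ℝ) = (n:ℝ) + 1 - k := by
      rw [Nat.cast_sub (by omega)]; push_cast; ring
    have h2kR : 2*(k:ℝ) ≤ (n:ℝ) := by exact_mod_cast hn2k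
    have h2 : (n:ℝ)/2 ≤ ((n + 1 - k : ℕ) : ℝ) := by rw [hc1']; linarith
    have h3 : ((n:ℝ)/2)^k ≤ ((n + 1 - k : ℕ) : ℝ)^k :=
      pow_le_pow_left₀ (by positivity) h2 k
    have hfpos : (0:ℝ) < (Nat.factorial k : ℝ) := by
      exact_mod_cast Nat.factorial_pos k
    rw [hNcard, hDkdef]
    calc (n:ℝ)^(k:ℕ) / (2^k * (Nat.factorial k : ℝ))
        = ((n:ℝ)/2)^k / (Nat.factorial k : ℝ) := by rw [div_pow]; ring
      _ ≤ ((n + 1 - k : ℕ) : ℝ)^k / (Nat.factorial k : ℝ) := by gcongr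
      _ ≤ (Nat.choose n k : ℝ) := h1
  -- m ≤ NN
  have h2m0 : (4:ℝ) ≤ 2^m0 := by
    calc (4:ℝ) = 2^2 := by norm_num
      _ ≤ 2^m0 := pow_le_pow_right₀ (by norm_num) (by omega)
  have hDkm0 : Dk ≤ Dk^m0 := le_self_pow₀ hDk1 (by omega)
  have hcF1 : (1:ℝ) ≤ (cF:ℝ)+1 := by
    have : (0:ℝ) ≤ (cF:ℝ) := Nat.cast_nonneg cF
    linarith
  have h2cDk : 2*c*Dk ≤ 1 := by
    rw [hcdef]
    have e : 2 * (1 / (2^m0 * Dk^m0 * ((cF:ℝ)+1))) * Dk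
        = (2*Dk) / (2^m0 * Dk^m0 * ((cF:ℝ)+1)) := by ring
    rw [e, div_le_one hden]
    calc 2*Dk ≤ 2^m0 * Dk^m0 :=
          mul_le_mul (by linarith) hDkm0 (by linarith) (by positivity)
      _ ≤ 2^m0 * Dk^m0 * ((cF:ℝ)+1) := le_mul_of_one_le_right (by positivity) hcF1
  have h2c : 2*c ≤ 1/Dk := by
    rw [le_div_iff₀ hDkpos]; exact h2cDk
  have hmN : m ≤ NN := by
    have hR : (m:ℝ) ≤ (NN:ℝ) := by
      have hnk : (n:ℝ)^α ≤ (n:ℝ)^(k:ℕ) := by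
        rw [← Real.rpow_natCast (n:ℝ) k]
        exact Real.rpow_le_rpow_of_exponent_le hn1R hαk
      have hrnn : (0:ℝ) ≤ (n:ℝ)^α := Real.rpow_nonneg hnposR.le α
      calc (m:ℝ) ≤ 2*x := hm2x
        _ = (2*c)*(n:ℝ)^α := by rw [hxdef]; ring
        _ ≤ (1/Dk) * (n:ℝ)^(k:ℕ) := mul_le_mul h2c hnk hrnn (by positivity)
        _ = (n:ℝ)^(k:ℕ)/Dk := by ring
        _ ≤ NN := hNlow
    exact_mod_cast hR
  have hm0NN : m0 ≤ NN := le_trans hm0m hmN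
  have hNNpos : 0 < NN := by omega
  -- tuples
  have hTupcard : (Fintype.piFinset (fun _ : Fin n0 => Finset.range n)).card = n^n0 := by
    rw [Fintype.card_piFinset]
    simp [Finset.card_range]
  set PP : Finset (Finset (Finset ℕ)) := E.powersetCard m with hPPdef
  have hPPcard : PP.card = Nat.choose NN m := by
    rw [hPPdef, Finset.card_powersetCard]
  have hPPne : PP.Nonempty := by
    obtain ⟨t, ht, htc⟩ := Finset.exists_subset_card_eq (s := E) hmN
    exact ⟨t, Finset.mem_powersetCard.mpr ⟨ht, htc⟩⟩
  -- per-tuple bound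
  have hper : ∀ G ∈ Fs, ∀ f : Fin n0 → ℕ,
      (PP.filter (fun S => f ∈ copyTuples n0 n hn0pos G S)).card
        ≤ Nat.choose (NN - m0) (m - m0) := by
    intro G hG f
    rcases Finset.eq_empty_or_nonempty
      (PP.filter (fun S => f ∈ copyTuples n0 n hn0pos G S)) with he | hne
    · rw [he]; simp
    · obtain ⟨S0, hS0⟩ := hne
      rw [Finset.mem_filter] at hS0
      obtain ⟨hS0PP, hfS0⟩ := hS0
      obtain ⟨hfTup, hinj, himg⟩ := mem_copyTuples.mp hfS0
      set T := G.edges.image (fun e => e.image (phiF n0 hn0pos G f)) with hTdef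
      have hTcard : T.card = G.edges.card :=
        Finset.card_image_of_injOn (image_edges_injOn' hinj)
      have hTS0 : T ⊆ S0 := by
        intro t ht
        obtain ⟨e, he, rfl⟩ := Finset.mem_image.mp ht
        exact himg e he
      obtain ⟨hS0E, hS0card⟩ := Finset.mem_powersetCard.mp hS0PP
      have hTE : T ⊆ E := hTS0.trans hS0E
      have hm0T : m0 ≤ T.card := by rw [hTcard]; exact (hbound G ((hFs G).mp hG)).2
      have hTm : T.card ≤ m := by rw [← hS0card]; exact Finset.card_le_card hTS0
      have hTNN : T.card ≤ NN := by rw [hNNdef]; exact Finset.card_le_card hTE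
      have hsub : PP.filter (fun S => f ∈ copyTuples n0 n hn0pos G S)
          ⊆ PP.filter (fun S => T ⊆ S) := by
        intro S hS
        rw [Finset.mem_filter] at hS ⊢
        refine ⟨hS.1, ?_⟩
        have h2 := (mem_copyTuples.mp hS.2).2.2
        intro t ht
        obtain ⟨e, he, rfl⟩ := Finset.mem_image.mp ht
        exact h2 e he
      calc (PP.filter (fun S => f ∈ copyTuples n0 n hn0pos G S)).card
          ≤ (PP.filter (fun S => T ⊆ S)).card := Finset.card_le_card hsub
        _ ≤ (NN - T.card).choose (m - T.card) := card_supersets' hTE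
        _ ≤ (NN - m0).choose (m - m0) := by
            have hca := choose_add_le' (T.card - m0) (NN - T.card) (m - T.card)
            rwa [show NN - T.card + (T.card - m0) = NN - m0 by omega,
              show m - T.card + (T.card - m0) = m - m0 by omega] at hca
  -- sum over S
  have hsumG : ∀ G ∈ Fs, ∑ S ∈ PP, (copyTuples n0 n hn0pos G S).card
      ≤ n^n0 * Nat.choose (NN-m0) (m-m0) := by
    intro G hG
    have h1 : ∀ S ∈ PP, (copyTuples n0 n hn0pos G S).card =
        ∑ f ∈ Fintype.piFinset (fun _ : Fin n0 => Finset.range n),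
          (if f ∈ copyTuples n0 n hn0pos G S then 1 else 0) := by
      intro S _
      rw [Finset.sum_ite_mem]
      rw [Finset.inter_eq_right.mpr copyTuples_subset]
      rw [Finset.sum_const, smul_eq_mul, mul_one]
    calc ∑ S ∈ PP, (copyTuples n0 n hn0pos G S).card
        = ∑ S ∈ PP, ∑ f ∈ Fintype.piFinset (fun _ : Fin n0 => Finset.range n),
            (if f ∈ copyTuples n0 n hn0pos G S then 1 else 0) :=
          Finset.sum_congr rfl h1
      _ = ∑ f ∈ Fintype.piFinset (fun _ : Fin n0 => Finset.range n),
            ∑ S ∈ PP, (if f ∈ copyTuples n0 n hn0pos G S then 1 else 0) :=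
          Finset.sum_comm
      _ = ∑ f ∈ Fintype.piFinset (fun _ : Fin n0 => Finset.range n),
            (PP.filter (fun S => f ∈ copyTuples n0 n hn0pos G S)).card := by
          refine Finset.sum_congr rfl (fun f _ => ?_)
          rw [Finset.card_filter]
      _ ≤ ∑ _f ∈ Fintype.piFinset (fun _ : Fin n0 => Finset.range n),
            Nat.choose (NN-m0) (m-m0) :=
          Finset.sum_le_sum (fun f _ => hper G hG f)
      _ = n^n0 * Nat.choose (NN-m0) (m-m0) := by
          rw [Finset.sum_const, smul_eq_mul, hTupcard]
  have hsum : ∑ S ∈ PP, (∑ G ∈ Fs, (copyTuples n0 n hn0pos G S).card)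
      ≤ cF * (n^n0 * Nat.choose (NN-m0) (m-m0)) := by
    rw [Finset.sum_comm]
    calc ∑ G ∈ Fs, ∑ S ∈ PP, (copyTuples n0 n hn0pos G S).card
        ≤ ∑ _G ∈ Fs, n^n0 * Nat.choose (NN-m0) (m-m0) := Finset.sum_le_sum hsumG
      _ = cF * (n^n0 * Nat.choose (NN-m0) (m-m0)) := by
          rw [Finset.sum_const, smul_eq_mul, hcFdef]
  -- numeric core
  have hnum : 2 * (cF:ℝ) * (n:ℝ)^(n0:ℕ) * (m:ℝ)^(m0-1) ≤ (NN:ℝ)^m0 := by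
    have hRpos : (0:ℝ) < (n:ℝ)^(k*m0 : ℕ) := pow_pos hnposR _
    have hr1 : ((n:ℝ)^α)^(m0-1 : ℕ) = (n:ℝ) ^ (α*((m0:ℝ)-1)) := by
      rw [← Real.rpow_natCast ((n:ℝ)^α) (m0-1), ← Real.rpow_mul hnposR.le]
      congr 1
      rw [Nat.cast_sub hm0.le, Nat.cast_one]
    have hr2 : (n:ℝ)^(n0:ℕ) * (n:ℝ)^(α*((m0:ℝ)-1)) = (n:ℝ)^(k*m0 : ℕ) := by
      rw [← Real.rpow_natCast (n:ℝ) n0, ← Real.rpow_natCast (n:ℝ) (k*m0),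
        ← Real.rpow_add hnposR]
      congr 1
      rw [hαdef]
      push_cast
      field_simp
      ring
    have hcc : c^(m0-1:ℕ) ≤ c := pow_le_of_le_one hcpos.le hc1 (by omega)
    have hch1 : (m:ℝ)^(m0-1:ℕ) ≤ (2*x)^(m0-1:ℕ) :=
      pow_le_pow_left₀ (Nat.cast_nonneg m) hm2x _
    have hch2 : ((2:ℝ)*x)^(m0-1:ℕ) = 2^(m0-1:ℕ) * (c^(m0-1:ℕ) * ((n:ℝ)^α)^(m0-1:ℕ)) := by
      rw [hxdef, mul_pow, mul_pow]
    have h2two : (2:ℝ)*2^(m0-1:ℕ) = 2^m0 := by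
      rw [← pow_succ']
      congr 1
      omega
    have h7 : 2^m0*(cF:ℝ)*c*Dk^m0 ≤ 1 := by
      rw [hcdef]
      have hDkm0' : (0:ℝ) < Dk^m0 := by positivity
      have h2m0' : (0:ℝ) < 2^m0 := by positivity
      have e : 2^m0*(cF:ℝ)*(1 / (2^m0 * Dk^m0 * ((cF:ℝ)+1)))*Dk^m0
          = (2^m0*(cF:ℝ)*Dk^m0) / (2^m0 * Dk^m0 * ((cF:ℝ)+1)) := by ring
      rw [e, div_le_one hden]
      have e2 : 2^m0*(cF:ℝ)*Dk^m0 = (2^m0*Dk^m0) * (cF:ℝ) := by ring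
      have e3 : 2^m0 * Dk^m0 * ((cF:ℝ)+1) = (2^m0*Dk^m0) * ((cF:ℝ)+1) := by ring
      rw [e2, e3]
      exact mul_le_mul_of_nonneg_left (by linarith) (by positivity)
    have h8 : 2^m0*(cF:ℝ)*c*(n:ℝ)^(k*m0 : ℕ) ≤ (n:ℝ)^(k*m0 : ℕ)/Dk^m0 := by
      rw [le_div_iff₀ (pow_pos hDkpos m0)]
      calc 2^m0*(cF:ℝ)*c*(n:ℝ)^(k*m0 : ℕ)*Dk^m0
          = (2^m0*(cF:ℝ)*c*Dk^m0)*(n:ℝ)^(k*m0 : ℕ) := by ring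
        _ ≤ 1*(n:ℝ)^(k*m0 : ℕ) := mul_le_mul_of_nonneg_right h7 hRpos.le
        _ = (n:ℝ)^(k*m0 : ℕ) := one_mul _
    have h9 : (n:ℝ)^(k*m0 : ℕ)/Dk^m0 ≤ (NN:ℝ)^m0 := by
      have h5 : ((n:ℝ)^(k:ℕ)/Dk)^m0 ≤ (NN:ℝ)^m0 :=
        pow_le_pow_left₀ (div_nonneg (pow_nonneg hnposR.le _) hDkpos.le) hNlow m0
      have h6 : ((n:ℝ)^(k:ℕ)/Dk)^m0 = (n:ℝ)^(k*m0 : ℕ)/Dk^m0 := by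
        rw [div_pow, ← pow_mul]
      linarith [h5, h6.symm.le]
    calc 2 * (cF:ℝ) * (n:ℝ)^(n0:ℕ) * (m:ℝ)^(m0-1)
        ≤ 2 * (cF:ℝ) * (n:ℝ)^(n0:ℕ) * (2*x)^(m0-1) := by
          apply mul_le_mul_of_nonneg_left hch1 (by positivity)
      _ = (2 * 2^(m0-1:ℕ)) * (cF:ℝ) * c^(m0-1:ℕ) *
            ((n:ℝ)^(n0:ℕ) * (n:ℝ)^(α*((m0:ℝ)-1))) := by
          rw [hch2, hr1]; ring
      _ = 2^m0 * (cF:ℝ) * c^(m0-1:ℕ) * (n:ℝ)^(k*m0 : ℕ) := by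
          rw [hr2, h2two]
      _ ≤ 2^m0 * (cF:ℝ) * c * (n:ℝ)^(k*m0 : ℕ) := by
          have hb : (0:ℝ) ≤ 2^m0 * (cF:ℝ) := by positivity
          calc 2^m0 * (cF:ℝ) * c^(m0-1:ℕ) * (n:ℝ)^(k*m0 : ℕ)
              = (2^m0 * (cF:ℝ)) * c^(m0-1:ℕ) * (n:ℝ)^(k*m0 : ℕ) := by ring
            _ ≤ (2^m0 * (cF:ℝ)) * c * (n:ℝ)^(k*m0 : ℕ) :=
                mul_le_mul_of_nonneg_right (mul_le_mul_of_nonneg_left hcc hb) hRpos.le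
            _ = 2^m0 * (cF:ℝ) * c * (n:ℝ)^(k*m0 : ℕ) := by ring
      _ ≤ (n:ℝ)^(k*m0 : ℕ)/Dk^m0 := h8
      _ ≤ (NN:ℝ)^m0 := h9
  have hcore : (cF:ℝ) * ((n:ℝ)^(n0:ℕ) * (Nat.choose (NN-m0) (m-m0):ℝ))
      ≤ (Nat.choose NN m : ℝ) * ((m:ℝ)/2) := by
    have hKI : (Nat.choose (NN-m0) (m-m0) : ℝ) * (NN:ℝ)^m0
        ≤ (Nat.choose NN m : ℝ) * (m:ℝ)^m0 := by
      exact_mod_cast key_ineq' NN m hmN m0 (NN-m0) (m-m0) (by omega) (by omega)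
    have hmsplit : (m:ℝ)^m0 = (m:ℝ)^(m0-1:ℕ) * m := by
      rw [← pow_succ]
      congr 1
      omega
    have hNNR : (0:ℝ) < (NN:ℝ) := by exact_mod_cast hNNpos
    have hNNpow : (0:ℝ) < (NN:ℝ)^m0 := pow_pos hNNR m0
    have hfin2 : (cF:ℝ) * ((n:ℝ)^(n0:ℕ) * (Nat.choose (NN-m0) (m-m0):ℝ)) * (NN:ℝ)^m0
        ≤ (Nat.choose NN m : ℝ) * ((m:ℝ)/2) * (NN:ℝ)^m0 := by
      calc (cF:ℝ) * ((n:ℝ)^(n0:ℕ) * (Nat.choose (NN-m0) (m-m0):ℝ)) * (NN:ℝ)^m0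
          = ((cF:ℝ)*(n:ℝ)^(n0:ℕ)) * ((Nat.choose (NN-m0) (m-m0):ℝ) * (NN:ℝ)^m0) := by
            ring
        _ ≤ ((cF:ℝ)*(n:ℝ)^(n0:ℕ)) * ((Nat.choose NN m : ℝ) * (m:ℝ)^m0) :=
            mul_le_mul_of_nonneg_left hKI
              (mul_nonneg (Nat.cast_nonneg _) (pow_nonneg (Nat.cast_nonneg _) _))
        _ = ((Nat.choose NN m:ℝ) * ((m:ℝ)/2)) *
              (2*(cF:ℝ)*(n:ℝ)^(n0:ℕ)*(m:ℝ)^(m0-1:ℕ)) := by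
            rw [hmsplit]; ring
        _ ≤ ((Nat.choose NN m:ℝ) * ((m:ℝ)/2)) * (NN:ℝ)^m0 :=
            mul_le_mul_of_nonneg_left hnum
              (mul_nonneg (Nat.cast_nonneg _)
                (div_nonneg (Nat.cast_nonneg _) (by norm_num)))
    exact le_of_mul_le_mul_right hfin2 hNNpow
  -- averaging
  have hcast : ∑ S ∈ PP, ((∑ G ∈ Fs, (copyTuples n0 n hn0pos G S).card : ℕ) : ℝ)
      ≤ ∑ _S ∈ PP, (m:ℝ)/2 := by
    have hleft : ∑ S ∈ PP, ((∑ G ∈ Fs, (copyTuples n0 n hn0pos G S).card : ℕ) : ℝ)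
        = ((∑ S ∈ PP, ∑ G ∈ Fs, (copyTuples n0 n hn0pos G S).card : ℕ) : ℝ) := by
      push_cast; rfl
    rw [hleft, Finset.sum_const, nsmul_eq_mul, hPPcard]
    calc ((∑ S ∈ PP, ∑ G ∈ Fs, (copyTuples n0 n hn0pos G S).card : ℕ) : ℝ)
        ≤ ((cF * (n^n0 * Nat.choose (NN-m0) (m-m0)) : ℕ) : ℝ) := Nat.cast_le.mpr hsum
      _ = (cF:ℝ) * ((n:ℝ)^(n0:ℕ) * (Nat.choose (NN-m0) (m-m0):ℝ)) := by push_cast; ring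
      _ ≤ (Nat.choose NN m : ℝ) * ((m:ℝ)/2) := hcore
  obtain ⟨S, hSPP, hSavg⟩ := Finset.exists_le_of_sum_le hPPne hcast
  obtain ⟨hSE, hScard⟩ := Finset.mem_powersetCard.mp hSPP
  -- deletion
  set D : Finset (Finset ℕ) := Fs.biUnion
    (fun G => (copyTuples n0 n hn0pos G S).image
      (fun f => (hgEdge G).image (phiF n0 hn0pos G f))) with hDdef
  have hDcard : (D.card : ℝ) ≤ ((∑ G ∈ Fs, (copyTuples n0 n hn0pos G S).card : ℕ):ℝ) := by
    have h1 : D.card ≤ ∑ G ∈ Fs, ((copyTuples n0 n hn0pos G S).image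
        (fun f => (hgEdge G).image (phiF n0 hn0pos G f))).card := Finset.card_biUnion_le
    have h2 : ∑ G ∈ Fs, ((copyTuples n0 n hn0pos G S).image
        (fun f => (hgEdge G).image (phiF n0 hn0pos G f))).card
        ≤ ∑ G ∈ Fs, (copyTuples n0 n hn0pos G S).card :=
      Finset.sum_le_sum (fun G _ => Finset.card_image_le)
    exact_mod_cast le_trans h1 h2
  have hS'sub : ∀ e ∈ S \ D, e ⊆ V ∧ e.card = k := by
    intro e he
    have : e ∈ E := hSE (Finset.mem_sdiff.mp he).1
    exact Finset.mem_powersetCard.mp this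
  set H : HyperGraph k :=
    ⟨V, S \ D, fun e he => (hS'sub e he).1, fun e he => (hS'sub e he).2⟩ with hHdef
  have hHverts : H.verts.card = n := Finset.card_range n
  have hfree : FreeOf F H := by
    rintro G hGF ⟨φ, hinj, hmap, hedges⟩
    have hGFs : G ∈ Fs := (hFs G).mpr hGF
    have hGne : G.edges.Nonempty :=
      Finset.card_pos.mp (lt_of_lt_of_le (by omega) (hbound G hGF).2)
    have hmap' : ∀ v ∈ G.verts, φ v ∈ Finset.range n := hmap
    obtain ⟨f, hfTup, hagree⟩ := exists_tuple' n0 n hn0pos hnpos G (hbound G hGF).1 φ hmap'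
    have hψinj : Set.InjOn (phiF n0 hn0pos G f) G.verts := by
      intro a ha b hb hab
      apply hinj ha hb
      rw [← hagree a ha, ← hagree b hb]
      exact hab
    have himg : ∀ e ∈ G.edges, e.image (phiF n0 hn0pos G f) = e.image φ := by
      intro e he
      apply Finset.image_congr
      intro y hy
      exact hagree y (G.edges_sub e he hy)
    have hedges' : ∀ e ∈ G.edges, e.image φ ∈ S \ D := hedges
    have hfCT : f ∈ copyTuples n0 n hn0pos G S := by
      refine mem_copyTuples.mpr ⟨hfTup, hψinj, fun e he => ?_⟩
      rw [himg e he]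
      exact (Finset.mem_sdiff.mp (hedges' e he)).1
    have hd : (hgEdge G).image (phiF n0 hn0pos G f) ∈ D := by
      rw [hDdef]
      exact Finset.mem_biUnion.mpr ⟨G, hGFs, Finset.mem_image_of_mem _ hfCT⟩
    have hd' : (hgEdge G).image φ ∈ S \ D := hedges' _ (hgEdge_mem G hGne)
    rw [← himg _ (hgEdge_mem G hGne)] at hd'
    exact (Finset.mem_sdiff.mp hd').2 hd
  have hcount : (c/2) * (n:ℝ)^α ≤ (H.edges.card : ℝ) := by
    have hsplit : S ⊆ (S \ D) ∪ D := by
      intro a ha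
      rw [Finset.mem_union, Finset.mem_sdiff]
      by_cases h : a ∈ D
      · exact Or.inr h
      · exact Or.inl ⟨ha, h⟩
    have h1 : m ≤ (S \ D).card + D.card := by
      rw [← hScard]
      exact le_trans (Finset.card_le_card hsplit) (Finset.card_union_le _ _)
    have h1R : (m:ℝ) ≤ ((S \ D).card:ℝ) + (D.card:ℝ) := by exact_mod_cast h1
    have h2 : (D.card:ℝ) ≤ (m:ℝ)/2 := le_trans hDcard hSavg
    have h3 : x/2 ≤ ((S \ D).card:ℝ) := by linarith
    have hHe : (H.edges.card : ℝ) = ((S \ D).card : ℝ) := rfl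
    rw [hHe]
    calc (c/2)*(n:ℝ)^α = x/2 := by rw [hxdef]; ring
      _ ≤ ((S \ D).card:ℝ) := h3
  refine ⟨⟨H, hHverts, hfree, hcount⟩, ?_⟩
  have hbdd : BddAbove {m' : ℕ | ∃ H' : HyperGraph k,
      H'.verts.card = n ∧ FreeOf F H' ∧ H'.edges.card = m'} := by
    refine ⟨Nat.choose n k, fun m' hm' => ?_⟩
    obtain ⟨H', hv, _, he⟩ := hm'
    have hsub : H'.edges ⊆ H'.verts.powersetCard k := fun e heH =>
      Finset.mem_powersetCard.mpr ⟨H'.edges_sub e heH, H'.uniform e heH⟩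
    calc m' = H'.edges.card := he.symm
      _ ≤ (H'.verts.powersetCard k).card := Finset.card_le_card hsub
      _ = Nat.choose n k := by rw [Finset.card_powersetCard, hv]
  have hle : H.edges.card ≤ exNum k n F :=
    le_csSup hbdd ⟨H, hHverts, hfree, rfl⟩
  calc (c/2)*(n:ℝ)^α ≤ (H.edges.card : ℝ) := hcount
    _ ≤ (exNum k n F : ℝ) := by exact_mod_cast hle
end
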